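/- arXiv:2204.10119 — 2 statements merged into one kernel-verified Lean document; each statement's English description precedes it below -/
import Mathlib

section
/- For t ∈ {1,2,3,4}: if a finite simple graph G admits a bipartition (A,B) with |A| ≥ |B| > 0 such that every vertex in A has degree at least t−1, then G has a K_t minor. -/
open SimpleGraph Function

/-- `G` has a `K_t` minor: there are `t` nonempty, pairwise disjoint "branch sets",
each inducing a connected subgraph, with an edge of `G` between any two of them.
(This is the "`t`-cluster" formulation, equivalent to `K_t` being obtainable from a
subgraph of `G` by contracting edges.) -/
def HasCliqueMinor {V : Type*} (G : SimpleGraph V) (t : ℕ) : Prop :=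
  ∃ f : Fin t → Set V,
    (∀ i, (f i).Nonempty) ∧
    (∀ i, (G.induce (f i)).Connected) ∧
    (Pairwise fun i j => Disjoint (f i) (f j)) ∧
    ∀ i j, i ≠ j → ∃ u ∈ f i, ∃ v ∈ f j, G.Adj u v

/-- `(A, B)` is a bipartition of `G`: the parts partition the vertex set and
every edge joins `A` to `B`. -/
def IsBipartitionWith {V : Type*} (G : SimpleGraph V) (A B : Set V) : Prop :=
  (∀ v, v ∈ A ∨ v ∈ B) ∧ (∀ v, ¬(v ∈ A ∧ v ∈ B)) ∧
    ∀ ⦃u v⦄, G.Adj u v → (u ∈ A ↔ v ∈ B)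

/-- A candidate: a graph with a bipartition `(A,B)`, `|A| ≥ |B| > 0`, every vertex
of `A` of degree at least six, and no `K_6` minor. -/
def IsCandidate {V : Type*} (G : SimpleGraph V) (A B : Set V) : Prop :=
  IsBipartitionWith G A B ∧ B.ncard ≤ A.ncard ∧ B.Nonempty ∧
    (∀ a ∈ A, 6 ≤ (G.neighborSet a).ncard) ∧ ¬ HasCliqueMinor G 6

/-- A minimal candidate: a candidate minimizing `|V(G)| + |E(G)|` among all
(finite) candidates. -/
def IsMinimalCandidate {V : Type*} [Fintype V] (G : SimpleGraph V) (A B : Set V) : Prop :=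
  IsCandidate G A B ∧
    ∀ (n : ℕ) (G' : SimpleGraph (Fin n)) (A' B' : Set (Fin n)),
      IsCandidate G' A' B' →
        Fintype.card V + G.edgeSet.ncard ≤ n + G'.edgeSet.ncard

section Aux

variable {V : Type*} [DecidableEq V] (G : SimpleGraph V)

/-- adjacency between two finsets -/
def AdjS (s t : Finset V) : Prop := ∃ u ∈ s, ∃ v ∈ t, G.Adj u v

/-- adjacency of a finset to a vertex -/
def AdjV (s : Finset V) (b : V) : Prop := ∃ u ∈ s, G.Adj u b

/-- connectivity (within the set) of a finset -/
def Conn (s : Finset V) : Prop :=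
  s.Nonempty ∧ ∀ u ∈ s, ∀ v ∈ s, ∃ p : G.Walk u v, ∀ w ∈ p.support, w ∈ s

variable {G}

lemma AdjS.symm {s t : Finset V} (h : AdjS G s t) : AdjS G t s := by
  obtain ⟨u, hu, v, hv, h⟩ := h
  exact ⟨v, hv, u, hu, h.symm⟩

lemma adjS_singleton_right {s : Finset V} {b : V} : AdjS G s {b} ↔ AdjV G s b := by
  constructor
  · rintro ⟨u, hu, v, hv, h⟩
    simp only [Finset.mem_singleton] at hv
    exact ⟨u, hu, hv ▸ h⟩
  · rintro ⟨u, hu, h⟩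
    exact ⟨u, hu, b, Finset.mem_singleton_self b, h⟩

lemma conn_singleton (v : V) : Conn G ({v} : Finset V) := by
  refine ⟨⟨v, Finset.mem_singleton_self v⟩, ?_⟩
  intro u hu w hw
  simp only [Finset.mem_singleton] at hu hw
  subst hu; subst hw
  exact ⟨SimpleGraph.Walk.nil, by simp⟩

lemma conn_union {s t : Finset V} (hs : Conn G s) (ht : Conn G t) (h : AdjS G s t) :
    Conn G (s ∪ t) := by
  classical
  obtain ⟨a, ha, b, hb, hab⟩ := h
  -- every vertex of s ∪ t has a walk to a within s ∪ t
  have key : ∀ u ∈ s ∪ t, ∃ p : G.Walk u a, ∀ w ∈ p.support, w ∈ s ∪ t := by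
    intro u hu
    rcases Finset.mem_union.1 hu with hu | hu
    · obtain ⟨p, hp⟩ := hs.2 u hu a ha
      exact ⟨p, fun w hw => Finset.mem_union_left _ (hp w hw)⟩
    · obtain ⟨p, hp⟩ := ht.2 u hu b hb
      refine ⟨p.append (SimpleGraph.Walk.cons hab.symm SimpleGraph.Walk.nil), ?_⟩
      intro w hw
      rw [SimpleGraph.Walk.mem_support_append_iff] at hw
      rcases hw with hw | hw
      · exact Finset.mem_union_right _ (hp w hw)
      · simp only [SimpleGraph.Walk.support_cons, SimpleGraph.Walk.support_nil,
          List.mem_cons, List.not_mem_nil, or_false] at hw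
        rcases hw with rfl | rfl
        · exact Finset.mem_union_right _ hb
        · exact Finset.mem_union_left _ ha
  refine ⟨⟨a, Finset.mem_union_left _ ha⟩, ?_⟩
  intro u hu v hv
  obtain ⟨p, hp⟩ := key u hu
  obtain ⟨q, hq⟩ := key v hv
  refine ⟨p.append q.reverse, ?_⟩
  intro w hw
  rw [SimpleGraph.Walk.mem_support_append_iff] at hw
  rcases hw with hw | hw
  · exact hp w hw
  · rw [SimpleGraph.Walk.support_reverse, List.mem_reverse] at hw
    exact hq w hw

/-- vertices in the support of a walk form a connected finset -/
lemma conn_support {u v : V} [DecidableEq V] (p : G.Walk u v) : Conn G p.support.toFinset := by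
  refine ⟨⟨u, by simp⟩, ?_⟩
  intro x hx y hy
  simp only [List.mem_toFinset] at hx hy
  refine ⟨(p.takeUntil x hx).reverse.append (p.takeUntil y hy), ?_⟩
  intro w hw
  rw [SimpleGraph.Walk.mem_support_append_iff] at hw
  simp only [List.mem_toFinset]
  rcases hw with hw | hw
  · rw [SimpleGraph.Walk.support_reverse, List.mem_reverse] at hw
    exact SimpleGraph.Walk.support_takeUntil_subset _ _ hw
  · exact SimpleGraph.Walk.support_takeUntil_subset _ _ hw

lemma reach_induce {S : Set V} :
    ∀ {u v : V} (p : G.Walk u v), (∀ w ∈ p.support, w ∈ S) →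
      ∀ (hu : u ∈ S) (hv : v ∈ S), (G.induce S).Reachable ⟨u, hu⟩ ⟨v, hv⟩ := by
  intro u v p
  induction p with
  | nil => intro _ hu hv; rfl
  | @cons u w v h q ih =>
    intro hp hu hv
    have hw : w ∈ S := hp w (by simp)
    have h1 : (G.induce S).Adj ⟨u, hu⟩ ⟨w, hw⟩ := h
    refine (h1.reachable).trans (ih ?_ hw hv)
    intro x hx
    exact hp x (by simp [hx])

lemma conn_induce {s : Finset V} (h : Conn G s) : (G.induce (↑s : Set V)).Connected := by
  obtain ⟨⟨x, hx⟩, hwalk⟩ := h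
  rw [SimpleGraph.connected_iff]
  refine ⟨?_, ⟨⟨x, hx⟩⟩⟩
  rintro ⟨u, hu⟩ ⟨v, hv⟩
  obtain ⟨p, hp⟩ := hwalk u hu v hv
  exact reach_induce p (fun w hw => hp w hw) hu hv

/-- build a `K₄` minor from four finsets -/
lemma minor4 (A0 A1 A2 A3 : Finset V)
    (h0 : Conn G A0) (h1 : Conn G A1) (h2 : Conn G A2) (h3 : Conn G A3)
    (d01 : Disjoint A0 A1) (d02 : Disjoint A0 A2) (d03 : Disjoint A0 A3)
    (d12 : Disjoint A1 A2) (d13 : Disjoint A1 A3) (d23 : Disjoint A2 A3)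
    (a01 : AdjS G A0 A1) (a02 : AdjS G A0 A2) (a03 : AdjS G A0 A3)
    (a12 : AdjS G A1 A2) (a13 : AdjS G A1 A3) (a23 : AdjS G A2 A3) :
    HasCliqueMinor G 4 := by
  have adjS_coe : ∀ {s t : Finset V}, AdjS G s t →
      ∃ u ∈ (↑s : Set V), ∃ v ∈ (↑t : Set V), G.Adj u v := by
    rintro s t ⟨u, hu, v, hv, h⟩; exact ⟨u, hu, v, hv, h⟩
  refine ⟨![(A0 : Set V), A1, A2, A3], ?_, ?_, ?_, ?_⟩
  · intro i
    fin_cases i <;> simp only [Fin.isValue, Matrix.cons_val_zero, Matrix.cons_val_one, Matrix.head_cons,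
      Matrix.cons_val_two, Matrix.tail_cons, Matrix.cons_val_three, Matrix.cons_val_fin_one,
      Fin.mk_zero, Fin.mk_one, Finset.disjoint_coe,
      show (⟨2, by norm_num⟩ : Fin 4) = 2 from rfl,
      show (⟨3, by norm_num⟩ : Fin 4) = 3 from rfl] <;>
      first
        | exact h0.1 | exact h1.1 | exact h2.1 | exact h3.1
  · intro i
    fin_cases i <;> simp only [Fin.isValue, Matrix.cons_val_zero, Matrix.cons_val_one, Matrix.head_cons,
      Matrix.cons_val_two, Matrix.tail_cons, Matrix.cons_val_three, Matrix.cons_val_fin_one,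
      Fin.mk_zero, Fin.mk_one, Finset.disjoint_coe,
      show (⟨2, by norm_num⟩ : Fin 4) = 2 from rfl,
      show (⟨3, by norm_num⟩ : Fin 4) = 3 from rfl] <;>
      first
        | exact conn_induce h0 | exact conn_induce h1
        | exact conn_induce h2 | exact conn_induce h3
  · intro i j hij
    fin_cases i <;> fin_cases j <;> simp only [Fin.isValue, Matrix.cons_val_zero, Matrix.cons_val_one, Matrix.head_cons,
      Matrix.cons_val_two, Matrix.tail_cons, Matrix.cons_val_three, Matrix.cons_val_fin_one,
      Fin.mk_zero, Fin.mk_one, Finset.disjoint_coe,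
      show (⟨2, by norm_num⟩ : Fin 4) = 2 from rfl,
      show (⟨3, by norm_num⟩ : Fin 4) = 3 from rfl] <;>
      first
        | exact absurd rfl hij
        | assumption
        | exact d01.symm | exact d02.symm | exact d03.symm
        | exact d12.symm | exact d13.symm | exact d23.symm
  · intro i j hij
    fin_cases i <;> fin_cases j <;> simp only [Fin.isValue, Matrix.cons_val_zero, Matrix.cons_val_one, Matrix.head_cons,
      Matrix.cons_val_two, Matrix.tail_cons, Matrix.cons_val_three, Matrix.cons_val_fin_one,
      Fin.mk_zero, Fin.mk_one, Finset.disjoint_coe,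
      show (⟨2, by norm_num⟩ : Fin 4) = 2 from rfl,
      show (⟨3, by norm_num⟩ : Fin 4) = 3 from rfl] <;>
      first
        | exact absurd rfl hij
        | exact adjS_coe a01 | exact adjS_coe a02 | exact adjS_coe a03
        | exact adjS_coe a12 | exact adjS_coe a13 | exact adjS_coe a23
        | exact adjS_coe a01.symm | exact adjS_coe a02.symm | exact adjS_coe a03.symm
        | exact adjS_coe a12.symm | exact adjS_coe a13.symm | exact adjS_coe a23.symm


lemma AdjS.mono_left {s t u : Finset V} (h : AdjS G s t) (hsu : s ⊆ u) : AdjS G u t := by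
  obtain ⟨a, ha, b, hb, hab⟩ := h
  exact ⟨a, hsu ha, b, hb, hab⟩

lemma adjS_union_right {s t u : Finset V} :
    AdjS G s (t ∪ u) ↔ AdjS G s t ∨ AdjS G s u := by
  constructor
  · rintro ⟨a, ha, b, hb, hab⟩
    rcases Finset.mem_union.1 hb with hb | hb
    · exact Or.inl ⟨a, ha, b, hb, hab⟩
    · exact Or.inr ⟨a, ha, b, hb, hab⟩
  · rintro (⟨a, ha, b, hb, hab⟩ | ⟨a, ha, b, hb, hab⟩)
    · exact ⟨a, ha, b, Finset.mem_union_left _ hb, hab⟩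
    · exact ⟨a, ha, b, Finset.mem_union_right _ hb, hab⟩

/-- a "good system": a family of nonempty, connected, pairwise disjoint finsets -/
structure GoodSys (G : SimpleGraph V) (𝒮 : Finset (Finset V)) : Prop where
  (ne : ∀ α ∈ 𝒮, α.Nonempty)
  (conn : ∀ α ∈ 𝒮, Conn G α)
  (disj : ∀ α ∈ 𝒮, ∀ β ∈ 𝒮, α ≠ β → Disjoint α β)

open scoped Classical in
/-- the number of members of `𝒮` adjacent to `α` (other than `α` itself) -/
noncomputable def degS (G : SimpleGraph V) (𝒮 : Finset (Finset V)) (α : Finset V) : ℕ :=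
  (𝒮.filter fun β => β ≠ α ∧ AdjS G β α).card

open scoped Classical in
lemma degS_le (G : SimpleGraph V) (𝒮 : Finset (Finset V)) (α : Finset V) :
    degS G 𝒮 α ≤ (𝒮.erase α).card := by
  apply Finset.card_le_card
  intro β hβ
  simp only [Finset.mem_filter] at hβ
  exact Finset.mem_erase.2 ⟨hβ.2.1, hβ.1⟩

open scoped Classical in
lemma full_of_degS_eq {G : SimpleGraph V} {𝒮 : Finset (Finset V)} {α : Finset V}
    (h : (𝒮.erase α).card ≤ degS G 𝒮 α) :
    ∀ β ∈ 𝒮, β ≠ α → AdjS G β α := by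
  have hsub : (𝒮.filter fun β => β ≠ α ∧ AdjS G β α) ⊆ 𝒮.erase α := by
    intro β hβ
    simp only [Finset.mem_filter] at hβ
    exact Finset.mem_erase.2 ⟨hβ.2.1, hβ.1⟩
  have := Finset.eq_of_subset_of_card_le hsub h
  intro β hβ hne
  have : β ∈ 𝒮.filter fun β => β ≠ α ∧ AdjS G β α := this ▸ Finset.mem_erase.2 ⟨hne, hβ⟩
  exact (Finset.mem_filter.1 this).2.2

open scoped Classical in
lemma exists_adj_of_degS_pos {G : SimpleGraph V} {𝒮 : Finset (Finset V)} {α : Finset V}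
    (h : 1 ≤ degS G 𝒮 α) : ∃ β ∈ 𝒮, β ≠ α ∧ AdjS G β α := by
  have : (𝒮.filter fun β => β ≠ α ∧ AdjS G β α).Nonempty := Finset.card_pos.1 h
  obtain ⟨β, hβ⟩ := this
  simp only [Finset.mem_filter] at hβ
  exact ⟨β, hβ.1, hβ.2⟩

section Merge

variable {𝒮 : Finset (Finset V)} {x y : Finset V}

lemma union_not_mem (good : GoodSys G 𝒮) (hx : x ∈ 𝒮) (hy : y ∈ 𝒮) (hxy : x ≠ y) :
    x ∪ y ∉ 𝒮 := by
  intro hmem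
  obtain ⟨v, hv⟩ := good.ne y hy
  have hne : x ∪ y ≠ x := by
    intro h
    have : v ∈ x := h ▸ Finset.mem_union_right _ hv
    exact (good.disj x hx y hy hxy).forall_ne_finset this hv rfl
  have := good.disj _ hmem x hx hne
  obtain ⟨u, hu⟩ := good.ne x hx
  exact this.forall_ne_finset (Finset.mem_union_left _ hu) hu rfl

lemma goodSys_merge (good : GoodSys G 𝒮) (hx : x ∈ 𝒮) (hy : y ∈ 𝒮) (hxy : x ≠ y)
    (hadj : AdjS G x y) : GoodSys G (insert (x ∪ y) ((𝒮.erase x).erase y)) := by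
  constructor
  · intro α hα
    rcases Finset.mem_insert.1 hα with rfl | hα
    · obtain ⟨u, hu⟩ := good.ne x hx
      exact ⟨u, Finset.mem_union_left _ hu⟩
    · exact good.ne α (Finset.mem_of_mem_erase (Finset.mem_of_mem_erase hα))
  · intro α hα
    rcases Finset.mem_insert.1 hα with rfl | hα
    · exact conn_union (good.conn x hx) (good.conn y hy) hadj
    · exact good.conn α (Finset.mem_of_mem_erase (Finset.mem_of_mem_erase hα))
  · intro α hα β hβ hne
    rcases Finset.mem_insert.1 hα with rfl | hα <;> rcases Finset.mem_insert.1 hβ with h' | hβ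
    · exact absurd h'.symm hne
    · have hβy := Finset.mem_erase.1 hβ
      have hβx := Finset.mem_erase.1 hβy.2
      rw [Finset.disjoint_union_left]
      have hβmem := hβx.2
      exact ⟨(good.disj β hβmem x hx hβx.1).symm, (good.disj β hβmem y hy hβy.1).symm⟩
    · subst h'
      have hαy := Finset.mem_erase.1 hα
      have hαx := Finset.mem_erase.1 hαy.2
      rw [Finset.disjoint_union_right]
      exact ⟨good.disj α hαx.2 x hx hαx.1, good.disj α hαx.2 y hy hαy.1⟩
    · exact good.disj α (Finset.mem_of_mem_erase (Finset.mem_of_mem_erase hα))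
        β (Finset.mem_of_mem_erase (Finset.mem_of_mem_erase hβ)) hne

lemma card_merge (good : GoodSys G 𝒮) (hx : x ∈ 𝒮) (hy : y ∈ 𝒮) (hxy : x ≠ y) :
    (insert (x ∪ y) ((𝒮.erase x).erase y)).card + 1 = 𝒮.card := by
  have h1 : x ∪ y ∉ (𝒮.erase x).erase y := fun h =>
    union_not_mem good hx hy hxy (Finset.mem_of_mem_erase (Finset.mem_of_mem_erase h))
  rw [Finset.card_insert_of_notMem h1,
    Finset.card_erase_of_mem (Finset.mem_erase.2 ⟨Ne.symm hxy, hy⟩),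
    Finset.card_erase_of_mem hx]
  have h2 : 2 ≤ 𝒮.card := Finset.one_lt_card.2 ⟨x, hx, y, hy, hxy⟩
  omega

open scoped Classical in
lemma degS_merge (good : GoodSys G 𝒮) (hx : x ∈ 𝒮) (hy : y ∈ 𝒮) (hxy : x ≠ y)
    {β : Finset V} (hβ : β ∈ 𝒮) (hβx : β ≠ x) (hβy : β ≠ y) :
    (degS G 𝒮 β ≤ degS G (insert (x ∪ y) ((𝒮.erase x).erase y)) β + 1) ∧
    (¬(AdjS G x β ∧ AdjS G y β) → degS G 𝒮 β ≤ degS G (insert (x ∪ y) ((𝒮.erase x).erase y)) β) := by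
  set 𝒮' := insert (x ∪ y) ((𝒮.erase x).erase y) with h𝒮'
  set oldF := 𝒮.filter fun γ => γ ≠ β ∧ AdjS G γ β with holdF
  set newF := 𝒮'.filter (fun γ => γ ≠ β ∧ AdjS G γ β) with hnewF
  have hμ𝒮 : x ∪ y ∉ 𝒮 := union_not_mem good hx hy hxy
  have e1 : degS G 𝒮 β = oldF.card := rfl
  have e2 : degS G 𝒮' β = newF.card := rfl
  have hsub : ∀ γ ∈ oldF, γ ≠ x → γ ≠ y → γ ∈ newF := by
    intro γ hγ hγx hγy
    have hγF := Finset.mem_filter.1 hγ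
    exact Finset.mem_filter.2 ⟨Finset.mem_insert_of_mem (Finset.mem_erase.2 ⟨hγy,
      Finset.mem_erase.2 ⟨hγx, hγF.1⟩⟩), hγF.2⟩
  have hsub2 : (oldF.erase x).erase y ⊆ newF := by
    intro γ hγ
    have hγy := Finset.mem_erase.1 hγ
    have hγx := Finset.mem_erase.1 hγy.2
    exact hsub γ hγx.2 hγx.1 hγy.1
  have hμnew : (AdjS G x β ∨ AdjS G y β) → x ∪ y ∈ newF := by
    intro h
    refine Finset.mem_filter.2 ⟨Finset.mem_insert_self _ _, fun he => hμ𝒮 (he ▸ hβ), ?_⟩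
    rcases h with h | h
    · exact h.mono_left Finset.subset_union_left
    · exact h.mono_left Finset.subset_union_right
  have hμerase : ∀ (s : Finset (Finset V)), s ⊆ oldF → x ∪ y ∉ s := by
    intro s hs h
    exact hμ𝒮 (Finset.mem_of_mem_filter _ (hs h))
  have key : ∀ (s : Finset (Finset V)), s ⊆ oldF → (∀ γ ∈ s, γ ≠ x ∧ γ ≠ y) →
      (AdjS G x β ∨ AdjS G y β) → s.card + 1 ≤ newF.card := by
    intro s hs hne hadj
    have : insert (x ∪ y) s ⊆ newF := by
      intro γ hγ
      rcases Finset.mem_insert.1 hγ with rfl | hγ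
      · exact hμnew hadj
      · exact hsub γ (hs hγ) (hne γ hγ).1 (hne γ hγ).2
    have hc := Finset.card_le_card this
    rwa [Finset.card_insert_of_notMem (hμerase s hs)] at hc
  constructor
  · by_cases hadj : AdjS G x β ∨ AdjS G y β
    · have h1 := key ((oldF.erase x).erase y)
        (fun γ hγ => Finset.mem_of_mem_erase (Finset.mem_of_mem_erase hγ))
        (fun γ hγ => ⟨(Finset.mem_erase.1 (Finset.mem_of_mem_erase hγ)).1,
          (Finset.mem_erase.1 hγ).1⟩) hadj
      have h2 : oldF.card - 1 ≤ (oldF.erase x).card := Finset.pred_card_le_card_erase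
      have h3 : (oldF.erase x).card - 1 ≤ ((oldF.erase x).erase y).card :=
        Finset.pred_card_le_card_erase
      omega
    · push_neg at hadj
      have hxnot : x ∉ oldF := fun h => hadj.1 (Finset.mem_filter.1 h).2.2
      have hynot : y ∉ oldF := fun h => hadj.2 (Finset.mem_filter.1 h).2.2
      have heq : (oldF.erase x).erase y = oldF := by
        rw [Finset.erase_eq_of_notMem hxnot, Finset.erase_eq_of_notMem hynot]
      have := Finset.card_le_card (heq ▸ hsub2)
      omega
  · intro hnadj
    by_cases hax : AdjS G x β
    · have hay : ¬ AdjS G y β := fun h => hnadj ⟨hax, h⟩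
      have hynot : y ∉ oldF := fun h => hay (Finset.mem_filter.1 h).2.2
      have h1 := key (oldF.erase x) (fun γ hγ => Finset.mem_of_mem_erase hγ)
        (fun γ hγ => ⟨(Finset.mem_erase.1 hγ).1,
          fun he => hynot (he ▸ Finset.mem_of_mem_erase hγ)⟩) (Or.inl hax)
      have h2 : oldF.card - 1 ≤ (oldF.erase x).card := Finset.pred_card_le_card_erase
      omega
    · have hxnot : x ∉ oldF := fun h => hax (Finset.mem_filter.1 h).2.2
      by_cases hay : AdjS G y β
      · have h1 := key (oldF.erase y) (fun γ hγ => Finset.mem_of_mem_erase hγ)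
          (fun γ hγ => ⟨fun he => hxnot (he ▸ Finset.mem_of_mem_erase hγ),
            (Finset.mem_erase.1 hγ).1⟩) (Or.inr hay)
        have h2 : oldF.card - 1 ≤ (oldF.erase y).card := Finset.pred_card_le_card_erase
        omega
      · have hynot : y ∉ oldF := fun h => hay (Finset.mem_filter.1 h).2.2
        have heq : (oldF.erase x).erase y = oldF := by
          rw [Finset.erase_eq_of_notMem hxnot, Finset.erase_eq_of_notMem hynot]
        have := Finset.card_le_card (heq ▸ hsub2)
        omega

open scoped Classical in
lemma degS_erase (good : GoodSys G 𝒮) {d : Finset V}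
    {β : Finset V} (hβ : β ∈ 𝒮) (hβd : β ≠ d) :
    (degS G 𝒮 β ≤ degS G (𝒮.erase d) β + 1) ∧
    (¬ AdjS G d β → degS G 𝒮 β ≤ degS G (𝒮.erase d) β) := by
  set oldF := 𝒮.filter fun γ => γ ≠ β ∧ AdjS G γ β with holdF
  set newF := (𝒮.erase d).filter (fun γ => γ ≠ β ∧ AdjS G γ β) with hnewF
  have e1 : degS G 𝒮 β = oldF.card := rfl
  have e2 : degS G (𝒮.erase d) β = newF.card := rfl
  have hsub : oldF.erase d ⊆ newF := by
    intro γ hγ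
    have h1 := Finset.mem_erase.1 hγ
    have h2 := Finset.mem_filter.1 h1.2
    exact Finset.mem_filter.2 ⟨Finset.mem_erase.2 ⟨h1.1, h2.1⟩, h2.2⟩
  constructor
  · have := Finset.card_le_card hsub
    have h1 : oldF.card - 1 ≤ (oldF.erase d).card := Finset.pred_card_le_card_erase
    omega
  · intro hnadj
    have hdnot : d ∉ oldF := fun h => hnadj (Finset.mem_filter.1 h).2.2
    have heq : oldF.erase d = oldF := Finset.erase_eq_of_notMem hdnot
    have := Finset.card_le_card (heq ▸ hsub)
    omega

end Merge


lemma AdjS.mono_right {s t u : Finset V} (h : AdjS G s t) (htu : t ⊆ u) : AdjS G s u := by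
  obtain ⟨a, ha, b, hb, hab⟩ := h
  exact ⟨a, ha, b, htu hb, hab⟩

lemma goodSys_subset {𝒮 𝒯 : Finset (Finset V)} (h : 𝒯 ⊆ 𝒮) (good : GoodSys G 𝒮) :
    GoodSys G 𝒯 :=
  ⟨fun α hα => good.ne α (h hα), fun α hα => good.conn α (h hα),
   fun α hα β hβ hne => good.disj α (h hα) β (h hβ) hne⟩

open scoped Classical in
/-- the merge step: contracting an edge `xy` of the blob graph preserves the invariants,
provided all "endangered" blobs (old deficient ones and low-degree common neighbours)
are adjacent to `x` or `y` and pairwise adjacent. -/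
lemma merge_step (k : ℕ) {𝒮 : Finset (Finset V)} {x y : Finset V}
    (good : GoodSys G 𝒮) (hx : x ∈ 𝒮) (hy : y ∈ 𝒮) (hxy : x ≠ y) (hadj : AdjS G x y)
    (hdef : ∀ α ∈ 𝒮, ∀ β ∈ 𝒮, α ≠ β → degS G 𝒮 α ≤ k → degS G 𝒮 β ≤ k → AdjS G α β)
    (hbad : ∀ β ∈ 𝒮, β ≠ x → β ≠ y →
      (degS G 𝒮 β ≤ k ∨ (AdjS G x β ∧ AdjS G y β ∧ degS G 𝒮 β ≤ k + 1)) →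
      AdjS G β x ∨ AdjS G β y)
    (hbad2 : ∀ β ∈ 𝒮, ∀ γ ∈ 𝒮, β ≠ x → β ≠ y → γ ≠ x → γ ≠ y → β ≠ γ →
      (degS G 𝒮 β ≤ k ∨ (AdjS G x β ∧ AdjS G y β ∧ degS G 𝒮 β ≤ k + 1)) →
      (degS G 𝒮 γ ≤ k ∨ (AdjS G x γ ∧ AdjS G y γ ∧ degS G 𝒮 γ ≤ k + 1)) →
      AdjS G β γ) :
    GoodSys G (insert (x ∪ y) ((𝒮.erase x).erase y)) ∧
    (insert (x ∪ y) ((𝒮.erase x).erase y)).card + 1 = 𝒮.card ∧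
    (∀ α ∈ insert (x ∪ y) ((𝒮.erase x).erase y),
      ∀ β ∈ insert (x ∪ y) ((𝒮.erase x).erase y), α ≠ β →
      degS G (insert (x ∪ y) ((𝒮.erase x).erase y)) α ≤ k →
      degS G (insert (x ∪ y) ((𝒮.erase x).erase y)) β ≤ k → AdjS G α β) := by
  set 𝒮' := insert (x ∪ y) ((𝒮.erase x).erase y) with h𝒮'
  have hgood' := goodSys_merge good hx hy hxy hadj
  have hcard' := card_merge good hx hy hxy
  refine ⟨hgood', hcard', ?_⟩
  -- characterize new-deficient old blobs
  have badold : ∀ β, β ∈ (𝒮.erase x).erase y → degS G 𝒮' β ≤ k →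
      (degS G 𝒮 β ≤ k ∨ (AdjS G x β ∧ AdjS G y β ∧ degS G 𝒮 β ≤ k + 1)) := by
    intro β hβ hdβ
    have hβy := Finset.mem_erase.1 hβ
    have hβx := Finset.mem_erase.1 hβy.2
    have hm := degS_merge good hx hy hxy hβx.2 hβx.1 hβy.1
    rw [← h𝒮'] at hm
    by_cases hc : AdjS G x β ∧ AdjS G y β
    · exact Or.inr ⟨hc.1, hc.2, by omega⟩
    · exact Or.inl (by have := hm.2 hc; omega)
  intro α hα β hβ hne hdα hdβ
  rcases Finset.mem_insert.1 hα with rfl | hα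
  · rcases Finset.mem_insert.1 hβ with h' | hβ
    · exact absurd h'.symm hne
    · have hβy := Finset.mem_erase.1 hβ
      have hβx := Finset.mem_erase.1 hβy.2
      have hb := hbad β hβx.2 hβx.1 hβy.1 (badold β hβ hdβ)
      rcases hb with hb | hb
      · exact (hb.mono_right Finset.subset_union_left).symm
      · exact (hb.mono_right Finset.subset_union_right).symm
  · rcases Finset.mem_insert.1 hβ with rfl | hβ
    · have hαy := Finset.mem_erase.1 hα
      have hαx := Finset.mem_erase.1 hαy.2
      have hb := hbad α hαx.2 hαx.1 hαy.1 (badold α hα hdα)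
      rcases hb with hb | hb
      · exact hb.mono_right Finset.subset_union_left
      · exact hb.mono_right Finset.subset_union_right
    · have hαy := Finset.mem_erase.1 hα
      have hαx := Finset.mem_erase.1 hαy.2
      have hβy := Finset.mem_erase.1 hβ
      have hβx := Finset.mem_erase.1 hβy.2
      exact hbad2 α hαx.2 β hβx.2 hαx.1 hαy.1 hβx.1 hβy.1 hne
        (badold α hα hdα) (badold β hβ hdβ)

open scoped Classical in
lemma dirac4 (G : SimpleGraph V) (n : ℕ) : ∀ (𝒮 : Finset (Finset V)), 𝒮.card = n →
    GoodSys G 𝒮 → 4 ≤ 𝒮.card →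
    (∀ α ∈ 𝒮, ∀ β ∈ 𝒮, α ≠ β → degS G 𝒮 α ≤ 2 → degS G 𝒮 β ≤ 2 → AdjS G α β) →
    HasCliqueMinor G 4 := by
  induction n using Nat.strong_induction_on with
  | _ n ih =>
  intro 𝒮 hn good hcard hdef
  subst hn
  by_cases hbase : 𝒮.card = 4
  · -- base case : all degrees are ≥ 3 hence everything is adjacent
    have hdeg3 : ∀ α ∈ 𝒮, 3 ≤ degS G 𝒮 α := by
      intro α hα
      by_contra h
      push_neg at h
      have hlt : degS G 𝒮 α < (𝒮.erase α).card := by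
        rw [Finset.card_erase_of_mem hα, hbase]; omega
      have hsubF : (𝒮.filter fun β => β ≠ α ∧ AdjS G β α) ⊆ 𝒮.erase α := by
        intro β hβ
        simp only [Finset.mem_filter] at hβ
        exact Finset.mem_erase.2 ⟨hβ.2.1, hβ.1⟩
      obtain ⟨γ, hγe, hγf⟩ := Finset.exists_of_ssubset
        (hsubF.ssubset_of_ne (fun h => by
          have e : degS G 𝒮 α = (Finset.filter (fun β => β ≠ α ∧ AdjS G β α) 𝒮).card := rfl
          rw [h] at e; omega))
      have hγ := Finset.mem_erase.1 hγe
      have hnadj : ¬ AdjS G γ α := by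
        intro hc
        exact hγf (Finset.mem_filter.2 ⟨hγ.2, hγ.1, hc⟩)
      by_cases hdγ : degS G 𝒮 γ ≤ 2
      · exact hnadj (hdef γ hγ.2 α hα hγ.1 hdγ (by omega))
      · push_neg at hdγ
        have : (𝒮.erase γ).card ≤ degS G 𝒮 γ := by
          rw [Finset.card_erase_of_mem hγ.2, hbase]; omega
        exact hnadj ((full_of_degS_eq this α hα (Ne.symm hγ.1)).symm)
    have hfull : ∀ α ∈ 𝒮, ∀ β ∈ 𝒮, β ≠ α → AdjS G β α := by
      intro α hα
      apply full_of_degS_eq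
      rw [Finset.card_erase_of_mem hα, hbase]
      exact hdeg3 α hα
    obtain ⟨a, ha⟩ := Finset.card_pos.1 (show 0 < 𝒮.card by omega)
    obtain ⟨b, hb'⟩ := Finset.card_pos.1 (show 0 < (𝒮.erase a).card by
      rw [Finset.card_erase_of_mem ha]; omega)
    obtain ⟨c, hc'⟩ := Finset.card_pos.1 (show 0 < ((𝒮.erase a).erase b).card by
      rw [Finset.card_erase_of_mem hb', Finset.card_erase_of_mem ha]; omega)
    obtain ⟨e, he'⟩ := Finset.card_pos.1 (show 0 < (((𝒮.erase a).erase b).erase c).card by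
      rw [Finset.card_erase_of_mem hc', Finset.card_erase_of_mem hb',
        Finset.card_erase_of_mem ha]; omega)
    have hb := Finset.mem_erase.1 hb'
    have hc2 := Finset.mem_erase.1 hc'
    have hc3 := Finset.mem_erase.1 hc2.2
    have he2 := Finset.mem_erase.1 he'
    have he3 := Finset.mem_erase.1 he2.2
    have he4 := Finset.mem_erase.1 he3.2
    have hbm : b ∈ 𝒮 := hb.2
    have hcm : c ∈ 𝒮 := hc3.2
    have hem : e ∈ 𝒮 := he4.2
    exact minor4 a b c e (good.conn a ha) (good.conn b hbm) (good.conn c hcm)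
      (good.conn e hem)
      (good.disj a ha b hbm (Ne.symm hb.1)) (good.disj a ha c hcm (Ne.symm hc3.1))
      (good.disj a ha e hem (Ne.symm he4.1)) (good.disj b hbm c hcm (Ne.symm hc2.1))
      (good.disj b hbm e hem (Ne.symm he3.1)) (good.disj c hcm e hem (Ne.symm he2.1))
      ((hfull a ha b hbm hb.1).symm) ((hfull a ha c hcm hc3.1).symm)
      ((hfull a ha e hem he4.1).symm) ((hfull b hbm c hcm hc2.1).symm)
      ((hfull b hbm e hem he3.1).symm) ((hfull c hcm e hem he2.1).symm)
  · have hcard5 : 5 ≤ 𝒮.card := by omega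
    by_cases hdefic : ∃ d ∈ 𝒮, degS G 𝒮 d ≤ 2
    · obtain ⟨d, hd, hdd⟩ := hdefic
      by_cases hnbr : 1 ≤ degS G 𝒮 d
      · -- merge d with a neighbour y
        obtain ⟨y, hy, hyne, hady⟩ := exists_adj_of_degS_pos hnbr
        -- hady : AdjS G y d
        have hadj : AdjS G d y := hady.symm
        have hdy : d ≠ y := Ne.symm hyne
        -- any endangered blob lies in N(d) \ {y}
        have hNd : ∀ β ∈ 𝒮, β ≠ d → β ≠ y →
            (degS G 𝒮 β ≤ 2 ∨ (AdjS G d β ∧ AdjS G y β ∧ degS G 𝒮 β ≤ 3)) →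
            β ∈ (𝒮.filter fun γ => γ ≠ d ∧ AdjS G γ d) := by
          intro β hβ hβd hβy hb
          rcases hb with hb | hb
          · exact Finset.mem_filter.2 ⟨hβ, hβd, hdef β hβ d hd hβd hb hdd⟩
          · exact Finset.mem_filter.2 ⟨hβ, hβd, hb.1.symm⟩
        have hymem : y ∈ (𝒮.filter fun γ => γ ≠ d ∧ AdjS G γ d) :=
          Finset.mem_filter.2 ⟨hy, hyne, hady⟩
        have hNdcard : (𝒮.filter fun γ => γ ≠ d ∧ AdjS G γ d).card ≤ 2 := hdd
        obtain ⟨good', hcard', hdef'⟩ := merge_step 2 good hd hy hdy hadj hdef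
          (fun β hβ hβd hβy hb => Or.inl (by
            have := hNd β hβ hβd hβy hb
            exact (Finset.mem_filter.1 this).2.2))
          (fun β hβ γ hγ hβd hβy hγd hγy hβγ hbβ hbγ => by
            exfalso
            have h1 := hNd β hβ hβd hβy hbβ
            have h2 := hNd γ hγ hγd hγy hbγ
            have hsub : insert y (insert β {γ}) ⊆ 𝒮.filter fun γ' => γ' ≠ d ∧ AdjS G γ' d := by
              intro z hz
              rcases Finset.mem_insert.1 hz with rfl | hz
              · exact hymem
              rcases Finset.mem_insert.1 hz with rfl | hz
              · exact h1
              · rw [Finset.mem_singleton.1 hz]; exact h2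
            have hy1 : y ∉ insert β ({γ} : Finset (Finset V)) := by
              simp [Ne.symm hβy, Ne.symm hγy]
            have hb1 : β ∉ ({γ} : Finset (Finset V)) := by simp [hβγ]
            have h3 : (insert y (insert β ({γ} : Finset (Finset V)))).card = 3 := by
              rw [Finset.card_insert_of_notMem hy1, Finset.card_insert_of_notMem hb1,
                Finset.card_singleton]
            have := Finset.card_le_card hsub
            omega)
        exact ih _ (by omega) _ rfl good' (by omega) hdef'
      · -- deg d = 0 : delete d
        push_neg at hnbr
        have hdeg0 : degS G 𝒮 d = 0 := by omega
        have hno : ∀ β ∈ 𝒮, β ≠ d → ¬ AdjS G β d := by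
          intro β hβ hβd hc
          have hmem : β ∈ 𝒮.filter fun γ => γ ≠ d ∧ AdjS G γ d :=
            Finset.mem_filter.2 ⟨hβ, hβd, hc⟩
          have h2 := Finset.card_pos.2 ⟨β, hmem⟩
          have e : degS G 𝒮 d = (𝒮.filter fun γ => γ ≠ d ∧ AdjS G γ d).card := rfl
          omega
        have good' : GoodSys G (𝒮.erase d) := goodSys_subset (Finset.erase_subset _ _) good
        have hdef' : ∀ α ∈ 𝒮.erase d, ∀ β ∈ 𝒮.erase d, α ≠ β →
            degS G (𝒮.erase d) α ≤ 2 → degS G (𝒮.erase d) β ≤ 2 → AdjS G α β := by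
          intro α hα β hβ hne hdα hdβ
          have hα' := Finset.mem_erase.1 hα
          have hβ' := Finset.mem_erase.1 hβ
          have h1 := (degS_erase good hα'.2 hα'.1).2
            (fun hc => hno α hα'.2 hα'.1 hc.symm)
          have h2 := (degS_erase good hβ'.2 hβ'.1).2
            (fun hc => hno β hβ'.2 hβ'.1 hc.symm)
          exact hdef α hα'.2 β hβ'.2 hne (by omega) (by omega)
        have hce : (𝒮.erase d).card = 𝒮.card - 1 := Finset.card_erase_of_mem hd
        exact ih _ (by omega) _ rfl good' (by omega) hdef'
    · -- no deficient blob : all degrees ≥ 3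
      push_neg at hdefic
      have hdeg3 : ∀ α ∈ 𝒮, 3 ≤ degS G 𝒮 α := fun α hα => by have := hdefic α hα; omega
      -- neighbours of a degree-3 blob
      have nbrs3 : ∀ w ∈ 𝒮, degS G 𝒮 w ≤ 3 → ∀ a ∈ 𝒮, ∀ b ∈ 𝒮,
          a ≠ w → b ≠ w → a ≠ b → AdjS G a w → AdjS G b w →
          ∃ s, s ∈ 𝒮 ∧ s ≠ w ∧ AdjS G s w ∧ s ≠ a ∧ s ≠ b ∧
            ∀ γ ∈ 𝒮, γ ≠ w → AdjS G γ w → (γ = a ∨ γ = b ∨ γ = s) := by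
        intro w hw hdw a ha b hb haw hbw hab hadja hadjb
        set F := 𝒮.filter (fun γ => γ ≠ w ∧ AdjS G γ w) with hF
        have eF : degS G 𝒮 w = F.card := rfl
        have hFcard : F.card = 3 := by have := hdeg3 w hw; omega
        have haF : a ∈ F := Finset.mem_filter.2 ⟨ha, haw, hadja⟩
        have hbF : b ∈ F := Finset.mem_filter.2 ⟨hb, hbw, hadjb⟩
        have hE : ((F.erase a).erase b).card = 1 := by
          rw [Finset.card_erase_of_mem (Finset.mem_erase.2 ⟨Ne.symm hab, hbF⟩),
            Finset.card_erase_of_mem haF, hFcard]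
        obtain ⟨s, hsE⟩ := Finset.card_eq_one.1 hE
        have hsmem : s ∈ (F.erase a).erase b := by rw [hsE]; exact Finset.mem_singleton_self s
        have hs1 := Finset.mem_erase.1 hsmem
        have hs2 := Finset.mem_erase.1 hs1.2
        have hsF := Finset.mem_filter.1 hs2.2
        refine ⟨s, hsF.1, hsF.2.1, hsF.2.2, hs2.1, hs1.1, ?_⟩
        intro γ hγ hγw hγadj
        have hγF : γ ∈ F := Finset.mem_filter.2 ⟨hγ, hγw, hγadj⟩
        by_cases h1 : γ = a
        · exact Or.inl h1
        by_cases h2 : γ = b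
        · exact Or.inr (Or.inl h2)
        have : γ ∈ (F.erase a).erase b :=
          Finset.mem_erase.2 ⟨h2, Finset.mem_erase.2 ⟨h1, hγF⟩⟩
        rw [hsE, Finset.mem_singleton] at this
        exact Or.inr (Or.inr this)
      have hedge : ∃ x ∈ 𝒮, ∃ y ∈ 𝒮, x ≠ y ∧ AdjS G x y ∧
          ∀ w1 ∈ 𝒮, ∀ w2 ∈ 𝒮, w1 ≠ x → w1 ≠ y → w2 ≠ x → w2 ≠ y → w1 ≠ w2 →
            (AdjS G x w1 ∧ AdjS G y w1 ∧ degS G 𝒮 w1 ≤ 3) →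
            (AdjS G x w2 ∧ AdjS G y w2 ∧ degS G 𝒮 w2 ≤ 3) → AdjS G w1 w2 := by
        by_contra hstar
        push_neg at hstar
        -- get some edge
        obtain ⟨α, hα⟩ := Finset.card_pos.1 (show 0 < 𝒮.card by omega)
        obtain ⟨x0, hx0, hx0α, hadj0⟩ := exists_adj_of_degS_pos
          (show 1 ≤ degS G 𝒮 α by have := hdeg3 α hα; omega)
        -- hadj0 : AdjS G x0 α
        obtain ⟨w1, hw1, w2, hw2, hw1x, hw1y, hw2x, hw2y, hw12, ht1, ht2, hn12⟩ :=
          hstar x0 hx0 α hα hx0α hadj0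
        -- neighbours of w1 : x0, α, s
        obtain ⟨s, hs, hsw1, hadjs, hsx0, hsα, hcov1⟩ :=
          nbrs3 w1 hw1 ht1.2.2 x0 hx0 α hα (Ne.symm hw1x) (Ne.symm hw1y) hx0α
            ht1.1 ht1.2.1
        -- w2 ≠ s
        have hw2s : w2 ≠ s := by
          rintro rfl
          exact hn12 hadjs.symm
        -- edge (x0, w1)
        obtain ⟨p, hp, q, hq, hpx, hpw1, hqx, hqw1, hpq, htp, htq, hnpq⟩ :=
          hstar x0 hx0 w1 hw1 (Ne.symm hw1x) ht1.1
        have hpcase : p = α ∨ p = s := by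
          rcases hcov1 p hp hpw1 htp.2.1.symm with h | h | h
          · exact absurd h hpx
          · exact Or.inl h
          · exact Or.inr h
        have hqcase : q = α ∨ q = s := by
          rcases hcov1 q hq hqw1 htq.2.1.symm with h | h | h
          · exact absurd h hqx
          · exact Or.inl h
          · exact Or.inr h
        -- in either case, deg α ≤ 3
        have hdα3 : degS G 𝒮 α ≤ 3 := by
          rcases hpcase with rfl | rfl
          · exact htp.2.2
          · rcases hqcase with rfl | rfl
            · exact htq.2.2
            · exact absurd rfl hpq
        -- neighbours of α : x0, w1, w2
        have hx0w1 : x0 ≠ w1 := Ne.symm hw1x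
        have hx0w2 : x0 ≠ w2 := Ne.symm hw2x
        obtain ⟨s', hs', hs'α, hadjs', hs'x0, hs'w1, hcov2⟩ :=
          nbrs3 α hα hdα3 x0 hx0 w1 hw1 hx0α hw1y hx0w1
            hadj0 ht1.2.1.symm
        have hs'w2 : s' = w2 := by
          rcases hcov2 w2 hw2 hw2y ht2.2.1.symm with h | h | h
          · exact absurd h hw2x
          · exact absurd h.symm hw12
          · exact h.symm
        -- edge (α, w1)
        obtain ⟨p', hp', q', hq', hpα, hpw1', hqα, hqw1', hpq', htp', htq', hnpq'⟩ :=
          hstar α hα w1 hw1 (Ne.symm hw1y) ht1.2.1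
        have hpx0 : p' = x0 := by
          have h1 : p' = x0 ∨ p' = w2 := by
            rcases hcov2 p' hp' hpα htp'.1.symm with h | h | h
            · exact Or.inl h
            · exact absurd h hpw1'
            · exact Or.inr (hs'w2 ▸ h)
          have h2 : p' = x0 ∨ p' = s := by
            rcases hcov1 p' hp' hpw1' htp'.2.1.symm with h | h | h
            · exact Or.inl h
            · exact absurd h hpα
            · exact Or.inr h
          rcases h1 with h | h
          · exact h
          · rcases h2 with h' | h'
            · exact h'
            · exact absurd (h'.symm.trans h).symm hw2s
        have hqx0 : q' = x0 := by
          have h1 : q' = x0 ∨ q' = w2 := by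
            rcases hcov2 q' hq' hqα htq'.1.symm with h | h | h
            · exact Or.inl h
            · exact absurd h hqw1'
            · exact Or.inr (hs'w2 ▸ h)
          have h2 : q' = x0 ∨ q' = s := by
            rcases hcov1 q' hq' hqw1' htq'.2.1.symm with h | h | h
            · exact Or.inl h
            · exact absurd h hqα
            · exact Or.inr h
          rcases h1 with h | h
          · exact h
          · rcases h2 with h' | h'
            · exact h'
            · exact absurd (h'.symm.trans h).symm hw2s
        exact hpq' (hpx0.trans hqx0.symm)
      obtain ⟨x, hx, y, hy, hxy, hadj, hclique⟩ := hedge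
      obtain ⟨good', hcard', hdef'⟩ := merge_step 2 good hx hy hxy hadj hdef
        (fun β hβ hβx hβy hb => by
          rcases hb with hb | hb
          · exact absurd hb (by have := hdeg3 β hβ; omega)
          · exact Or.inl hb.1.symm)
        (fun β hβ γ hγ hβx hβy hγx hγy hβγ hbβ hbγ => by
          rcases hbβ with hb | hbβ
          · exact absurd hb (by have := hdeg3 β hβ; omega)
          rcases hbγ with hb | hbγ
          · exact absurd hb (by have := hdeg3 γ hγ; omega)
          exact hclique β hβ γ hγ hβx hβy hγx hγy hβγ hbβ hbγ)
      exact ih _ (by omega) _ rfl good' (by omega) hdef'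

/-- build a `K₃` minor from three finsets -/
lemma minor3 (A0 A1 A2 : Finset V)
    (h0 : Conn G A0) (h1 : Conn G A1) (h2 : Conn G A2)
    (d01 : Disjoint A0 A1) (d02 : Disjoint A0 A2) (d12 : Disjoint A1 A2)
    (a01 : AdjS G A0 A1) (a02 : AdjS G A0 A2) (a12 : AdjS G A1 A2) :
    HasCliqueMinor G 3 := by
  have adjS_coe : ∀ {s t : Finset V}, AdjS G s t →
      ∃ u ∈ (↑s : Set V), ∃ v ∈ (↑t : Set V), G.Adj u v := by
    rintro s t ⟨u, hu, v, hv, h⟩; exact ⟨u, hu, v, hv, h⟩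
  refine ⟨![(A0 : Set V), A1, A2], ?_, ?_, ?_, ?_⟩
  · intro i
    fin_cases i <;>
      simp only [Fin.isValue, Matrix.cons_val_zero, Matrix.cons_val_one, Matrix.head_cons,
        Matrix.cons_val_two, Matrix.tail_cons, Fin.mk_zero, Fin.mk_one, Finset.coe_nonempty,
        show (⟨2, by norm_num⟩ : Fin 3) = 2 from rfl] <;>
      first
        | exact h0.1 | exact h1.1 | exact h2.1
  · intro i
    fin_cases i <;>
      simp only [Fin.isValue, Matrix.cons_val_zero, Matrix.cons_val_one, Matrix.head_cons,
        Matrix.cons_val_two, Matrix.tail_cons, Fin.mk_zero, Fin.mk_one,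
        show (⟨2, by norm_num⟩ : Fin 3) = 2 from rfl] <;>
      first
        | exact conn_induce h0 | exact conn_induce h1 | exact conn_induce h2
  · intro i j hij
    fin_cases i <;> fin_cases j <;>
      simp only [Fin.isValue, Matrix.cons_val_zero, Matrix.cons_val_one, Matrix.head_cons,
        Matrix.cons_val_two, Matrix.tail_cons, Fin.mk_zero, Fin.mk_one, Finset.disjoint_coe,
        show (⟨2, by norm_num⟩ : Fin 3) = 2 from rfl] <;>
      first
        | exact absurd rfl hij
        | assumption
        | exact d01.symm | exact d02.symm | exact d12.symm
  · intro i j hij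
    fin_cases i <;> fin_cases j <;>
      simp only [Fin.isValue, Matrix.cons_val_zero, Matrix.cons_val_one, Matrix.head_cons,
        Matrix.cons_val_two, Matrix.tail_cons, Fin.mk_zero, Fin.mk_one,
        show (⟨2, by norm_num⟩ : Fin 3) = 2 from rfl] <;>
      first
        | exact absurd rfl hij
        | exact adjS_coe a01 | exact adjS_coe a02 | exact adjS_coe a12
        | exact adjS_coe a01.symm | exact adjS_coe a02.symm | exact adjS_coe a12.symm

open scoped Classical in
lemma dirac3 (G : SimpleGraph V) (n : ℕ) : ∀ (𝒮 : Finset (Finset V)), 𝒮.card = n →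
    GoodSys G 𝒮 → 3 ≤ 𝒮.card →
    (∀ α ∈ 𝒮, ∀ β ∈ 𝒮, α ≠ β → degS G 𝒮 α ≤ 1 → degS G 𝒮 β ≤ 1 → AdjS G α β) →
    HasCliqueMinor G 3 := by
  induction n using Nat.strong_induction_on with
  | _ n ih =>
  intro 𝒮 hn good hcard hdef
  subst hn
  by_cases hbase : 𝒮.card = 3
  · have hdeg2 : ∀ α ∈ 𝒮, 2 ≤ degS G 𝒮 α := by
      intro α hα
      by_contra h
      push_neg at h
      have hlt : degS G 𝒮 α < (𝒮.erase α).card := by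
        rw [Finset.card_erase_of_mem hα, hbase]; omega
      have hsubF : (𝒮.filter fun β => β ≠ α ∧ AdjS G β α) ⊆ 𝒮.erase α := by
        intro β hβ
        simp only [Finset.mem_filter] at hβ
        exact Finset.mem_erase.2 ⟨hβ.2.1, hβ.1⟩
      obtain ⟨γ, hγe, hγf⟩ := Finset.exists_of_ssubset
        (hsubF.ssubset_of_ne (fun h => by
          have e : degS G 𝒮 α = (Finset.filter (fun β => β ≠ α ∧ AdjS G β α) 𝒮).card := rfl
          rw [h] at e; omega))
      have hγ := Finset.mem_erase.1 hγe
      have hnadj : ¬ AdjS G γ α := by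
        intro hc
        exact hγf (Finset.mem_filter.2 ⟨hγ.2, hγ.1, hc⟩)
      by_cases hdγ : degS G 𝒮 γ ≤ 1
      · exact hnadj (hdef γ hγ.2 α hα hγ.1 hdγ (by omega))
      · push_neg at hdγ
        have : (𝒮.erase γ).card ≤ degS G 𝒮 γ := by
          rw [Finset.card_erase_of_mem hγ.2, hbase]; omega
        exact hnadj ((full_of_degS_eq this α hα (Ne.symm hγ.1)).symm)
    have hfull : ∀ α ∈ 𝒮, ∀ β ∈ 𝒮, β ≠ α → AdjS G β α := by
      intro α hα
      apply full_of_degS_eq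
      rw [Finset.card_erase_of_mem hα, hbase]
      exact hdeg2 α hα
    obtain ⟨a, ha⟩ := Finset.card_pos.1 (show 0 < 𝒮.card by omega)
    obtain ⟨b, hb'⟩ := Finset.card_pos.1 (show 0 < (𝒮.erase a).card by
      rw [Finset.card_erase_of_mem ha]; omega)
    obtain ⟨c, hc'⟩ := Finset.card_pos.1 (show 0 < ((𝒮.erase a).erase b).card by
      rw [Finset.card_erase_of_mem hb', Finset.card_erase_of_mem ha]; omega)
    have hb := Finset.mem_erase.1 hb'
    have hc2 := Finset.mem_erase.1 hc'
    have hc3 := Finset.mem_erase.1 hc2.2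
    have hbm : b ∈ 𝒮 := hb.2
    have hcm : c ∈ 𝒮 := hc3.2
    exact minor3 a b c (good.conn a ha) (good.conn b hbm) (good.conn c hcm)
      (good.disj a ha b hbm (Ne.symm hb.1)) (good.disj a ha c hcm (Ne.symm hc3.1))
      (good.disj b hbm c hcm (Ne.symm hc2.1))
      ((hfull a ha b hbm hb.1).symm) ((hfull a ha c hcm hc3.1).symm)
      ((hfull b hbm c hcm hc2.1).symm)
  · have hcard4 : 4 ≤ 𝒮.card := by omega
    by_cases hdefic : ∃ d ∈ 𝒮, degS G 𝒮 d ≤ 1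
    · obtain ⟨d, hd, hdd⟩ := hdefic
      by_cases hnbr : 1 ≤ degS G 𝒮 d
      · obtain ⟨y, hy, hyne, hady⟩ := exists_adj_of_degS_pos hnbr
        have hadj : AdjS G d y := hady.symm
        have hdy : d ≠ y := Ne.symm hyne
        have hNd : ∀ β ∈ 𝒮, β ≠ d → β ≠ y →
            (degS G 𝒮 β ≤ 1 ∨ (AdjS G d β ∧ AdjS G y β ∧ degS G 𝒮 β ≤ 2)) →
            β ∈ (𝒮.filter fun γ => γ ≠ d ∧ AdjS G γ d) := by
          intro β hβ hβd hβy hb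
          rcases hb with hb | hb
          · exact Finset.mem_filter.2 ⟨hβ, hβd, hdef β hβ d hd hβd hb hdd⟩
          · exact Finset.mem_filter.2 ⟨hβ, hβd, hb.1.symm⟩
        have hymem : y ∈ (𝒮.filter fun γ => γ ≠ d ∧ AdjS G γ d) :=
          Finset.mem_filter.2 ⟨hy, hyne, hady⟩
        obtain ⟨good', hcard', hdef'⟩ := merge_step 1 good hd hy hdy hadj hdef
          (fun β hβ hβd hβy hb => Or.inl (by
            have := hNd β hβ hβd hβy hb
            exact (Finset.mem_filter.1 this).2.2))
          (fun β hβ γ hγ hβd hβy hγd hγy hβγ hbβ hbγ => by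
            exfalso
            have h1 := hNd β hβ hβd hβy hbβ
            have hy1 : y ∉ ({β} : Finset (Finset V)) := by simp [Ne.symm hβy]
            have hsub : insert y ({β} : Finset (Finset V)) ⊆
                𝒮.filter fun γ' => γ' ≠ d ∧ AdjS G γ' d := by
              intro z hz
              rcases Finset.mem_insert.1 hz with rfl | hz
              · exact hymem
              · rw [Finset.mem_singleton.1 hz]; exact h1
            have h3 : (insert y ({β} : Finset (Finset V))).card = 2 := by
              rw [Finset.card_insert_of_notMem hy1, Finset.card_singleton]
            have h4 := Finset.card_le_card hsub
            have e : degS G 𝒮 d = (𝒮.filter fun γ' => γ' ≠ d ∧ AdjS G γ' d).card := rfl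
            omega)
        exact ih _ (by omega) _ rfl good' (by omega) hdef'
      · push_neg at hnbr
        have hdeg0 : degS G 𝒮 d = 0 := by omega
        have hno : ∀ β ∈ 𝒮, β ≠ d → ¬ AdjS G β d := by
          intro β hβ hβd hc
          have hmem : β ∈ 𝒮.filter fun γ => γ ≠ d ∧ AdjS G γ d :=
            Finset.mem_filter.2 ⟨hβ, hβd, hc⟩
          have h2 := Finset.card_pos.2 ⟨β, hmem⟩
          have e : degS G 𝒮 d = (𝒮.filter fun γ => γ ≠ d ∧ AdjS G γ d).card := rfl
          omega
        have good' : GoodSys G (𝒮.erase d) := goodSys_subset (Finset.erase_subset _ _) good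
        have hdef' : ∀ α ∈ 𝒮.erase d, ∀ β ∈ 𝒮.erase d, α ≠ β →
            degS G (𝒮.erase d) α ≤ 1 → degS G (𝒮.erase d) β ≤ 1 → AdjS G α β := by
          intro α hα β hβ hne hdα hdβ
          have hα' := Finset.mem_erase.1 hα
          have hβ' := Finset.mem_erase.1 hβ
          have h1 := (degS_erase good hα'.2 hα'.1).2
            (fun hc => hno α hα'.2 hα'.1 hc.symm)
          have h2 := (degS_erase good hβ'.2 hβ'.1).2
            (fun hc => hno β hβ'.2 hβ'.1 hc.symm)
          exact hdef α hα'.2 β hβ'.2 hne (by omega) (by omega)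
        have hce : (𝒮.erase d).card = 𝒮.card - 1 := Finset.card_erase_of_mem hd
        exact ih _ (by omega) _ rfl good' (by omega) hdef'
    · push_neg at hdefic
      have hdeg2 : ∀ α ∈ 𝒮, 2 ≤ degS G 𝒮 α := fun α hα => by have := hdefic α hα; omega
      have nbrs2 : ∀ w ∈ 𝒮, degS G 𝒮 w ≤ 2 → ∀ a ∈ 𝒮, ∀ b ∈ 𝒮,
          a ≠ w → b ≠ w → a ≠ b → AdjS G a w → AdjS G b w →
          ∀ γ ∈ 𝒮, γ ≠ w → AdjS G γ w → (γ = a ∨ γ = b) := by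
        intro w hw hdw a ha b hb haw hbw hab hadja hadjb
        set F := 𝒮.filter (fun γ => γ ≠ w ∧ AdjS G γ w) with hF
        have eF : degS G 𝒮 w = F.card := rfl
        have hFcard : F.card = 2 := by have := hdeg2 w hw; omega
        have haF : a ∈ F := Finset.mem_filter.2 ⟨ha, haw, hadja⟩
        have hbF : b ∈ F := Finset.mem_filter.2 ⟨hb, hbw, hadjb⟩
        have hb1 : a ∉ ({b} : Finset (Finset V)) := by simp [hab]
        have hsub : insert a ({b} : Finset (Finset V)) ⊆ F := by
          intro z hz
          rcases Finset.mem_insert.1 hz with rfl | hz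
          · exact haF
          · rw [Finset.mem_singleton.1 hz]; exact hbF
        have heq : insert a ({b} : Finset (Finset V)) = F := by
          apply Finset.eq_of_subset_of_card_le hsub
          rw [Finset.card_insert_of_notMem hb1, Finset.card_singleton, hFcard]
        intro γ hγ hγw hγadj
        have hγF : γ ∈ F := Finset.mem_filter.2 ⟨hγ, hγw, hγadj⟩
        rw [← heq] at hγF
        rcases Finset.mem_insert.1 hγF with h | h
        · exact Or.inl h
        · exact Or.inr (Finset.mem_singleton.1 h)
      have hedge : ∃ x ∈ 𝒮, ∃ y ∈ 𝒮, x ≠ y ∧ AdjS G x y ∧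
          ∀ w1 ∈ 𝒮, ∀ w2 ∈ 𝒮, w1 ≠ x → w1 ≠ y → w2 ≠ x → w2 ≠ y → w1 ≠ w2 →
            (AdjS G x w1 ∧ AdjS G y w1 ∧ degS G 𝒮 w1 ≤ 2) →
            (AdjS G x w2 ∧ AdjS G y w2 ∧ degS G 𝒮 w2 ≤ 2) → AdjS G w1 w2 := by
        by_contra hstar
        push_neg at hstar
        obtain ⟨α, hα⟩ := Finset.card_pos.1 (show 0 < 𝒮.card by omega)
        obtain ⟨x0, hx0, hx0α, hadj0⟩ := exists_adj_of_degS_pos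
          (show 1 ≤ degS G 𝒮 α by have := hdeg2 α hα; omega)
        obtain ⟨w1, hw1, w2, hw2, hw1x, hw1y, hw2x, hw2y, hw12, ht1, ht2, hn12⟩ :=
          hstar x0 hx0 α hα hx0α hadj0
        -- neighbours of w1 are exactly x0 and α
        obtain ⟨p, hp, q, hq, hpx, hpw1, hqx, hqw1, hpq, htp, htq, hnpq⟩ :=
          hstar x0 hx0 w1 hw1 (Ne.symm hw1x) ht1.1
        have hpcase : p = x0 ∨ p = α :=
          nbrs2 w1 hw1 ht1.2.2 x0 hx0 α hα (Ne.symm hw1x) (Ne.symm hw1y) hx0α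
            ht1.1 ht1.2.1 p hp hpw1 htp.2.1.symm
        have hqcase : q = x0 ∨ q = α :=
          nbrs2 w1 hw1 ht1.2.2 x0 hx0 α hα (Ne.symm hw1x) (Ne.symm hw1y) hx0α
            ht1.1 ht1.2.1 q hq hqw1 htq.2.1.symm
        have hpα : p = α := (hpcase.resolve_left hpx)
        have hqα : q = α := (hqcase.resolve_left hqx)
        exact hpq (hpα.trans hqα.symm)
      obtain ⟨x, hx, y, hy, hxy, hadj, hclique⟩ := hedge
      obtain ⟨good', hcard', hdef'⟩ := merge_step 1 good hx hy hxy hadj hdef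
        (fun β hβ hβx hβy hb => by
          rcases hb with hb | hb
          · exact absurd hb (by have := hdeg2 β hβ; omega)
          · exact Or.inl hb.1.symm)
        (fun β hβ γ hγ hβx hβy hγx hγy hβγ hbβ hbγ => by
          rcases hbβ with hb | hbβ
          · exact absurd hb (by have := hdeg2 β hβ; omega)
          rcases hbγ with hb | hbγ
          · exact absurd hb (by have := hdeg2 γ hγ; omega)
          exact hclique β hβ γ hγ hβx hβy hγx hγy hβγ hbβ hbγ)
      exact ih _ (by omega) _ rfl good' (by omega) hdef'

lemma AdjV.mono_left {s t : Finset V} {b : V} (h : AdjV G s b) (hst : s ⊆ t) : AdjV G t b := by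
  obtain ⟨u, hu, hub⟩ := h
  exact ⟨u, hst hu, hub⟩

/-- reachability within a set of vertices -/
def ReachIn (G : SimpleGraph V) (W : Set V) (u v : V) : Prop :=
  ∃ p : G.Walk u v, ∀ w ∈ p.support, w ∈ W

lemma ReachIn.trans {W : Set V} {u v w : V} (h1 : ReachIn G W u v) (h2 : ReachIn G W v w) :
    ReachIn G W u w := by
  obtain ⟨p, hp⟩ := h1
  obtain ⟨q, hq⟩ := h2
  refine ⟨p.append q, ?_⟩
  intro z hz
  rw [SimpleGraph.Walk.mem_support_append_iff] at hz
  rcases hz with hz | hz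
  · exact hp z hz
  · exact hq z hz

lemma ReachIn.step {W : Set V} {u v w : V} (h1 : ReachIn G W u v) (h2 : G.Adj v w)
    (hw : w ∈ W) : ReachIn G W u w := by
  refine h1.trans ⟨SimpleGraph.Walk.cons h2 SimpleGraph.Walk.nil, ?_⟩
  intro z hz
  simp only [SimpleGraph.Walk.support_cons, SimpleGraph.Walk.support_nil, List.mem_cons,
    List.not_mem_nil, or_false] at hz
  rcases hz with rfl | rfl
  · obtain ⟨p, hp⟩ := h1
    exact hp z (SimpleGraph.Walk.end_mem_support p)
  · exact hw

open scoped Classical in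
lemma bip4 (G : SimpleGraph V) (n : ℕ) : ∀ (𝒜 : Finset (Finset V)) (B : Finset V),
    𝒜.card + B.card = n → GoodSys G 𝒜 → (∀ α ∈ 𝒜, Disjoint α B) →
    (∀ α ∈ 𝒜, 3 ≤ (B.filter (fun b => AdjV G α b)).card) →
    B.card ≤ 𝒜.card → B.Nonempty → HasCliqueMinor G 4 := by
  induction n using Nat.strong_induction_on with
  | _ n ih =>
  intro 𝒜 B hn good hAB hdegA hBA hBne
  subst hn
  have hB1 : 1 ≤ B.card := Finset.card_pos.2 hBne
  have h𝒜ne : 𝒜.Nonempty := Finset.card_pos.1 (by omega)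
  have hB3 : 3 ≤ B.card := by
    obtain ⟨α, hα⟩ := h𝒜ne
    calc 3 ≤ (B.filter (fun b => AdjV G α b)).card := hdegA α hα
    _ ≤ B.card := Finset.card_le_card (Finset.filter_subset _ _)
  by_cases hall : ∀ b ∈ B, 3 ≤ (𝒜.filter fun α => AdjV G α b).card
  · -- all B-degrees at least 3 : apply dirac4 to the combined system
    set 𝒮 := 𝒜 ∪ B.image (fun b => ({b} : Finset V)) with h𝒮
    have hmemB : ∀ b ∈ B, ({b} : Finset V) ∈ 𝒮 := fun b hb =>
      Finset.mem_union_right _ (Finset.mem_image_of_mem _ hb)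
    have hnotsing : ∀ α ∈ 𝒜, ∀ b ∈ B, α ≠ {b} := by
      intro α hα b hb he
      have : b ∈ α := he ▸ Finset.mem_singleton_self b
      exact Finset.disjoint_left.1 (hAB α hα) this hb
    have hdisjU : Disjoint 𝒜 (B.image (fun b => ({b} : Finset V))) := by
      rw [Finset.disjoint_left]
      intro α hα hα2
      obtain ⟨b, hb, he⟩ := Finset.mem_image.1 hα2
      exact hnotsing α hα b hb he.symm
    have hcard𝒮 : 𝒮.card = 𝒜.card + B.card := by
      rw [h𝒮, Finset.card_union_of_disjoint hdisjU,
        Finset.card_image_of_injective _ Finset.singleton_injective]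
    have good𝒮 : GoodSys G 𝒮 := by
      constructor
      · intro σ hσ
        rcases Finset.mem_union.1 hσ with hσ | hσ
        · exact good.ne σ hσ
        · obtain ⟨b, _, rfl⟩ := Finset.mem_image.1 hσ
          exact ⟨b, Finset.mem_singleton_self b⟩
      · intro σ hσ
        rcases Finset.mem_union.1 hσ with hσ | hσ
        · exact good.conn σ hσ
        · obtain ⟨b, _, rfl⟩ := Finset.mem_image.1 hσ
          exact conn_singleton b
      · intro σ hσ τ hτ hne
        rcases Finset.mem_union.1 hσ with hσ | hσ <;> rcases Finset.mem_union.1 hτ with hτ | hτ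
        · exact good.disj σ hσ τ hτ hne
        · obtain ⟨b, hb, rfl⟩ := Finset.mem_image.1 hτ
          rw [Finset.disjoint_singleton_right]
          exact fun hmem => Finset.disjoint_left.1 (hAB σ hσ) hmem hb
        · obtain ⟨b, hb, rfl⟩ := Finset.mem_image.1 hσ
          rw [Finset.disjoint_singleton_left]
          exact fun hmem => Finset.disjoint_left.1 (hAB τ hτ) hmem hb
        · obtain ⟨b, _, rfl⟩ := Finset.mem_image.1 hσ
          obtain ⟨c, _, rfl⟩ := Finset.mem_image.1 hτ
          rw [Finset.disjoint_singleton_right, Finset.mem_singleton]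
          exact fun he => hne (by rw [he])
    have hdeg𝒮 : ∀ σ ∈ 𝒮, 3 ≤ degS G 𝒮 σ := by
      intro σ hσ
      rcases Finset.mem_union.1 hσ with hσ | hσ
      · -- σ ∈ 𝒜 : its B-neighbours give singleton blobs
        have : (B.filter (fun b => AdjV G σ b)).card ≤
            (𝒮.filter fun γ => γ ≠ σ ∧ AdjS G γ σ).card := by
          apply Finset.card_le_card_of_injOn (fun b => ({b} : Finset V))
          · intro b hb
            have hb' := Finset.mem_filter.1 hb
            refine Finset.mem_filter.2 ⟨hmemB b hb'.1, Ne.symm (hnotsing σ hσ b hb'.1), ?_⟩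
            obtain ⟨u, hu, hub⟩ := hb'.2
            exact ⟨b, Finset.mem_singleton_self b, u, hu, hub.symm⟩
          · intro b _ c _ he
            exact Finset.singleton_injective he
        have e : degS G 𝒮 σ = (𝒮.filter fun γ => γ ≠ σ ∧ AdjS G γ σ).card := rfl
        have := hdegA σ hσ
        omega
      · obtain ⟨b, hb, rfl⟩ := Finset.mem_image.1 hσ
        have : (𝒜.filter fun α => AdjV G α b).card ≤
            (𝒮.filter fun γ => γ ≠ ({b} : Finset V) ∧ AdjS G γ {b}).card := by
          apply Finset.card_le_card
          intro α hα
          have hα' := Finset.mem_filter.1 hα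
          refine Finset.mem_filter.2 ⟨Finset.mem_union_left _ hα'.1,
            hnotsing α hα'.1 b hb, ?_⟩
          exact (adjS_singleton_right (G := G)).2 hα'.2
        have e : degS G 𝒮 ({b} : Finset V) =
            (𝒮.filter fun γ => γ ≠ ({b} : Finset V) ∧ AdjS G γ {b}).card := rfl
        have := hall b hb
        omega
    apply dirac4 G 𝒮.card 𝒮 rfl good𝒮 (by omega)
    intro α hα β hβ hne h2 h3
    exact absurd h2 (by have := hdeg𝒮 α hα; omega)
  · push_neg at hall
    obtain ⟨b, hb, hblt⟩ := hall
    set F := 𝒜.filter (fun α => AdjV G α b) with hF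
    have hFsub : F ⊆ 𝒜 := Finset.filter_subset _ _
    have hFcase : F.card = 0 ∨ F.card = 1 ∨ F.card = 2 := by omega
    -- a helper : if no blob of a set is adjacent to b, degrees are preserved after erasing b
    have hpres : ∀ α ∈ 𝒜, ¬ AdjV G α b →
        3 ≤ ((B.erase b).filter (fun w => AdjV G α w)).card := by
      intro α hα hnadj
      have hsub : B.filter (fun w => AdjV G α w) ⊆
          (B.erase b).filter (fun w => AdjV G α w) := by
        intro w hw
        have hw' := Finset.mem_filter.1 hw
        refine Finset.mem_filter.2 ⟨Finset.mem_erase.2 ⟨?_, hw'.1⟩, hw'.2⟩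
        rintro rfl
        exact hnadj hw'.2
      calc 3 ≤ (B.filter (fun w => AdjV G α w)).card := hdegA α hα
      _ ≤ _ := Finset.card_le_card hsub
    rcases hFcase with hF0 | hF1 | hF2
    · -- no blob adjacent to b : drop b
      have hnone : ∀ α ∈ 𝒜, ¬ AdjV G α b := by
        intro α hα hc
        have : α ∈ F := Finset.mem_filter.2 ⟨hα, hc⟩
        rw [Finset.card_eq_zero.1 hF0] at this
        simp at this
      refine ih (𝒜.card + (B.erase b).card) ?_ 𝒜 (B.erase b) rfl good
        (fun α hα => (hAB α hα).mono_right (Finset.erase_subset _ _))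
        (fun α hα => hpres α hα (hnone α hα)) ?_ ?_
      · rw [Finset.card_erase_of_mem hb]; omega
      · rw [Finset.card_erase_of_mem hb]; omega
      · rw [← Finset.card_pos, Finset.card_erase_of_mem hb]; omega
    · -- exactly one blob adjacent to b : drop b and that blob
      obtain ⟨α₁, hα₁e⟩ := Finset.card_eq_one.1 hF1
      have hα₁F : α₁ ∈ F := hα₁e ▸ Finset.mem_singleton_self α₁
      have hα₁ : α₁ ∈ 𝒜 := hFsub hα₁F
      have hcov : ∀ α ∈ 𝒜, AdjV G α b → α = α₁ := by
        intro α hα hc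
        have : α ∈ F := Finset.mem_filter.2 ⟨hα, hc⟩
        rw [hα₁e, Finset.mem_singleton] at this
        exact this
      refine ih ((𝒜.erase α₁).card + (B.erase b).card) ?_ (𝒜.erase α₁) (B.erase b) rfl
        (goodSys_subset (Finset.erase_subset _ _) good)
        (fun α hα => ((hAB α (Finset.mem_of_mem_erase hα)).mono_right
          (Finset.erase_subset _ _)))
        (fun α hα => hpres α (Finset.mem_of_mem_erase hα) (fun hc =>
          (Finset.mem_erase.1 hα).1 (hcov α (Finset.mem_of_mem_erase hα) hc))) ?_ ?_
      · rw [Finset.card_erase_of_mem hb, Finset.card_erase_of_mem hα₁]; omega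
      · rw [Finset.card_erase_of_mem hb, Finset.card_erase_of_mem hα₁]; omega
      · rw [← Finset.card_pos, Finset.card_erase_of_mem hb]; omega
    · -- exactly two blobs adjacent to b
      obtain ⟨α₁, α₂, hα₁₂, hFe⟩ := Finset.card_eq_two.1 hF2
      have hα₁F : α₁ ∈ F := hFe ▸ Finset.mem_insert_self _ _
      have hα₂F : α₂ ∈ F := hFe ▸ Finset.mem_insert_of_mem (Finset.mem_singleton_self α₂)
      have hα₁ : α₁ ∈ 𝒜 := hFsub hα₁F
      have hα₂ : α₂ ∈ 𝒜 := hFsub hα₂F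
      have hadj₁ : AdjV G α₁ b := (Finset.mem_filter.1 hα₁F).2
      have hadj₂ : AdjV G α₂ b := (Finset.mem_filter.1 hα₂F).2
      have hcov : ∀ α ∈ 𝒜, AdjV G α b → α = α₁ ∨ α = α₂ := by
        intro α hα hc
        have : α ∈ F := Finset.mem_filter.2 ⟨hα, hc⟩
        rw [hFe] at this
        rcases Finset.mem_insert.1 this with h | h
        · exact Or.inl h
        · exact Or.inr (Finset.mem_singleton.1 h)
      set Nst := (B.erase b).filter (fun w => AdjV G α₁ w ∨ AdjV G α₂ w) with hNst
      have hN1 : (B.erase b).filter (fun w => AdjV G α₁ w) ⊆ Nst :=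
        Finset.monotone_filter_right _ (fun w _ h => Or.inl h) |>.trans (le_refl _)
      have hN2 : (B.erase b).filter (fun w => AdjV G α₂ w) ⊆ Nst :=
        Finset.monotone_filter_right _ (fun w _ h => Or.inr h) |>.trans (le_refl _)
      have hN1card : 2 ≤ ((B.erase b).filter (fun w => AdjV G α₁ w)).card := by
        have hsub : (B.filter (fun w => AdjV G α₁ w)).erase b ⊆
            (B.erase b).filter (fun w => AdjV G α₁ w) := by
          intro w hw
          have h1 := Finset.mem_erase.1 hw
          have h2 := Finset.mem_filter.1 h1.2
          exact Finset.mem_filter.2 ⟨Finset.mem_erase.2 ⟨h1.1, h2.1⟩, h2.2⟩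
        have h3 := Finset.card_le_card hsub
        have h4 : (B.filter (fun w => AdjV G α₁ w)).card - 1 ≤
            ((B.filter (fun w => AdjV G α₁ w)).erase b).card :=
          Finset.pred_card_le_card_erase
        have := hdegA α₁ hα₁
        omega
      have hN2card : 2 ≤ ((B.erase b).filter (fun w => AdjV G α₂ w)).card := by
        have hsub : (B.filter (fun w => AdjV G α₂ w)).erase b ⊆
            (B.erase b).filter (fun w => AdjV G α₂ w) := by
          intro w hw
          have h1 := Finset.mem_erase.1 hw
          have h2 := Finset.mem_filter.1 h1.2
          exact Finset.mem_filter.2 ⟨Finset.mem_erase.2 ⟨h1.1, h2.1⟩, h2.2⟩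
        have h3 := Finset.card_le_card hsub
        have h4 : (B.filter (fun w => AdjV G α₂ w)).card - 1 ≤
            ((B.filter (fun w => AdjV G α₂ w)).erase b).card :=
          Finset.pred_card_le_card_erase
        have := hdegA α₂ hα₂
        omega
      by_cases hNbig : 3 ≤ Nst.card
      · -- merge α₁, b, α₂ into one blob
        set μ := (α₁ ∪ {b}) ∪ α₂ with hμ
        set 𝒜' := insert μ ((𝒜.erase α₁).erase α₂) with h𝒜'
        have hbα : ∀ α ∈ 𝒜, b ∉ α := fun α hα hmem =>
          Finset.disjoint_left.1 (hAB α hα) hmem hb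
        have hμ𝒜 : ∀ γ ∈ 𝒜, μ ≠ γ := by
          intro γ hγ he
          exact hbα γ hγ (he ▸ (Finset.mem_union_left _ (Finset.mem_union_right _
            (Finset.mem_singleton_self b))))
        have hμnotmem : μ ∉ (𝒜.erase α₁).erase α₂ := fun h =>
          hμ𝒜 μ (Finset.mem_of_mem_erase (Finset.mem_of_mem_erase h)) rfl
        have hα₂e : α₂ ∈ 𝒜.erase α₁ := Finset.mem_erase.2 ⟨hα₁₂.symm, hα₂⟩
        have hcard𝒜' : 𝒜'.card = 𝒜.card - 1 := by
          rw [h𝒜', Finset.card_insert_of_notMem hμnotmem,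
            Finset.card_erase_of_mem hα₂e, Finset.card_erase_of_mem hα₁]
          have : 2 ≤ 𝒜.card := Finset.one_lt_card.2 ⟨α₁, hα₁, α₂, hα₂, hα₁₂⟩
          omega
        have hconnμ : Conn G μ := by
          apply conn_union
          · apply conn_union (good.conn α₁ hα₁) (conn_singleton b)
            obtain ⟨u, hu, hub⟩ := hadj₁
            exact ⟨u, hu, b, Finset.mem_singleton_self b, hub⟩
          · exact good.conn α₂ hα₂
          · obtain ⟨u, hu, hub⟩ := hadj₂
            exact ⟨b, Finset.mem_union_right _ (Finset.mem_singleton_self b), u, hu, hub.symm⟩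
        have good' : GoodSys G 𝒜' := by
          constructor
          · intro α hα
            rcases Finset.mem_insert.1 hα with rfl | hα
            · exact ⟨b, Finset.mem_union_left _ (Finset.mem_union_right _
                (Finset.mem_singleton_self b))⟩
            · exact good.ne α (Finset.mem_of_mem_erase (Finset.mem_of_mem_erase hα))
          · intro α hα
            rcases Finset.mem_insert.1 hα with rfl | hα
            · exact hconnμ
            · exact good.conn α (Finset.mem_of_mem_erase (Finset.mem_of_mem_erase hα))
          · intro α hα β hβ hne
            have key : ∀ γ, γ ∈ (𝒜.erase α₁).erase α₂ → Disjoint μ γ := by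
              intro γ hγ
              have hγ2 := Finset.mem_erase.1 hγ
              have hγ1 := Finset.mem_erase.1 hγ2.2
              rw [hμ, Finset.disjoint_union_left, Finset.disjoint_union_left]
              refine ⟨⟨good.disj α₁ hα₁ γ hγ1.2 (Ne.symm hγ1.1), ?_⟩,
                good.disj α₂ hα₂ γ hγ1.2 (Ne.symm hγ2.1)⟩
              rw [Finset.disjoint_singleton_left]
              exact hbα γ hγ1.2
            rcases Finset.mem_insert.1 hα with rfl | hα
            · rcases Finset.mem_insert.1 hβ with h | hβ
              · exact absurd h.symm hne
              · exact key β hβ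
            · rcases Finset.mem_insert.1 hβ with rfl | hβ
              · exact (key α hα).symm
              · exact good.disj α (Finset.mem_of_mem_erase (Finset.mem_of_mem_erase hα))
                  β (Finset.mem_of_mem_erase (Finset.mem_of_mem_erase hβ)) hne
        have hAB' : ∀ α ∈ 𝒜', Disjoint α (B.erase b) := by
          intro α hα
          rcases Finset.mem_insert.1 hα with rfl | hα
          · rw [hμ, Finset.disjoint_union_left, Finset.disjoint_union_left]
            refine ⟨⟨(hAB α₁ hα₁).mono_right (Finset.erase_subset _ _), ?_⟩,
              (hAB α₂ hα₂).mono_right (Finset.erase_subset _ _)⟩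
            rw [Finset.disjoint_singleton_left]
            exact Finset.notMem_erase b B
          · exact (hAB α (Finset.mem_of_mem_erase (Finset.mem_of_mem_erase hα))).mono_right
              (Finset.erase_subset _ _)
        have hdeg' : ∀ α ∈ 𝒜', 3 ≤ ((B.erase b).filter (fun w => AdjV G α w)).card := by
          intro α hα
          rcases Finset.mem_insert.1 hα with rfl | hα
          · refine le_trans hNbig (Finset.card_le_card ?_)
            intro w hw
            have hw' := Finset.mem_filter.1 hw
            refine Finset.mem_filter.2 ⟨hw'.1, ?_⟩
            rcases hw'.2 with h | h
            · exact h.mono_left (Finset.subset_union_left.trans Finset.subset_union_left)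
            · exact h.mono_left Finset.subset_union_right
          · have hα' := Finset.mem_of_mem_erase (Finset.mem_of_mem_erase hα)
            refine hpres α hα' (fun hc => ?_)
            rcases hcov α hα' hc with rfl | rfl
            · exact (Finset.mem_erase.1 (Finset.mem_of_mem_erase hα)).1 rfl
            · exact (Finset.mem_erase.1 hα).1 rfl
        refine ih (𝒜'.card + (B.erase b).card) ?_ 𝒜' (B.erase b) rfl good' hAB' hdeg' ?_ ?_
        · rw [hcard𝒜', Finset.card_erase_of_mem hb]; omega
        · rw [hcard𝒜', Finset.card_erase_of_mem hb]; omega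
        · rw [← Finset.card_pos, Finset.card_erase_of_mem hb]; omega
      · -- |N*| = 2 : the two common neighbours x, y
        push_neg at hNbig
        have hN1eq : (B.erase b).filter (fun w => AdjV G α₁ w) = Nst :=
          Finset.eq_of_subset_of_card_le hN1 (by omega)
        have hN2eq : (B.erase b).filter (fun w => AdjV G α₂ w) = Nst :=
          Finset.eq_of_subset_of_card_le hN2 (by omega)
        have hNcard : Nst.card = 2 := by
          have := Finset.card_le_card hN1
          omega
        obtain ⟨x, y, hxy, hNxy⟩ := Finset.card_eq_two.1 hNcard
        have hxN : x ∈ Nst := hNxy ▸ Finset.mem_insert_self _ _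
        have hyN : y ∈ Nst := hNxy ▸ Finset.mem_insert_of_mem (Finset.mem_singleton_self y)
        have hx1 : AdjV G α₁ x := (Finset.mem_filter.1 (hN1eq ▸ hxN)).2
        have hx2 : AdjV G α₂ x := (Finset.mem_filter.1 (hN2eq ▸ hxN)).2
        have hy1 : AdjV G α₁ y := (Finset.mem_filter.1 (hN1eq ▸ hyN)).2
        have hy2 : AdjV G α₂ y := (Finset.mem_filter.1 (hN2eq ▸ hyN)).2
        have hxB : x ∈ B.erase b := (Finset.mem_filter.1 (hN1eq ▸ hxN)).1
        have hyB : y ∈ B.erase b := (Finset.mem_filter.1 (hN1eq ▸ hyN)).1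
        -- the ambient set W
        set W : Set V := {v | (∃ γ ∈ (𝒜.erase α₁).erase α₂, v ∈ γ) ∨ v ∈ B.erase b}
          with hW
        have hWdisj : ∀ v ∈ W, v ∉ α₁ ∧ v ∉ α₂ ∧ v ≠ b := by
          intro v hv
          rcases hv with ⟨γ, hγ, hvγ⟩ | hv
          · have hγ2 := Finset.mem_erase.1 hγ
            have hγ1 := Finset.mem_erase.1 hγ2.2
            refine ⟨fun hc => ?_, fun hc => ?_, fun hc => ?_⟩
            · exact Finset.disjoint_left.1 (good.disj γ hγ1.2 α₁ hα₁ hγ1.1) hvγ hc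
            · exact Finset.disjoint_left.1 (good.disj γ hγ1.2 α₂ hα₂ hγ2.1) hvγ hc
            · subst hc
              exact Finset.disjoint_left.1 (hAB γ hγ1.2) hvγ hb
          · have hv' := Finset.mem_erase.1 hv
            refine ⟨fun hc => ?_, fun hc => ?_, hv'.1⟩
            · exact Finset.disjoint_left.1 (hAB α₁ hα₁) hc hv'.2
            · exact Finset.disjoint_left.1 (hAB α₂ hα₂) hc hv'.2
        by_cases hreach : ReachIn G W x y
        · -- a path from x to y avoiding α₁, α₂, b : direct K₄ minor
          obtain ⟨p0, hp0⟩ := hreach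
          have hxyne : y ≠ x := hxy.symm
          obtain ⟨u, hadjyu, q, hqe⟩ :=
            SimpleGraph.Walk.exists_eq_cons_of_ne hxyne p0.bypass.reverse
          have hrsup : ∀ w ∈ p0.bypass.reverse.support, w ∈ W := by
            intro w hw
            rw [SimpleGraph.Walk.support_reverse, List.mem_reverse] at hw
            exact hp0 w (SimpleGraph.Walk.support_bypass_subset _ hw)
          have hrnodup : p0.bypass.reverse.support.Nodup :=
            (p0.bypass_isPath.reverse).support_nodup
          have hsupcons : p0.bypass.reverse.support = y :: q.support := by
            rw [hqe, SimpleGraph.Walk.support_cons]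
          have hqsup : ∀ w ∈ q.support, w ∈ W := by
            intro w hw
            exact hrsup w (by rw [hsupcons]; exact List.mem_cons_of_mem _ hw)
          have hynotq : y ∉ q.support := by
            rw [hsupcons] at hrnodup
            exact (List.nodup_cons.1 hrnodup).1
          have hxq : x ∈ q.support.toFinset := by
            rw [List.mem_toFinset]
            exact SimpleGraph.Walk.end_mem_support q
          have huq : u ∈ q.support.toFinset := by
            rw [List.mem_toFinset]
            exact SimpleGraph.Walk.start_mem_support q
          -- the four branch sets
          have hdisjW : ∀ s : Finset V, (∀ v ∈ s, v ∈ W) →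
              Disjoint (α₁ ∪ {b}) s ∧ Disjoint α₂ s := by
            intro s hs
            constructor
            · rw [Finset.disjoint_union_left, Finset.disjoint_singleton_left]
              constructor
              · rw [Finset.disjoint_right]
                intro v hv
                exact (hWdisj v (hs v hv)).1
              · intro hbs
                exact (hWdisj b (hs b hbs)).2.2 rfl
            · rw [Finset.disjoint_right]
              intro v hv
              exact (hWdisj v (hs v hv)).2.1
          have hq_in_W : ∀ v ∈ q.support.toFinset, v ∈ W := by
            intro v hv
            exact hqsup v (List.mem_toFinset.1 hv)
          have hy_in_W : ∀ v ∈ ({y} : Finset V), v ∈ W := by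
            intro v hv
            rw [Finset.mem_singleton.1 hv]
            exact Or.inr hyB
          have hxmemB : x ∈ B := Finset.mem_of_mem_erase hxB
          have hymemB : y ∈ B := Finset.mem_of_mem_erase hyB
          apply minor4 (α₁ ∪ {b}) α₂ q.support.toFinset ({y} : Finset V)
          · apply conn_union (good.conn α₁ hα₁) (conn_singleton b)
            obtain ⟨w, hw, hwb⟩ := hadj₁
            exact ⟨w, hw, b, Finset.mem_singleton_self b, hwb⟩
          · exact good.conn α₂ hα₂
          · exact conn_support q
          · exact conn_singleton y
          · rw [Finset.disjoint_union_left, Finset.disjoint_singleton_left]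
            exact ⟨good.disj α₁ hα₁ α₂ hα₂ hα₁₂,
              fun hmem => Finset.disjoint_left.1 (hAB α₂ hα₂) hmem hb⟩
          · exact (hdisjW q.support.toFinset hq_in_W).1
          · exact (hdisjW {y} hy_in_W).1
          · exact (hdisjW q.support.toFinset hq_in_W).2
          · exact (hdisjW {y} hy_in_W).2
          · rw [Finset.disjoint_singleton_right, List.mem_toFinset]
            exact hynotq
          · obtain ⟨w, hw, hwb⟩ := hadj₂
            exact ⟨b, Finset.mem_union_right _ (Finset.mem_singleton_self b), w, hw, hwb.symm⟩
          · obtain ⟨w, hw, hwx⟩ := hx1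
            exact ⟨w, Finset.mem_union_left _ hw, x, hxq, hwx⟩
          · obtain ⟨w, hw, hwy⟩ := hy1
            exact ⟨w, Finset.mem_union_left _ hw, y, Finset.mem_singleton_self y, hwy⟩
          · obtain ⟨w, hw, hwx⟩ := hx2
            exact ⟨w, hw, x, hxq, hwx⟩
          · obtain ⟨w, hw, hwy⟩ := hy2
            exact ⟨w, hw, y, Finset.mem_singleton_self y, hwy⟩
          · exact ⟨u, huq, y, Finset.mem_singleton_self y, hadjyu.symm⟩
        · -- x and y are not connected within W : split and recurse
          set K : Set V := {v | ReachIn G W x v} with hK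
          have hxW : x ∈ W := Or.inr hxB
          have hxK : x ∈ K := ⟨SimpleGraph.Walk.nil, by
            intro w hw
            simp only [SimpleGraph.Walk.support_nil, List.mem_cons, List.not_mem_nil,
              or_false] at hw
            rw [hw]; exact hxW⟩
          have hyK : y ∉ K := hreach
          have hstep : ∀ u ∈ K, ∀ v, G.Adj u v → v ∈ W → v ∈ K :=
            fun u hu v hadj hv => ReachIn.step hu hadj hv
          -- a blob meeting K lies in K
          have hblob : ∀ γ ∈ (𝒜.erase α₁).erase α₂, (∃ v ∈ γ, v ∈ K) → ∀ v ∈ γ, v ∈ K := by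
            intro γ hγ ⟨v, hvγ, hvK⟩ w hwγ
            have hγ𝒜 := Finset.mem_of_mem_erase (Finset.mem_of_mem_erase hγ)
            obtain ⟨p, hp⟩ := (good.conn γ hγ𝒜).2 v hvγ w hwγ
            exact ReachIn.trans hvK ⟨p, fun z hz => Or.inl ⟨γ, hγ, hp z hz⟩⟩
          set 𝒜₀ := (𝒜.erase α₁).erase α₂ with h𝒜₀
          set 𝒜₁ := 𝒜₀.filter (fun γ => ∃ v ∈ γ, v ∈ K) with h𝒜₁
          set 𝒜₂ := 𝒜₀.filter (fun γ => ¬ ∃ v ∈ γ, v ∈ K) with h𝒜₂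
          set B₁ := (B.erase b).filter (fun w => w ∈ K) with hB₁
          set B₂ := (B.erase b).filter (fun w => w ∉ K) with hB₂
          have hcardsA : 𝒜₁.card + 𝒜₂.card = 𝒜₀.card :=
            Finset.card_filter_add_card_filter_not _
          have hcardsB : B₁.card + B₂.card = (B.erase b).card :=
            Finset.card_filter_add_card_filter_not _
          have hcard𝒜₀ : 𝒜₀.card = 𝒜.card - 2 := by
            rw [h𝒜₀, Finset.card_erase_of_mem (Finset.mem_erase.2 ⟨hα₁₂.symm, hα₂⟩),
              Finset.card_erase_of_mem hα₁]
            omega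
          have hcardB0 : (B.erase b).card = B.card - 1 := Finset.card_erase_of_mem hb
          have h𝒜2le : 2 ≤ 𝒜.card := Finset.one_lt_card.2 ⟨α₁, hα₁, α₂, hα₂, hα₁₂⟩
          -- degrees are preserved on each side
          have hdeg₁ : ∀ γ ∈ 𝒜₁, 3 ≤ (B₁.filter (fun w => AdjV G γ w)).card := by
            intro γ hγ
            have hγ' := Finset.mem_filter.1 hγ
            have hγ𝒜 := Finset.mem_of_mem_erase (Finset.mem_of_mem_erase hγ'.1)
            have hsub : B.filter (fun w => AdjV G γ w) ⊆ B₁.filter (fun w => AdjV G γ w) := by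
              intro w hw
              have hw' := Finset.mem_filter.1 hw
              have hwb : w ≠ b := by
                rintro rfl
                rcases hcov γ hγ𝒜 hw'.2 with rfl | rfl
                · exact (Finset.mem_erase.1 (Finset.mem_of_mem_erase hγ'.1)).1 rfl
                · exact (Finset.mem_erase.1 hγ'.1).1 rfl
              obtain ⟨z, hzγ, hzw⟩ := hw'.2
              have hzK : z ∈ K := hblob γ hγ'.1 hγ'.2 z hzγ
              have hwW : w ∈ W := Or.inr (Finset.mem_erase.2 ⟨hwb, hw'.1⟩)
              have hwK : w ∈ K := hstep z hzK w hzw hwW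
              exact Finset.mem_filter.2 ⟨Finset.mem_filter.2
                ⟨Finset.mem_erase.2 ⟨hwb, hw'.1⟩, hwK⟩, hw'.2⟩
            calc 3 ≤ (B.filter (fun w => AdjV G γ w)).card := hdegA γ hγ𝒜
            _ ≤ _ := Finset.card_le_card hsub
          have hdeg₂ : ∀ γ ∈ 𝒜₂, 3 ≤ (B₂.filter (fun w => AdjV G γ w)).card := by
            intro γ hγ
            have hγ' := Finset.mem_filter.1 hγ
            have hγ𝒜 := Finset.mem_of_mem_erase (Finset.mem_of_mem_erase hγ'.1)
            have hsub : B.filter (fun w => AdjV G γ w) ⊆ B₂.filter (fun w => AdjV G γ w) := by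
              intro w hw
              have hw' := Finset.mem_filter.1 hw
              have hwb : w ≠ b := by
                rintro rfl
                rcases hcov γ hγ𝒜 hw'.2 with rfl | rfl
                · exact (Finset.mem_erase.1 (Finset.mem_of_mem_erase hγ'.1)).1 rfl
                · exact (Finset.mem_erase.1 hγ'.1).1 rfl
              have hwK : w ∉ K := by
                intro hwK
                obtain ⟨z, hzγ, hzw⟩ := hw'.2
                have hzW : z ∈ W := Or.inl ⟨γ, hγ'.1, hzγ⟩
                have hzK : z ∈ K := hstep w hwK z hzw.symm hzW
                exact hγ'.2 ⟨z, hzγ, hzK⟩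
              exact Finset.mem_filter.2 ⟨Finset.mem_filter.2
                ⟨Finset.mem_erase.2 ⟨hwb, hw'.1⟩, hwK⟩, hw'.2⟩
            calc 3 ≤ (B.filter (fun w => AdjV G γ w)).card := hdegA γ hγ𝒜
            _ ≤ _ := Finset.card_le_card hsub
          have hxB₁ : x ∈ B₁ := Finset.mem_filter.2 ⟨hxB, hxK⟩
          have hyB₂ : y ∈ B₂ := Finset.mem_filter.2 ⟨hyB, hyK⟩
          have hB₁pos : 1 ≤ B₁.card := Finset.card_pos.2 ⟨x, hxB₁⟩
          have hB₂pos : 1 ≤ B₂.card := Finset.card_pos.2 ⟨y, hyB₂⟩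
          by_cases hsplit : B₁.card ≤ 𝒜₁.card
          · refine ih (𝒜₁.card + B₁.card) ?_ 𝒜₁ B₁ rfl
              (goodSys_subset (Finset.filter_subset _ _ |>.trans
                ((Finset.erase_subset _ _).trans (Finset.erase_subset _ _))) good)
              (fun γ hγ => ?_) hdeg₁ hsplit ⟨x, hxB₁⟩
            · have h1 : 𝒜₁.card ≤ 𝒜₀.card := Finset.card_le_card (Finset.filter_subset _ _)
              omega
            · have hγ𝒜 := Finset.mem_of_mem_erase (Finset.mem_of_mem_erase
                (Finset.mem_filter.1 hγ).1)
              exact (hAB γ hγ𝒜).mono_right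
                ((Finset.filter_subset _ _).trans (Finset.erase_subset _ _))
          · push_neg at hsplit
            refine ih (𝒜₂.card + B₂.card) ?_ 𝒜₂ B₂ rfl
              (goodSys_subset (Finset.filter_subset _ _ |>.trans
                ((Finset.erase_subset _ _).trans (Finset.erase_subset _ _))) good)
              (fun γ hγ => ?_) hdeg₂ (by omega) ⟨y, hyB₂⟩
            · have h1 : 𝒜₂.card ≤ 𝒜₀.card := Finset.card_le_card (Finset.filter_subset _ _)
              omega
            · have hγ𝒜 := Finset.mem_of_mem_erase (Finset.mem_of_mem_erase
                (Finset.mem_filter.1 hγ).1)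
              exact (hAB γ hγ𝒜).mono_right
                ((Finset.filter_subset _ _).trans (Finset.erase_subset _ _))

open scoped Classical in
lemma bip3 (G : SimpleGraph V) (n : ℕ) : ∀ (𝒜 : Finset (Finset V)) (B : Finset V),
    𝒜.card + B.card = n → GoodSys G 𝒜 → (∀ α ∈ 𝒜, Disjoint α B) →
    (∀ α ∈ 𝒜, 2 ≤ (B.filter (fun b => AdjV G α b)).card) →
    B.card ≤ 𝒜.card → B.Nonempty → HasCliqueMinor G 3 := by
  induction n using Nat.strong_induction_on with
  | _ n ih =>
  intro 𝒜 B hn good hAB hdegA hBA hBne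
  subst hn
  have hB1 : 1 ≤ B.card := Finset.card_pos.2 hBne
  have h𝒜ne : 𝒜.Nonempty := Finset.card_pos.1 (by omega)
  have hB2 : 2 ≤ B.card := by
    obtain ⟨α, hα⟩ := h𝒜ne
    calc 2 ≤ (B.filter (fun b => AdjV G α b)).card := hdegA α hα
    _ ≤ B.card := Finset.card_le_card (Finset.filter_subset _ _)
  by_cases hall : ∀ b ∈ B, 2 ≤ (𝒜.filter fun α => AdjV G α b).card
  · -- all B-degrees at least 2 : apply dirac3 to the combined system
    set 𝒮 := 𝒜 ∪ B.image (fun b => ({b} : Finset V)) with h𝒮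
    have hmemB : ∀ b ∈ B, ({b} : Finset V) ∈ 𝒮 := fun b hb =>
      Finset.mem_union_right _ (Finset.mem_image_of_mem _ hb)
    have hnotsing : ∀ α ∈ 𝒜, ∀ b ∈ B, α ≠ {b} := by
      intro α hα b hb he
      have : b ∈ α := he ▸ Finset.mem_singleton_self b
      exact Finset.disjoint_left.1 (hAB α hα) this hb
    have hdisjU : Disjoint 𝒜 (B.image (fun b => ({b} : Finset V))) := by
      rw [Finset.disjoint_left]
      intro α hα hα2
      obtain ⟨b, hb, he⟩ := Finset.mem_image.1 hα2
      exact hnotsing α hα b hb he.symm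
    have hcard𝒮 : 𝒮.card = 𝒜.card + B.card := by
      rw [h𝒮, Finset.card_union_of_disjoint hdisjU,
        Finset.card_image_of_injective _ Finset.singleton_injective]
    have good𝒮 : GoodSys G 𝒮 := by
      constructor
      · intro σ hσ
        rcases Finset.mem_union.1 hσ with hσ | hσ
        · exact good.ne σ hσ
        · obtain ⟨b, _, rfl⟩ := Finset.mem_image.1 hσ
          exact ⟨b, Finset.mem_singleton_self b⟩
      · intro σ hσ
        rcases Finset.mem_union.1 hσ with hσ | hσ
        · exact good.conn σ hσ
        · obtain ⟨b, _, rfl⟩ := Finset.mem_image.1 hσ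
          exact conn_singleton b
      · intro σ hσ τ hτ hne
        rcases Finset.mem_union.1 hσ with hσ | hσ <;> rcases Finset.mem_union.1 hτ with hτ | hτ
        · exact good.disj σ hσ τ hτ hne
        · obtain ⟨b, hb, rfl⟩ := Finset.mem_image.1 hτ
          rw [Finset.disjoint_singleton_right]
          exact fun hmem => Finset.disjoint_left.1 (hAB σ hσ) hmem hb
        · obtain ⟨b, hb, rfl⟩ := Finset.mem_image.1 hσ
          rw [Finset.disjoint_singleton_left]
          exact fun hmem => Finset.disjoint_left.1 (hAB τ hτ) hmem hb
        · obtain ⟨b, _, rfl⟩ := Finset.mem_image.1 hσ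
          obtain ⟨c, _, rfl⟩ := Finset.mem_image.1 hτ
          rw [Finset.disjoint_singleton_right, Finset.mem_singleton]
          exact fun he => hne (by rw [he])
    have hdeg𝒮 : ∀ σ ∈ 𝒮, 2 ≤ degS G 𝒮 σ := by
      intro σ hσ
      rcases Finset.mem_union.1 hσ with hσ | hσ
      · have : (B.filter (fun b => AdjV G σ b)).card ≤
            (𝒮.filter fun γ => γ ≠ σ ∧ AdjS G γ σ).card := by
          apply Finset.card_le_card_of_injOn (fun b => ({b} : Finset V))
          · intro b hb
            have hb' := Finset.mem_filter.1 hb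
            refine Finset.mem_filter.2 ⟨hmemB b hb'.1, Ne.symm (hnotsing σ hσ b hb'.1), ?_⟩
            obtain ⟨u, hu, hub⟩ := hb'.2
            exact ⟨b, Finset.mem_singleton_self b, u, hu, hub.symm⟩
          · intro b _ c _ he
            exact Finset.singleton_injective he
        have e : degS G 𝒮 σ = (𝒮.filter fun γ => γ ≠ σ ∧ AdjS G γ σ).card := rfl
        have := hdegA σ hσ
        omega
      · obtain ⟨b, hb, rfl⟩ := Finset.mem_image.1 hσ
        have : (𝒜.filter fun α => AdjV G α b).card ≤
            (𝒮.filter fun γ => γ ≠ ({b} : Finset V) ∧ AdjS G γ {b}).card := by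
          apply Finset.card_le_card
          intro α hα
          have hα' := Finset.mem_filter.1 hα
          refine Finset.mem_filter.2 ⟨Finset.mem_union_left _ hα'.1,
            hnotsing α hα'.1 b hb, ?_⟩
          exact (adjS_singleton_right (G := G)).2 hα'.2
        have e : degS G 𝒮 ({b} : Finset V) =
            (𝒮.filter fun γ => γ ≠ ({b} : Finset V) ∧ AdjS G γ {b}).card := rfl
        have := hall b hb
        omega
    apply dirac3 G 𝒮.card 𝒮 rfl good𝒮 (by omega)
    intro α hα β hβ hne h2 h3
    exact absurd h2 (by have := hdeg𝒮 α hα; omega)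
  · push_neg at hall
    obtain ⟨b, hb, hblt⟩ := hall
    set F := 𝒜.filter (fun α => AdjV G α b) with hF
    have hFsub : F ⊆ 𝒜 := Finset.filter_subset _ _
    have hFcase : F.card = 0 ∨ F.card = 1 := by omega
    have hpres : ∀ α ∈ 𝒜, ¬ AdjV G α b →
        2 ≤ ((B.erase b).filter (fun w => AdjV G α w)).card := by
      intro α hα hnadj
      have hsub : B.filter (fun w => AdjV G α w) ⊆
          (B.erase b).filter (fun w => AdjV G α w) := by
        intro w hw
        have hw' := Finset.mem_filter.1 hw
        refine Finset.mem_filter.2 ⟨Finset.mem_erase.2 ⟨?_, hw'.1⟩, hw'.2⟩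
        rintro rfl
        exact hnadj hw'.2
      calc 2 ≤ (B.filter (fun w => AdjV G α w)).card := hdegA α hα
      _ ≤ _ := Finset.card_le_card hsub
    rcases hFcase with hF0 | hF1
    · have hnone : ∀ α ∈ 𝒜, ¬ AdjV G α b := by
        intro α hα hc
        have : α ∈ F := Finset.mem_filter.2 ⟨hα, hc⟩
        rw [Finset.card_eq_zero.1 hF0] at this
        simp at this
      refine ih (𝒜.card + (B.erase b).card) ?_ 𝒜 (B.erase b) rfl good
        (fun α hα => (hAB α hα).mono_right (Finset.erase_subset _ _))
        (fun α hα => hpres α hα (hnone α hα)) ?_ ?_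
      · rw [Finset.card_erase_of_mem hb]; omega
      · rw [Finset.card_erase_of_mem hb]; omega
      · rw [← Finset.card_pos, Finset.card_erase_of_mem hb]; omega
    · obtain ⟨α₁, hα₁e⟩ := Finset.card_eq_one.1 hF1
      have hα₁F : α₁ ∈ F := hα₁e ▸ Finset.mem_singleton_self α₁
      have hα₁ : α₁ ∈ 𝒜 := hFsub hα₁F
      have hcov : ∀ α ∈ 𝒜, AdjV G α b → α = α₁ := by
        intro α hα hc
        have : α ∈ F := Finset.mem_filter.2 ⟨hα, hc⟩
        rw [hα₁e, Finset.mem_singleton] at this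
        exact this
      refine ih ((𝒜.erase α₁).card + (B.erase b).card) ?_ (𝒜.erase α₁) (B.erase b) rfl
        (goodSys_subset (Finset.erase_subset _ _) good)
        (fun α hα => ((hAB α (Finset.mem_of_mem_erase hα)).mono_right
          (Finset.erase_subset _ _)))
        (fun α hα => hpres α (Finset.mem_of_mem_erase hα) (fun hc =>
          (Finset.mem_erase.1 hα).1 (hcov α (Finset.mem_of_mem_erase hα) hc))) ?_ ?_
      · rw [Finset.card_erase_of_mem hb, Finset.card_erase_of_mem hα₁]; omega
      · rw [Finset.card_erase_of_mem hb, Finset.card_erase_of_mem hα₁]; omega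
      · rw [← Finset.card_pos, Finset.card_erase_of_mem hb]; omega

lemma minor1 (A0 : Finset V) (h0 : Conn G A0) : HasCliqueMinor G 1 := by
  refine ⟨fun _ => (A0 : Set V), fun _ => by simpa using h0.1, fun _ => conn_induce h0,
    ?_, ?_⟩
  · intro i j hij
    exact absurd (Subsingleton.elim i j) hij
  · intro i j hij
    exact absurd (Subsingleton.elim i j) hij

lemma minor2 (A0 A1 : Finset V) (h0 : Conn G A0) (h1 : Conn G A1)
    (d01 : Disjoint A0 A1) (a01 : AdjS G A0 A1) : HasCliqueMinor G 2 := by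
  have adjS_coe : ∀ {s t : Finset V}, AdjS G s t →
      ∃ u ∈ (↑s : Set V), ∃ v ∈ (↑t : Set V), G.Adj u v := by
    rintro s t ⟨u, hu, v, hv, h⟩; exact ⟨u, hu, v, hv, h⟩
  refine ⟨![(A0 : Set V), A1], ?_, ?_, ?_, ?_⟩
  · intro i
    fin_cases i <;>
      simp only [Fin.isValue, Matrix.cons_val_zero, Matrix.cons_val_one, Matrix.head_cons,
        Fin.mk_zero, Fin.mk_one, Finset.coe_nonempty] <;>
      first
        | exact h0.1 | exact h1.1
  · intro i
    fin_cases i <;>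
      simp only [Fin.isValue, Matrix.cons_val_zero, Matrix.cons_val_one, Matrix.head_cons,
        Fin.mk_zero, Fin.mk_one] <;>
      first
        | exact conn_induce h0 | exact conn_induce h1
  · intro i j hij
    fin_cases i <;> fin_cases j <;>
      simp only [Fin.isValue, Matrix.cons_val_zero, Matrix.cons_val_one, Matrix.head_cons,
        Fin.mk_zero, Fin.mk_one, Finset.disjoint_coe] <;>
      first
        | exact absurd rfl hij
        | assumption
        | exact d01.symm
  · intro i j hij
    fin_cases i <;> fin_cases j <;>
      simp only [Fin.isValue, Matrix.cons_val_zero, Matrix.cons_val_one, Matrix.head_cons,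
        Fin.mk_zero, Fin.mk_one] <;>
      first
        | exact absurd rfl hij
        | exact adjS_coe a01
        | exact adjS_coe a01.symm

end Aux

/-- For `t ∈ {1,2,3,4}`: if `G` admits a bipartition `(A,B)` with `|A| ≥ |B| > 0`
such that every vertex in `A` has degree at least `t - 1`, then `G` has a `K_t` minor. -/
theorem smallCases {V : Type} [Fintype V] (t : ℕ) (ht : t ∈ ({1, 2, 3, 4} : Set ℕ))
    (G : SimpleGraph V) (A B : Set V)
    (hbip : IsBipartitionWith G A B) (hcard : B.ncard ≤ A.ncard) (hB : B.Nonempty)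
    (hdeg : ∀ a ∈ A, t - 1 ≤ (G.neighborSet a).ncard) :
    HasCliqueMinor G t := by
  classical
  obtain ⟨b0, hb0⟩ := hB
  have hBpos : 0 < B.ncard := (Set.ncard_pos (Set.toFinite B)).2 ⟨b0, hb0⟩
  have hAne : A.Nonempty := (Set.ncard_pos (Set.toFinite A)).1 (by omega)
  have hsub : ∀ a ∈ A, G.neighborSet a ⊆ B := by
    intro a ha v hv
    exact (hbip.2.2 hv).1 ha
  have hnAB : ∀ a ∈ A, a ∉ B := fun a ha hab => hbip.2.1 a ⟨ha, hab⟩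
  -- the singleton system and the B-side finset
  set 𝒜 := (Set.toFinite A).toFinset.image (fun a => ({a} : Finset V)) with h𝒜
  set B' := (Set.toFinite B).toFinset with hB'
  have hmem𝒜 : ∀ a ∈ A, ({a} : Finset V) ∈ 𝒜 := fun a ha =>
    Finset.mem_image_of_mem _ ((Set.Finite.mem_toFinset _).2 ha)
  have good : GoodSys G 𝒜 := by
    constructor
    · intro α hα
      obtain ⟨a, _, rfl⟩ := Finset.mem_image.1 hα
      exact ⟨a, Finset.mem_singleton_self a⟩
    · intro α hα
      obtain ⟨a, _, rfl⟩ := Finset.mem_image.1 hα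
      exact conn_singleton a
    · intro α hα β hβ hne
      obtain ⟨a, _, rfl⟩ := Finset.mem_image.1 hα
      obtain ⟨c, _, rfl⟩ := Finset.mem_image.1 hβ
      rw [Finset.disjoint_singleton_right, Finset.mem_singleton]
      exact fun he => hne (by rw [he])
  have hAB : ∀ α ∈ 𝒜, Disjoint α B' := by
    intro α hα
    obtain ⟨a, ha, rfl⟩ := Finset.mem_image.1 hα
    rw [Finset.disjoint_singleton_left, Set.Finite.mem_toFinset]
    exact hnAB a ((Set.Finite.mem_toFinset _).1 ha)
  have hcard𝒜 : 𝒜.card = A.ncard := by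
    rw [h𝒜, Finset.card_image_of_injective _ Finset.singleton_injective,
      ← Set.ncard_eq_toFinset_card A (Set.toFinite A)]
  have hcardB' : B'.card = B.ncard := by
    rw [hB', ← Set.ncard_eq_toFinset_card B (Set.toFinite B)]
  have hBA' : B'.card ≤ 𝒜.card := by rw [hcard𝒜, hcardB']; exact hcard
  have hB'ne : B'.Nonempty := ⟨b0, (Set.Finite.mem_toFinset _).2 hb0⟩
  have hdegF : ∀ a ∈ A, t - 1 ≤ (B'.filter (fun w => AdjV G ({a} : Finset V) w)).card := by
    intro a ha
    have hsub2 : (Set.toFinite (G.neighborSet a)).toFinset ⊆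
        B'.filter (fun w => AdjV G ({a} : Finset V) w) := by
      intro v hv
      have hv' := (Set.Finite.mem_toFinset _).1 hv
      refine Finset.mem_filter.2 ⟨(Set.Finite.mem_toFinset _).2 (hsub a ha hv'), ?_⟩
      exact ⟨a, Finset.mem_singleton_self a, hv'⟩
    calc t - 1 ≤ (G.neighborSet a).ncard := hdeg a ha
    _ = (Set.toFinite (G.neighborSet a)).toFinset.card :=
        Set.ncard_eq_toFinset_card _ (Set.toFinite _)
    _ ≤ _ := Finset.card_le_card hsub2
  have hdeg𝒜 : ∀ α ∈ 𝒜, t - 1 ≤ (B'.filter (fun w => AdjV G α w)).card := by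
    intro α hα
    obtain ⟨a, ha, rfl⟩ := Finset.mem_image.1 hα
    exact hdegF a ((Set.Finite.mem_toFinset _).1 ha)
  simp only [Set.mem_insert_iff, Set.mem_singleton_iff] at ht
  obtain ⟨a0, ha0⟩ := hAne
  rcases ht with rfl | rfl | rfl | rfl
  · exact minor1 {b0} (conn_singleton b0)
  · -- t = 2
    have h1 : 1 ≤ (G.neighborSet a0).ncard := hdeg a0 ha0
    have : (G.neighborSet a0).Nonempty := (Set.ncard_pos (Set.toFinite _)).1 (by omega)
    obtain ⟨v, hv⟩ := this
    have hadj : G.Adj a0 v := hv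
    refine minor2 {a0} {v} (conn_singleton a0) (conn_singleton v) ?_ ?_
    · rw [Finset.disjoint_singleton_left, Finset.mem_singleton]
      exact fun he => G.loopless.irrefl a0 (he ▸ hadj)
    · exact ⟨a0, Finset.mem_singleton_self a0, v, Finset.mem_singleton_self v, hadj⟩
  · exact bip3 G (𝒜.card + B'.card) 𝒜 B' rfl good hAB (fun α hα => hdeg𝒜 α hα) hBA' hB'ne
  · exact bip4 G (𝒜.card + B'.card) 𝒜 B' rfl good hAB (fun α hα => hdeg𝒜 α hα) hBA' hB'ne
end

section
/- If a finite simple graph G admits a bipartition (A,B) with |A| ≥ |B| > 0 such that every vertex in A has degree at least three, then G has a K_4 minor. -/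
set_option linter.unusedSectionVars false
set_option maxHeartbeats 1000000


open SimpleGraph Function

section Helpers

variable {V : Type} [Fintype V]

-- extraction lemmas
lemma pair_extract {s : Set V} (h : s.ncard = 2) :
    ∃ a b : V, a ≠ b ∧ s = {a, b} := Set.ncard_eq_two.mp h

lemma third_extract {s : Set V} {a b : V} (h : s.ncard = 3) (ha : a ∈ s) (hb : b ∈ s)
    (hab : a ≠ b) : ∃ c, c ≠ a ∧ c ≠ b ∧ s = {a, b, c} := by
  have hsub : ({a, b} : Set V) ⊆ s := by
    intro x hx; rcases hx with rfl | rfl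
    · exact ha
    · exact hb
  have hd : (s \ {a, b}).ncard = 1 := by
    rw [Set.ncard_diff hsub (Set.toFinite _), Set.ncard_pair hab, h]
  obtain ⟨c, hc⟩ := Set.ncard_eq_one.mp hd
  have hcm : c ∈ s \ ({a, b} : Set V) := hc ▸ rfl
  refine ⟨c, ?_, ?_, ?_⟩
  · rintro rfl; exact hcm.2 (Or.inl rfl)
  · rintro rfl; exact hcm.2 (Or.inr rfl)
  · apply Set.Subset.antisymm
    · intro x hx
      by_cases hxa : x = a
      · exact Or.inl hxa
      by_cases hxb : x = b
      · exact Or.inr (Or.inl hxb)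
      have : x ∈ s \ ({a, b} : Set V) := ⟨hx, by rintro (rfl | rfl) <;> simp_all⟩
      rw [hc] at this
      exact Or.inr (Or.inr this)
    · rintro x (rfl | rfl | rfl)
      · exact ha
      · exact hb
      · exact hcm.1

-- induced connectivity helpers
lemma induce_connected_singleton (G : SimpleGraph V) (v : V) :
    (G.induce ({v} : Set V)).Connected := by
  rw [SimpleGraph.connected_iff]
  refine ⟨?_, ⟨⟨v, rfl⟩⟩⟩
  intro a b
  have : a = b := Subtype.ext (a.2.trans b.2.symm)
  exact this ▸ SimpleGraph.Reachable.refl _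

lemma induce_connected_pair (G : SimpleGraph V) {u v : V} (h : G.Adj u v) :
    (G.induce ({u, v} : Set V)).Connected := by
  rw [SimpleGraph.connected_iff]
  refine ⟨?_, ⟨⟨u, Or.inl rfl⟩⟩⟩
  have hadj : (G.induce ({u, v} : Set V)).Adj ⟨u, Or.inl rfl⟩ ⟨v, Or.inr rfl⟩ := h
  intro a b
  have key : ∀ c : ({u, v} : Set V),
      (G.induce ({u, v} : Set V)).Reachable c ⟨u, Or.inl rfl⟩ := by
    intro c
    rcases c.2 with hc | hc
    · rw [show c = ⟨u, Or.inl rfl⟩ from Subtype.ext hc]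
    · rw [show c = ⟨v, Or.inr rfl⟩ from Subtype.ext hc]
      exact hadj.symm.reachable
  exact (key a).trans (key b).symm

lemma induce_connected_triple (G : SimpleGraph V) {u v w : V} (h1 : G.Adj u v)
    (h2 : G.Adj v w) :
    (G.induce ({u, v, w} : Set V)).Connected := by
  rw [SimpleGraph.connected_iff]
  refine ⟨?_, ⟨⟨v, Or.inr (Or.inl rfl)⟩⟩⟩
  have hadj1 : (G.induce ({u, v, w} : Set V)).Adj ⟨u, Or.inl rfl⟩
      ⟨v, Or.inr (Or.inl rfl)⟩ := h1
  have hadj2 : (G.induce ({u, v, w} : Set V)).Adj ⟨v, Or.inr (Or.inl rfl)⟩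
      ⟨w, Or.inr (Or.inr rfl)⟩ := h2
  intro a b
  have key : ∀ c : ({u, v, w} : Set V),
      (G.induce ({u, v, w} : Set V)).Reachable c ⟨v, Or.inr (Or.inl rfl)⟩ := by
    intro c
    rcases c.2 with hc | hc | hc
    · rw [show c = ⟨u, Or.inl rfl⟩ from Subtype.ext hc]
      exact hadj1.reachable
    · rw [show c = ⟨v, Or.inr (Or.inl rfl)⟩ from Subtype.ext hc]
    · rw [show c = ⟨w, Or.inr (Or.inr rfl)⟩ from Subtype.ext hc]
      exact hadj2.symm.reachable
  exact (key a).trans (key b).symm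

end Helpers

section Reach

variable {V : Type} [Fintype V]

/-- The set of vertices reachable from `x` within `s`. -/
def reachSet (G : SimpleGraph V) (x : V) (s : Set V) : Set V :=
  {v | ∃ (hx : x ∈ s) (hv : v ∈ s), (G.induce s).Reachable ⟨x, hx⟩ ⟨v, hv⟩}

lemma reachSet_subset (G : SimpleGraph V) (x : V) (s : Set V) : reachSet G x s ⊆ s := by
  rintro v ⟨hx, hv, _⟩; exact hv

lemma mem_reachSet_self (G : SimpleGraph V) {x : V} {s : Set V} (hx : x ∈ s) :
    x ∈ reachSet G x s := ⟨hx, hx, SimpleGraph.Reachable.refl _⟩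

lemma reachSet_closed (G : SimpleGraph V) {x v w : V} {s : Set V}
    (hv : v ∈ reachSet G x s) (hadj : G.Adj v w) (hw : w ∈ s) : w ∈ reachSet G x s := by
  obtain ⟨hx, hvs, hr⟩ := hv
  exact ⟨hx, hw, hr.trans (SimpleGraph.Adj.reachable (by exact hadj :
    (G.induce s).Adj ⟨v, hvs⟩ ⟨w, hw⟩))⟩

lemma reachSet_walk_lift (G : SimpleGraph V) (x : V) (s : Set V) :
    ∀ {a b : ↥s} (_ : (G.induce s).Walk a b) (_ : (a : V) ∈ reachSet G x s),
      ∃ (ha : (a : V) ∈ reachSet G x s) (hb : (b : V) ∈ reachSet G x s),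
        (G.induce (reachSet G x s)).Reachable ⟨a, ha⟩ ⟨b, hb⟩ := by
  intro a b p
  induction p with
  | nil => intro ha; exact ⟨ha, ha, SimpleGraph.Reachable.refl _⟩
  | @cons u c b h p ih =>
    intro ha
    have hadj : G.Adj (u : V) (c : V) := h
    have hc : (c : V) ∈ reachSet G x s := reachSet_closed G ha hadj c.2
    obtain ⟨hc', hb, hr⟩ := ih hc
    refine ⟨ha, hb, SimpleGraph.Reachable.trans ?_ hr⟩
    exact SimpleGraph.Adj.reachable (by exact hadj :
      (G.induce (reachSet G x s)).Adj ⟨u, ha⟩ ⟨c, hc'⟩)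

lemma reachSet_connected (G : SimpleGraph V) {x : V} {s : Set V} (hx : x ∈ s) :
    (G.induce (reachSet G x s)).Connected := by
  rw [SimpleGraph.connected_iff]
  have hxr := mem_reachSet_self (G := G) hx
  refine ⟨?_, ⟨⟨x, hxr⟩⟩⟩
  have key : ∀ c : ↥(reachSet G x s),
      (G.induce (reachSet G x s)).Reachable ⟨x, hxr⟩ c := by
    rintro ⟨v, hv⟩
    obtain ⟨hx', hvs, hr⟩ := hv
    obtain ⟨p⟩ := hr
    obtain ⟨ha, hb, hr'⟩ := reachSet_walk_lift G x s p (mem_reachSet_self G hx')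
    exact hr'
  intro a b
  exact (key a).symm.trans (key b)

/-- in a connected induced set with two distinct vertices, each vertex has a neighbor -/
lemma exists_adj_of_induce_connected {G : SimpleGraph V} {s : Set V}
    (hconn : (G.induce s).Connected) {u v : V} (hu : u ∈ s) (hv : v ∈ s) (huv : u ≠ v) :
    ∃ w, G.Adj u w := by
  obtain ⟨p⟩ := hconn.preconnected ⟨u, hu⟩ ⟨v, hv⟩
  cases p with
  | nil => exact absurd rfl huv
  | cons h q => exact ⟨_, h⟩

end Reach

section MinorTools

variable {V : Type} [Fintype V]

lemma adj_ex_symm {G : SimpleGraph V} {s t : Set V}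
    (h : ∃ u ∈ s, ∃ v ∈ t, G.Adj u v) : ∃ u ∈ t, ∃ v ∈ s, G.Adj u v := by
  obtain ⟨u, hu, v, hv, h⟩ := h
  exact ⟨v, hv, u, hu, h.symm⟩

lemma build_K4 {G : SimpleGraph V} (C0 C1 C2 C3 : Set V)
    (hne0 : C0.Nonempty) (hne1 : C1.Nonempty) (hne2 : C2.Nonempty) (hne3 : C3.Nonempty)
    (hc0 : (G.induce C0).Connected) (hc1 : (G.induce C1).Connected)
    (hc2 : (G.induce C2).Connected) (hc3 : (G.induce C3).Connected)
    (hd01 : Disjoint C0 C1) (hd02 : Disjoint C0 C2) (hd03 : Disjoint C0 C3)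
    (hd12 : Disjoint C1 C2) (hd13 : Disjoint C1 C3) (hd23 : Disjoint C2 C3)
    (he01 : ∃ u ∈ C0, ∃ v ∈ C1, G.Adj u v) (he02 : ∃ u ∈ C0, ∃ v ∈ C2, G.Adj u v)
    (he03 : ∃ u ∈ C0, ∃ v ∈ C3, G.Adj u v) (he12 : ∃ u ∈ C1, ∃ v ∈ C2, G.Adj u v)
    (he13 : ∃ u ∈ C1, ∃ v ∈ C3, G.Adj u v) (he23 : ∃ u ∈ C2, ∃ v ∈ C3, G.Adj u v) :
    HasCliqueMinor G 4 := by
  refine ⟨![C0, C1, C2, C3], ?_, ?_, ?_, ?_⟩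
  · intro i; fin_cases i <;> assumption
  · intro i; fin_cases i <;> assumption
  · intro i j hij
    fin_cases i <;> fin_cases j <;>
      first
        | exact absurd rfl hij
        | assumption
        | (try exact hd01.symm) <;> (try exact hd02.symm) <;> (try exact hd03.symm) <;>
          (try exact hd12.symm) <;> (try exact hd13.symm) <;> exact hd23.symm
  · intro i j hij
    fin_cases i <;> fin_cases j <;>
      first
        | exact absurd rfl hij
        | assumption
        | (try exact adj_ex_symm he01) <;> (try exact adj_ex_symm he02) <;>
          (try exact adj_ex_symm he03) <;> (try exact adj_ex_symm he12) <;>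
          (try exact adj_ex_symm he13) <;> exact adj_ex_symm he23

lemma minor_mono {G G' : SimpleGraph V} (h : G' ≤ G) (hm : HasCliqueMinor G' 4) :
    HasCliqueMinor G 4 := by
  obtain ⟨f, hne, hconn, hdisj, hadj⟩ := hm
  refine ⟨f, hne, ?_, hdisj, ?_⟩
  · intro i
    refine (hconn i).mono ?_
    intro a b hab
    exact h hab
  · intro i j hij
    obtain ⟨u, hu, v, hv, huv⟩ := hadj i j hij
    exact ⟨u, hu, v, hv, h huv⟩

lemma contract_lift {G G' : SimpleGraph V} {S : Set V} {v0 : V} (hv0 : v0 ∈ S)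
    (hconn : (G.induce S).Connected)
    (h2 : ∀ p q, G'.Adj p q → p ∈ S → p = v0)
    (h3 : ∀ q, G'.Adj v0 q → ∃ s ∈ S, G.Adj s q)
    (h4 : ∀ p q, G'.Adj p q → p ∉ S → q ∉ S → G.Adj p q)
    (hm : HasCliqueMinor G' 4) : HasCliqueMinor G 4 := by
  classical
  obtain ⟨f, hne, hcon, hdisj, hadj⟩ := hm
  -- branch sets contain no S-vertex other than v0
  have step0 : ∀ i p, p ∈ f i → p ∈ S → p = v0 := by
    intro i p hp hpS
    by_contra hne'
    have hiso : ∀ q, ¬ G'.Adj p q := by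
      intro q hq
      exact hne' (h2 p q hq hpS)
    obtain ⟨j, hj⟩ := exists_ne i
    obtain ⟨u, hu, w, hw, huw⟩ := hadj i j (Ne.symm hj)
    by_cases hup : u = p
    · exact hiso w (hup ▸ huw)
    · -- u and p both in f i, distinct; connectivity yields an edge at p
      obtain ⟨q, hq⟩ := exists_adj_of_induce_connected (hcon i) hp hu (fun h => hup h.symm)
      exact hiso q hq
  by_cases hex : ∃ i, v0 ∈ f i
  · obtain ⟨i0, hi0⟩ := hex
    set F : Fin 4 → Set V := fun i => if i = i0 then f i0 ∪ S else f i with hF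
    have hFi0 : F i0 = f i0 ∪ S := by simp [hF]
    have hFne : ∀ i, i ≠ i0 → F i = f i := by intro i h; simp [hF, h]
    have hFnotS : ∀ i, i ≠ i0 → ∀ p, p ∈ f i → p ∉ S := by
      intro i hi p hp hpS
      have := step0 i p hp hpS
      subst this
      exact (hdisj hi).le_bot ⟨hp, hi0⟩ |>.elim
    refine ⟨F, ?_, ?_, ?_, ?_⟩
    · intro i
      by_cases h : i = i0
      · rw [h, hFi0]
        exact (hne i0).mono Set.subset_union_left
      · rw [hFne i h]
        exact hne i
    · intro i
      by_cases h : i = i0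
      · subst h
        rw [hFi0, SimpleGraph.connected_iff]
        constructor
        · -- preconnected : everything reaches v0
          have hv0T : v0 ∈ f i ∪ S := Or.inr hv0
          have claimA : ∀ (s : V) (hs : s ∈ S),
              (G.induce (f i ∪ S)).Reachable ⟨s, Or.inr hs⟩ ⟨v0, hv0T⟩ := by
            intro s hs
            have hr := hconn.preconnected ⟨s, hs⟩ ⟨v0, hv0⟩
            have hmap : ∀ (a b : ↥S), (G.induce S).Reachable a b →
                (G.induce (f i ∪ S)).Reachable ⟨a, Or.inr a.2⟩ ⟨b, Or.inr b.2⟩ := by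
              intro a b hab
              let φ : G.induce S →g G.induce (f i ∪ S) :=
                ⟨fun x => ⟨x, Or.inr x.2⟩, fun hadj => hadj⟩
              exact hab.map φ
            exact hmap _ _ hr
          have claimB : ∀ (u : V) (hu : u ∈ f i),
              (G.induce (f i ∪ S)).Reachable ⟨u, Or.inl hu⟩ ⟨v0, hv0T⟩ := by
            intro u hu
            have hr := (hcon i).preconnected ⟨u, hu⟩ ⟨v0, hi0⟩
            obtain ⟨p⟩ := hr
            -- lift the walk
            have lift : ∀ {a b : ↥(f i)} (_ : (G'.induce (f i)).Walk a b),
                (G.induce (f i ∪ S)).Reachable ⟨a, Or.inl a.2⟩ ⟨b, Or.inl b.2⟩ := by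
              intro a b p
              induction p with
              | nil => exact SimpleGraph.Reachable.refl _
              | @cons a c b h p ih =>
                have hadj' : G'.Adj (a : V) (c : V) := h
                refine SimpleGraph.Reachable.trans ?_ ih
                by_cases haS : (a : V) ∈ S
                · -- a = v0
                  have hav0 : (a : V) = v0 := h2 _ _ hadj' haS
                  obtain ⟨s, hsS, hsc⟩ := h3 (c : V) (hav0 ▸ hadj')
                  have r1 : (G.induce (f i ∪ S)).Reachable ⟨a, Or.inl a.2⟩
                      ⟨s, Or.inr hsS⟩ := by
                    have := claimA s hsS
                    have h2' : (⟨a, Or.inl a.2⟩ : ↥(f i ∪ S)) = ⟨v0, hv0T⟩ :=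
                      Subtype.ext hav0
                    rw [h2']
                    exact this.symm
                  have r2 : (G.induce (f i ∪ S)).Adj ⟨s, Or.inr hsS⟩ ⟨c, Or.inl c.2⟩ :=
                    hsc
                  exact r1.trans r2.reachable
                · by_cases hcS : (c : V) ∈ S
                  · have hcv0 : (c : V) = v0 := h2 _ _ hadj'.symm hcS
                    obtain ⟨s, hsS, hsa⟩ := h3 (a : V) (hcv0 ▸ hadj'.symm)
                    have r1 : (G.induce (f i ∪ S)).Adj ⟨a, Or.inl a.2⟩
                        ⟨s, Or.inr hsS⟩ := hsa.symm
                    have r2 : (G.induce (f i ∪ S)).Reachable ⟨s, Or.inr hsS⟩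
                        ⟨c, Or.inl c.2⟩ := by
                      have := claimA s hsS
                      have h2' : (⟨c, Or.inl c.2⟩ : ↥(f i ∪ S)) = ⟨v0, hv0T⟩ :=
                        Subtype.ext hcv0
                      rw [h2']
                      exact this
                    exact r1.reachable.trans r2
                  · have : G.Adj (a : V) (c : V) := h4 _ _ hadj' haS hcS
                    exact (SimpleGraph.Adj.reachable
                      (by exact this : (G.induce (f i ∪ S)).Adj ⟨a, Or.inl a.2⟩
                        ⟨c, Or.inl c.2⟩))
            exact lift p
          intro a b
          have key : ∀ c : ↥(f i ∪ S), (G.induce (f i ∪ S)).Reachable c ⟨v0, hv0T⟩ := by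
            rintro ⟨c, hc | hc⟩
            · exact claimB c hc
            · exact claimA c hc
          exact (key a).trans (key b).symm
        · exact ⟨⟨v0, Or.inr hv0⟩⟩
      · rw [hFne i h]
        refine (hcon i).mono ?_
        rintro ⟨a, ha⟩ ⟨b, hb⟩ hab
        have hab' : G'.Adj a b := hab
        exact h4 a b hab' (hFnotS i h a ha) (hFnotS i h b hb)
    · intro i j hij
      have base := hdisj hij
      by_cases hi : i = i0 <;> by_cases hj : j = i0
      · exact absurd (hi.trans hj.symm) hij
      · subst hi
        rw [hFi0, hFne j hj, Set.disjoint_union_left]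
        refine ⟨base, ?_⟩
        rw [Set.disjoint_left]
        intro p hpS hpj
        have := step0 j p hpj hpS
        subst this
        exact (hdisj hij).le_bot ⟨hi0, hpj⟩
      · subst hj
        rw [hFi0, hFne i hi, Set.disjoint_union_right]
        refine ⟨base, ?_⟩
        rw [Set.disjoint_right]
        intro p hpS hpi
        have := step0 i p hpi hpS
        subst this
        exact (hdisj hij).le_bot ⟨hpi, hi0⟩
      · rw [hFne i hi, hFne j hj]
        exact base
    · intro i j hij
      obtain ⟨u, hu, w, hw, huw⟩ := hadj i j hij
      have hsubF : ∀ k, f k ⊆ F k := by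
        intro k
        by_cases h : k = i0
        · rw [h, hFi0]
          exact Set.subset_union_left.trans (le_refl _)
        · rw [hFne k h]
      by_cases huS : u ∈ S
      · -- u = v0 and i = i0
        have huv0 : u = v0 := step0 i u hu huS
        subst huv0
        have hii0 : i = i0 := by
          by_contra hne'
          exact (hFnotS i hne' u hu) huS
        obtain ⟨s, hsS, hsw⟩ := h3 w huw
        refine ⟨s, ?_, w, hsubF j hw, hsw⟩
        · rw [hii0, hFi0]; right; exact hsS
      · by_cases hwS : w ∈ S
        · have hwv0 : w = v0 := step0 j w hw hwS
          subst hwv0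
          have hjj0 : j = i0 := by
            by_contra hne'
            exact (hFnotS j hne' w hw) hwS
          obtain ⟨s, hsS, hsu⟩ := h3 u huw.symm
          refine ⟨u, hsubF i hu, s, ?_, hsu.symm⟩
          rw [hjj0, hFi0]; right; exact hsS
        · exact ⟨u, hsubF i hu, w, hsubF j hw, h4 u w huw huS hwS⟩
  · -- v0 in no branch set: f itself works
    push_neg at hex
    have hnotS : ∀ i p, p ∈ f i → p ∉ S := by
      intro i p hp hpS
      have := step0 i p hp hpS
      subst this
      exact hex i hp
    refine ⟨f, hne, ?_, hdisj, ?_⟩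
    · intro i
      refine (hcon i).mono ?_
      rintro ⟨a, ha⟩ ⟨b, hb⟩ hab
      exact h4 a b hab (hnotS i a ha) (hnotS i b hb)
    · intro i j hij
      obtain ⟨u, hu, w, hw, huw⟩ := hadj i j hij
      exact ⟨u, hu, w, hw, h4 u w huw (hnotS i u hu) (hnotS j w hw)⟩

end MinorTools

section Ops

variable {V : Type} [Fintype V]

/-- spanning restriction of `G` to `s` (vertices outside `s` become isolated) -/
def restrict (G : SimpleGraph V) (s : Set V) : SimpleGraph V where
  Adj u v := G.Adj u v ∧ u ∈ s ∧ v ∈ s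
  symm := by constructor; rintro u v ⟨h, hu, hv⟩; exact ⟨h.symm, hv, hu⟩
  loopless := by constructor; rintro v ⟨h, _⟩; exact G.loopless.irrefl v h

lemma restrict_le (G : SimpleGraph V) (s : Set V) : restrict G s ≤ G := by
  rintro u v ⟨h, _⟩; exact h

lemma restrict_neighborSet (G : SimpleGraph V) {s : Set V} {v : V} (hv : v ∈ s) :
    (restrict G s).neighborSet v = G.neighborSet v ∩ s := by
  ext w
  simp only [SimpleGraph.mem_neighborSet, Set.mem_inter_iff]
  exact ⟨fun ⟨h, _, hw⟩ => ⟨h, hw⟩, fun ⟨h, hw⟩ => ⟨h, hv, hw⟩⟩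

lemma restrict_neighborSet_empty (G : SimpleGraph V) {s : Set V} {v : V} (hv : v ∉ s) :
    (restrict G s).neighborSet v = ∅ := by
  ext w
  simp only [SimpleGraph.mem_neighborSet, Set.mem_empty_iff_false, iff_false]
  rintro ⟨_, hv', _⟩; exact hv hv'

lemma restrict_support_subset (G : SimpleGraph V) (s : Set V) :
    (restrict G s).support ⊆ G.support ∩ s := by
  intro v hv
  rw [SimpleGraph.mem_support] at hv
  obtain ⟨w, hw, hv', _⟩ := hv
  exact ⟨(SimpleGraph.mem_support _).mpr ⟨w, hw⟩, hv'⟩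

/-- contract the edge `u v`, merging `v` into `u` -/
def contractEdge (G : SimpleGraph V) (u v : V) : SimpleGraph V where
  Adj p q := p ≠ q ∧ p ≠ v ∧ q ≠ v ∧
    (G.Adj p q ∨ (p = u ∧ G.Adj v q) ∨ (q = u ∧ G.Adj v p))
  symm := by
    constructor
    rintro p q ⟨h1, h2, h3, h4⟩
    refine ⟨h1.symm, h3, h2, ?_⟩
    rcases h4 with h | ⟨rfl, h⟩ | ⟨rfl, h⟩
    · exact Or.inl h.symm
    · exact Or.inr (Or.inr ⟨rfl, h⟩)
    · exact Or.inr (Or.inl ⟨rfl, h⟩)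
  loopless := by constructor; rintro p ⟨h1, _⟩; exact h1 rfl

lemma contractEdge_lift {G : SimpleGraph V} {u v : V} (huv : G.Adj u v)
    (hm : HasCliqueMinor (contractEdge G u v) 4) : HasCliqueMinor G 4 := by
  refine contract_lift (S := {u, v}) (v0 := u) (Or.inl rfl)
    (induce_connected_pair G huv) ?_ ?_ ?_ hm
  · rintro p q ⟨h1, h2, h3, h4⟩ (rfl | rfl)
    · rfl
    · exact absurd rfl h2
  · rintro q ⟨h1, h2, h3, h4⟩
    rcases h4 with h | ⟨_, h⟩ | ⟨rfl, h⟩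
    · exact ⟨u, Or.inl rfl, h⟩
    · exact ⟨v, Or.inr rfl, h⟩
    · exact absurd rfl h1
  · rintro p q ⟨h1, h2, h3, h4⟩ hp hq
    rcases h4 with h | ⟨rfl, h⟩ | ⟨rfl, h⟩
    · exact h
    · exact absurd (Or.inl rfl) hp
    · exact absurd (Or.inl rfl) hq

lemma contractEdge_nbr_merged {G : SimpleGraph V} {u v : V} (huv : G.Adj u v) :
    (contractEdge G u v).neighborSet u = (G.neighborSet u ∪ G.neighborSet v) \ {u, v} := by
  ext w
  simp only [SimpleGraph.mem_neighborSet, Set.mem_diff, Set.mem_union, Set.mem_insert_iff,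
    Set.mem_singleton_iff]
  constructor
  · rintro ⟨h1, h2, h3, h4⟩
    refine ⟨?_, ?_⟩
    · rcases h4 with h | ⟨_, h⟩ | ⟨rfl, h⟩
      · exact Or.inl h
      · exact Or.inr h
      · exact absurd rfl h1
    · push_neg
      exact ⟨fun hw => h1 hw.symm, h3⟩
  · rintro ⟨h4, hw⟩
    push_neg at hw
    refine ⟨fun h => hw.1 h.symm, huv.ne, hw.2, ?_⟩
    rcases h4 with h | h
    · exact Or.inl h
    · exact Or.inr (Or.inl ⟨rfl, h⟩)

lemma contractEdge_nbr_of_adj {G : SimpleGraph V} {u v w : V} (huv : u ≠ v)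
    (hw1 : w ≠ u) (hw2 : w ≠ v)
    (hadj : G.Adj v w) (hnadj : u ∉ G.neighborSet w) :
    (contractEdge G u v).neighborSet w = insert u (G.neighborSet w \ {v}) := by
  ext q
  simp only [SimpleGraph.mem_neighborSet, Set.mem_insert_iff, Set.mem_diff,
    Set.mem_singleton_iff]
  constructor
  · rintro ⟨h1, h2, h3, h4⟩
    rcases h4 with h | ⟨rfl, h⟩ | ⟨rfl, h⟩
    · exact Or.inr ⟨h, h3⟩
    · exact absurd rfl hw1
    · exact Or.inl rfl
  · rintro (rfl | ⟨h, hq⟩)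
    · exact ⟨hw1, hw2, huv, Or.inr (Or.inr ⟨rfl, hadj⟩)⟩
    · refine ⟨fun he => G.loopless.irrefl w (he ▸ h), hw2, hq, Or.inl h⟩

lemma contractEdge_nbr_of_nadj {G : SimpleGraph V} {u v w : V} (hw1 : w ≠ u) (hw2 : w ≠ v)
    (hnadj : ¬ G.Adj v w) :
    (contractEdge G u v).neighborSet w = G.neighborSet w \ {v} := by
  ext q
  simp only [SimpleGraph.mem_neighborSet, Set.mem_diff, Set.mem_singleton_iff]
  constructor
  · rintro ⟨h1, h2, h3, h4⟩
    rcases h4 with h | ⟨rfl, h⟩ | ⟨rfl, h⟩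
    · exact ⟨h, h3⟩
    · exact absurd rfl hw1
    · exact absurd h hnadj
  · rintro ⟨h, hq⟩
    exact ⟨fun he => G.loopless.irrefl w (he ▸ h), hw2, hq, Or.inl h⟩

lemma contractEdge_nbr_v {G : SimpleGraph V} {u v : V} :
    (contractEdge G u v).neighborSet v = ∅ := by
  ext q
  simp only [SimpleGraph.mem_neighborSet, Set.mem_empty_iff_false, iff_false]
  rintro ⟨_, h2, _⟩
  exact h2 rfl

lemma contractEdge_support_subset {G : SimpleGraph V} {u v : V} (huv : G.Adj u v) :
    (contractEdge G u v).support ⊆ G.support \ {v} := by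
  intro w hw
  rw [SimpleGraph.mem_support] at hw
  obtain ⟨q, h1, h2, h3, h4⟩ := hw
  refine ⟨(SimpleGraph.mem_support _).mpr ?_, h2⟩
  rcases h4 with h | ⟨rfl, h⟩ | ⟨rfl, h⟩
  · exact ⟨q, h⟩
  · exact ⟨v, huv⟩
  · exact ⟨v, h.symm⟩

/-- delete a single (unordered) edge -/
def delEdge (G : SimpleGraph V) (u v : V) : SimpleGraph V where
  Adj p q := G.Adj p q ∧ ¬(p = u ∧ q = v) ∧ ¬(p = v ∧ q = u)
  symm := by constructor; rintro p q ⟨h, h1, h2⟩; exact ⟨h.symm, fun hx => h2 ⟨hx.2, hx.1⟩,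
    fun hx => h1 ⟨hx.2, hx.1⟩⟩
  loopless := by constructor; rintro p ⟨h, _⟩; exact G.loopless.irrefl p h

lemma delEdge_le (G : SimpleGraph V) (u v : V) : delEdge G u v ≤ G := by
  rintro p q ⟨h, _⟩; exact h

lemma delEdge_nbr_u {G : SimpleGraph V} {u v : V} :
    (delEdge G u v).neighborSet u = G.neighborSet u \ {v} := by
  ext q
  simp only [SimpleGraph.mem_neighborSet, Set.mem_diff, Set.mem_singleton_iff]
  constructor
  · rintro ⟨h, h1, h2⟩
    exact ⟨h, fun hq => h1 ⟨rfl, hq⟩⟩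
  · rintro ⟨h, hq⟩
    refine ⟨h, fun hx => hq hx.2, fun hx => ?_⟩
    exact G.loopless.irrefl v (hx.1 ▸ (hx.2 ▸ h))

lemma delEdge_nbr_other {G : SimpleGraph V} {u v w : V} (hw1 : w ≠ u) (hw2 : w ≠ v) :
    (delEdge G u v).neighborSet w = G.neighborSet w := by
  ext q
  simp only [SimpleGraph.mem_neighborSet]
  constructor
  · rintro ⟨h, _⟩; exact h
  · intro h
    exact ⟨h, fun hx => hw1 hx.1, fun hx => hw2 hx.1⟩

lemma delEdge_edgeSet {G : SimpleGraph V} {u v : V} (h : G.Adj u v) :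
    (delEdge G u v).edgeSet.ncard < G.edgeSet.ncard := by
  apply Set.ncard_lt_ncard _ (Set.toFinite _)
  constructor
  · exact SimpleGraph.edgeSet_mono (delEdge_le G u v)
  · intro hsub
    have hm : s(u, v) ∈ G.edgeSet := (SimpleGraph.mem_edgeSet _).mpr h
    have := hsub hm
    rw [SimpleGraph.mem_edgeSet] at this
    exact this.2.1 ⟨rfl, rfl⟩

end Ops

section Contract2

variable {V : Type} [Fintype V]

/-- contract the path `a1 - b - a2` to the single vertex `a1` -/
def contract2 (G : SimpleGraph V) (a1 b a2 : V) : SimpleGraph V where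
  Adj u w := u ≠ w ∧ u ≠ b ∧ u ≠ a2 ∧ w ≠ b ∧ w ≠ a2 ∧
    (G.Adj u w ∨ (u = a1 ∧ G.Adj a2 w) ∨ (w = a1 ∧ G.Adj a2 u))
  symm := by
    constructor
    rintro u w ⟨h1, h2, h3, h4, h5, h6⟩
    refine ⟨h1.symm, h4, h5, h2, h3, ?_⟩
    rcases h6 with h | ⟨rfl, h⟩ | ⟨rfl, h⟩
    · exact Or.inl h.symm
    · exact Or.inr (Or.inr ⟨rfl, h⟩)
    · exact Or.inr (Or.inl ⟨rfl, h⟩)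
  loopless := by constructor; rintro u ⟨h1, _⟩; exact h1 rfl

lemma contract2_lift {G : SimpleGraph V} {a1 b a2 : V} (h1 : G.Adj a1 b) (h2 : G.Adj b a2)
    (hm : HasCliqueMinor (contract2 G a1 b a2) 4) : HasCliqueMinor G 4 := by
  refine contract_lift (S := {a1, b, a2}) (v0 := a1) (Or.inl rfl)
    (induce_connected_triple G h1 h2) ?_ ?_ ?_ hm
  · rintro p q ⟨g1, g2, g3, g4, g5, g6⟩ (rfl | rfl | rfl)
    · rfl
    · exact absurd rfl g2
    · exact absurd rfl g3
  · rintro q ⟨g1, g2, g3, g4, g5, g6⟩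
    rcases g6 with h | ⟨_, h⟩ | ⟨rfl, h⟩
    · exact ⟨a1, Or.inl rfl, h⟩
    · exact ⟨a2, Or.inr (Or.inr rfl), h⟩
    · exact absurd rfl g1
  · rintro p q ⟨g1, g2, g3, g4, g5, g6⟩ hp hq
    rcases g6 with h | ⟨rfl, h⟩ | ⟨rfl, h⟩
    · exact h
    · exact absurd (Or.inl rfl) hp
    · exact absurd (Or.inl rfl) hq

lemma contract2_nbr_other {G : SimpleGraph V} {a1 b a2 w : V} (hw1 : w ≠ a1) (hwb : w ≠ b)
    (hw2 : w ≠ a2) (hnadj : ¬ G.Adj a2 w) :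
    (contract2 G a1 b a2).neighborSet w = G.neighborSet w \ {b, a2} := by
  ext q
  simp only [SimpleGraph.mem_neighborSet, Set.mem_diff, Set.mem_insert_iff,
    Set.mem_singleton_iff]
  constructor
  · rintro ⟨g1, g2, g3, g4, g5, g6⟩
    rcases g6 with h | ⟨rfl, h⟩ | ⟨rfl, h⟩
    · exact ⟨h, by push_neg; exact ⟨g4, g5⟩⟩
    · exact absurd rfl hw1
    · exact absurd h hnadj
  · rintro ⟨h, hq⟩
    push_neg at hq
    exact ⟨h.ne, hwb, hw2, hq.1, hq.2, Or.inl h⟩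

lemma contract2_nbr_merged {G : SimpleGraph V} {a1 b a2 : V} (h1 : a1 ≠ b) (h2 : a1 ≠ a2)
    (hnadj : ¬ G.Adj a2 a1) :
    (contract2 G a1 b a2).neighborSet a1 =
      (G.neighborSet a1 ∪ G.neighborSet a2) \ {b, a2, a1} := by
  ext q
  simp only [SimpleGraph.mem_neighborSet, Set.mem_diff, Set.mem_union, Set.mem_insert_iff,
    Set.mem_singleton_iff]
  constructor
  · rintro ⟨g1, g2, g3, g4, g5, g6⟩
    refine ⟨?_, by push_neg; exact ⟨g4, g5, fun hq => g1 hq.symm⟩⟩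
    rcases g6 with h | ⟨_, h⟩ | ⟨rfl, h⟩
    · exact Or.inl h
    · exact Or.inr h
    · exact absurd rfl g1
  · rintro ⟨h, hq⟩
    push_neg at hq
    refine ⟨fun he => hq.2.2 he.symm, h1, h2, hq.1, hq.2.1, ?_⟩
    rcases h with h | h
    · exact Or.inl h
    · exact Or.inr (Or.inl ⟨rfl, h⟩)

end Contract2

section DegHelpers

variable {V : Type} [Fintype V]

lemma contractEdge_nbr_both {G : SimpleGraph V} {u v w : V} (huv : u ≠ v) (hw1 : w ≠ u)
    (hw2 : w ≠ v) (hav : G.Adj v w) (hau : G.Adj u w) :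
    (contractEdge G u v).neighborSet w = G.neighborSet w \ {v} := by
  ext q
  simp only [SimpleGraph.mem_neighborSet, Set.mem_diff, Set.mem_singleton_iff]
  constructor
  · rintro ⟨h1, h2, h3, h4⟩
    rcases h4 with h | ⟨rfl, h⟩ | ⟨rfl, h⟩
    · exact ⟨h, h3⟩
    · exact absurd rfl hw1
    · exact ⟨hau.symm, huv⟩
  · rintro ⟨h, hq⟩
    exact ⟨fun he => G.loopless.irrefl w (he ▸ h), hw2, hq, Or.inl h⟩

lemma contractEdge_deg_other {G : SimpleGraph V} {u v w : V} (hw1 : w ≠ u) (hw2 : w ≠ v)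
    (hnadj : ¬ G.Adj v w) :
    ((contractEdge G u v).neighborSet w).ncard = (G.neighborSet w).ncard := by
  rw [contractEdge_nbr_of_nadj hw1 hw2 hnadj]
  congr 1
  exact Set.diff_singleton_eq_self
    (fun hv => hnadj ((SimpleGraph.mem_neighborSet _ _ _).mp hv).symm)

lemma contractEdge_deg_adj {G : SimpleGraph V} {u v w : V} (huv : u ≠ v) (hw1 : w ≠ u)
    (hw2 : w ≠ v) (hav : G.Adj v w) (hnau : ¬ G.Adj u w) :
    ((contractEdge G u v).neighborSet w).ncard = (G.neighborSet w).ncard := by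
  have hnau' : u ∉ G.neighborSet w := by
    intro h
    exact hnau ((SimpleGraph.mem_neighborSet _ _ _).mp h).symm
  rw [contractEdge_nbr_of_adj huv hw1 hw2 hav hnau']
  rw [Set.ncard_insert_of_notMem (fun hc => hnau' hc.1) (Set.toFinite _)]
  rw [Set.ncard_diff_singleton_of_mem ((SimpleGraph.mem_neighborSet _ _ _).mpr hav.symm)]
  have hpos : 0 < (G.neighborSet w).ncard := by
    rw [Set.ncard_pos (Set.toFinite _)]
    exact ⟨v, hav.symm⟩
  omega

lemma adj_deg_pos {G : SimpleGraph V} {u v : V} (h : G.Adj u v) :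
    0 < (G.neighborSet u).ncard := by
  rw [Set.ncard_pos (Set.toFinite _)]
  exact ⟨v, h⟩

lemma mem_support_of_adj {G : SimpleGraph V} {u v : V} (h : G.Adj u v) : u ∈ G.support :=
  (SimpleGraph.mem_support _).mpr ⟨v, h⟩

end DegHelpers

section TriTwo

variable {V : Type} [Fintype V]

/-- triangle with two coincident "third neighbours": either a K4 minor, or a reduction -/
lemma tri_two {G : SimpleGraph V} {x y z x' z' : V}
    (hxy : G.Adj x y) (hxz : G.Adj x z) (hyz : G.Adj y z)
    (hNx : G.neighborSet x = {y, z, x'}) (hNy : G.neighborSet y = {x, z, x'})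
    (hNz : G.neighborSet z = {x, y, z'})
    (hne : x' ≠ z') (hx'y : x' ≠ y) (hx'z : x' ≠ z) (hz'x : z' ≠ x) (hz'y : z' ≠ y)
    (hall : ∀ v, (G.neighborSet v).ncard = 0 ∨ 3 ≤ (G.neighborSet v).ncard)
    (hcube : ∀ p q, G.Adj p q → (G.neighborSet p).ncard = 3) :
    HasCliqueMinor G 4 ∨ ∃ (G' : SimpleGraph V) (y0 : V),
      G'.support.ncard < G.support.ncard ∧
      (∀ v, v ≠ y0 → (G'.neighborSet v).ncard = 0 ∨ 3 ≤ (G'.neighborSet v).ncard) ∧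
      (∃ v, v ≠ y0 ∧ 3 ≤ (G'.neighborSet v).ncard) ∧
      (HasCliqueMinor G' 4 → HasCliqueMinor G 4) := by
  classical
  have haxx' : G.Adj x x' := (SimpleGraph.mem_neighborSet _ _ _).mp
    (by rw [hNx]; exact Or.inr (Or.inr rfl))
  have hayx' : G.Adj y x' := (SimpleGraph.mem_neighborSet _ _ _).mp
    (by rw [hNy]; exact Or.inr (Or.inr rfl))
  have hazz' : G.Adj z z' := (SimpleGraph.mem_neighborSet _ _ _).mp
    (by rw [hNz]; exact Or.inr (Or.inr rfl))
  have hx'x : x' ≠ x := fun h => G.loopless.irrefl x (h ▸ haxx')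
  have hz'z : z' ≠ z := fun h => G.loopless.irrefl z (h ▸ hazz')
  set s : Set V := {v | v ≠ x ∧ v ≠ y ∧ v ≠ z} with hs
  have hx's : x' ∈ s := ⟨hx'x, hx'y, hx'z⟩
  set W : Set V := reachSet G x' s with hW
  have hx'W : x' ∈ W := mem_reachSet_self G hx's
  have hWs : W ⊆ s := reachSet_subset G x' s
  by_cases hzW : z' ∈ W
  · -- K4 minor directly
    left
    refine build_K4 {x} {y} {z} W (Set.singleton_nonempty x) (Set.singleton_nonempty y)
      (Set.singleton_nonempty z) ⟨x', hx'W⟩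
      (induce_connected_singleton G x) (induce_connected_singleton G y)
      (induce_connected_singleton G z) (reachSet_connected G hx's)
      ?_ ?_ ?_ ?_ ?_ ?_ ?_ ?_ ?_ ?_ ?_ ?_
    · exact Set.disjoint_singleton.mpr hxy.ne
    · exact Set.disjoint_singleton.mpr hxz.ne
    · rw [Set.disjoint_left]; rintro a rfl ha; exact (hWs ha).1 rfl
    · exact Set.disjoint_singleton.mpr hyz.ne
    · rw [Set.disjoint_left]; rintro a rfl ha; exact (hWs ha).2.1 rfl
    · rw [Set.disjoint_left]; rintro a rfl ha; exact (hWs ha).2.2 rfl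
    · exact ⟨x, rfl, y, rfl, hxy⟩
    · exact ⟨x, rfl, z, rfl, hxz⟩
    · exact ⟨x, rfl, x', hx'W, haxx'⟩
    · exact ⟨y, rfl, z, rfl, hyz⟩
    · exact ⟨y, rfl, x', hx'W, hayx'⟩
    · exact ⟨z, rfl, z', hzW, hazz'⟩
  · -- reduction to the component W
    right
    have hclosed : ∀ v, v ∈ W → v ≠ x' → G.neighborSet v ⊆ W := by
      intro v hv hvx' q hq
      have hadj : G.Adj v q := (SimpleGraph.mem_neighborSet _ _ _).mp hq
      have hqs : q ∈ s := by
        refine ⟨fun hqx => ?_, fun hqy => ?_, fun hqz => ?_⟩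
        · have hm : v ∈ G.neighborSet x := (SimpleGraph.mem_neighborSet _ _ _).mpr
            (hqx ▸ hadj.symm)
          rw [hNx] at hm
          rcases hm with h | h | h
          · exact (hWs hv).2.1 h
          · exact (hWs hv).2.2 h
          · exact hvx' h
        · have hm : v ∈ G.neighborSet y := (SimpleGraph.mem_neighborSet _ _ _).mpr
            (hqy ▸ hadj.symm)
          rw [hNy] at hm
          rcases hm with h | h | h
          · exact (hWs hv).1 h
          · exact (hWs hv).2.2 h
          · exact hvx' h
        · have hm : v ∈ G.neighborSet z := (SimpleGraph.mem_neighborSet _ _ _).mpr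
            (hqz ▸ hadj.symm)
          rw [hNz] at hm
          rcases hm with h | h | h
          · exact (hWs hv).1 h
          · exact (hWs hv).2.1 h
          · exact hzW (h ▸ hv)
      exact reachSet_closed G hv hadj hqs
    -- third neighbour of x'
    have hdx' : (G.neighborSet x').ncard = 3 := hcube x' x haxx'.symm
    obtain ⟨t, htx, hty, hNx'⟩ := third_extract hdx'
      ((SimpleGraph.mem_neighborSet _ _ _).mpr haxx'.symm)
      ((SimpleGraph.mem_neighborSet _ _ _).mpr hayx'.symm) hxy.ne
    have hatx' : G.Adj x' t := (SimpleGraph.mem_neighborSet _ _ _).mp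
      (by rw [hNx']; exact Or.inr (Or.inr rfl))
    have htz : t ≠ z := by
      intro htz'
      have : x' ∈ G.neighborSet z := (SimpleGraph.mem_neighborSet _ _ _).mpr
        (htz' ▸ hatx'.symm)
      rw [hNz] at this
      rcases this with h | h | h
      · exact hx'x h
      · exact hx'y h
      · exact hne h
    have hts : t ∈ s := ⟨htx, hty, htz⟩
    have htW : t ∈ W := reachSet_closed G hx'W hatx' hts
    have htx' : t ≠ x' := fun h => G.loopless.irrefl x' (h ▸ hatx')
    refine ⟨restrict G W, x', ?_, ?_, ?_, ?_⟩
    · -- support decreases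
      apply Set.ncard_lt_ncard _ (Set.toFinite _)
      constructor
      · refine (restrict_support_subset G W).trans ?_
        exact Set.inter_subset_left
      · intro hsub
        have hx_sup : x ∈ G.support := mem_support_of_adj hxy
        have := (restrict_support_subset G W) (hsub hx_sup)
        exact (hWs this.2).1 rfl
    · intro v hv
      by_cases hvW : v ∈ W
      · rw [restrict_neighborSet G hvW, Set.inter_eq_self_of_subset_left (hclosed v hvW hv)]
        exact hall v
      · rw [restrict_neighborSet_empty G hvW]
        left; exact Set.ncard_empty V
    · refine ⟨t, htx', ?_⟩
      rw [restrict_neighborSet G htW, Set.inter_eq_self_of_subset_left (hclosed t htW htx')]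
      rw [hcube t x' hatx'.symm]
    · exact fun h => minor_mono (restrict_le G W) h

end TriTwo

section SmallUtil

variable {V : Type} [Fintype V]

lemma support_subset_of_le {G G' : SimpleGraph V} (h : G' ≤ G) : G'.support ⊆ G.support := by
  intro v hv
  rw [SimpleGraph.mem_support] at hv ⊢
  obtain ⟨w, hw⟩ := hv
  exact ⟨w, h hw⟩

lemma ncard_lt_of_subset_diff {s t : Set V} {a : V} (h : s ⊆ t \ {a}) (ha : a ∈ t) :
    s.ncard < t.ncard := by
  have h1 : s.ncard ≤ (t \ {a}).ncard := Set.ncard_le_ncard h (Set.toFinite _)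
  have h2 : (t \ {a}).ncard = t.ncard - 1 := Set.ncard_diff_singleton_of_mem ha
  have h3 : 0 < t.ncard := by
    rw [Set.ncard_pos (Set.toFinite _)]
    exact ⟨a, ha⟩
  omega

lemma deg3_of_ne {G : SimpleGraph V} {x0 v w : V}
    (hdeg : ∀ v, v ≠ x0 → (G.neighborSet v).ncard = 0 ∨ 3 ≤ (G.neighborSet v).ncard)
    (hv : v ≠ x0) (hadj : G.Adj v w) : 3 ≤ (G.neighborSet v).ncard := by
  rcases hdeg v hv with h | h
  · have := adj_deg_pos hadj
    omega
  · exact h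

lemma deg3_all {G : SimpleGraph V} {v w : V}
    (hall : ∀ v, (G.neighborSet v).ncard = 0 ∨ 3 ≤ (G.neighborSet v).ncard)
    (hadj : G.Adj v w) : 3 ≤ (G.neighborSet v).ncard := by
  rcases hall v with h | h
  · have := adj_deg_pos hadj
    omega
  · exact h

lemma ncard_triple {a b c : V} (hab : a ≠ b) (hac : a ≠ c) (hbc : b ≠ c) :
    ({a, b, c} : Set V).ncard = 3 := by
  rw [Set.ncard_insert_of_notMem (by simp [hab, hac]) (Set.toFinite _),
    Set.ncard_insert_of_notMem (by simp [hbc]) (Set.toFinite _), Set.ncard_singleton]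

end SmallUtil

section Steps

variable {V : Type} [Fintype V]

/-- `G'` with exception `y0` is a valid smaller instance whose K4 minor lifts to `G` -/
def Red (G G' : SimpleGraph V) (y0 : V) : Prop :=
  (∀ v, v ≠ y0 → (G'.neighborSet v).ncard = 0 ∨ 3 ≤ (G'.neighborSet v).ncard) ∧
  (∃ v, v ≠ y0 ∧ 3 ≤ (G'.neighborSet v).ncard) ∧
  (HasCliqueMinor G' 4 → HasCliqueMinor G 4)

lemma beta_step {G : SimpleGraph V} {x0 : V}
    (hdeg : ∀ v, v ≠ x0 → (G.neighborSet v).ncard = 0 ∨ 3 ≤ (G.neighborSet v).ncard)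
    (hdx : (G.neighborSet x0).ncard = 1) :
    ∃ (G' : SimpleGraph V) (y0 : V), Red G G' y0 ∧
      G'.support.ncard < G.support.ncard := by
  classical
  obtain ⟨w, hNx0⟩ := Set.ncard_eq_one.mp hdx
  have haxw : G.Adj x0 w := (SimpleGraph.mem_neighborSet _ _ _).mp (by rw [hNx0]; rfl)
  have hwx0 : w ≠ x0 := haxw.ne'
  have hdw : 3 ≤ (G.neighborSet w).ncard := deg3_of_ne hdeg hwx0 haxw.symm
  have hnadjx0 : ∀ v, v ≠ w → ¬ G.Adj x0 v := by
    intro v hv h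
    have : v ∈ G.neighborSet x0 := (SimpleGraph.mem_neighborSet _ _ _).mpr h
    rw [hNx0] at this
    exact hv this
  refine ⟨contractEdge G w x0, w, ⟨?_, ?_, contractEdge_lift haxw.symm⟩, ?_⟩
  · intro v hv
    by_cases hvx : v = x0
    · subst hvx
      rw [contractEdge_nbr_v]
      left; exact Set.ncard_empty V
    · rw [contractEdge_deg_other hv hvx (hnadjx0 v hv)]
      exact hdeg v hvx
  · -- pick a neighbour of w other than x0
    have hpos : 0 < (G.neighborSet w \ {x0}).ncard := by
      rw [Set.ncard_diff_singleton_of_mem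
        ((SimpleGraph.mem_neighborSet _ _ _).mpr haxw.symm)]
      omega
    obtain ⟨r, hr⟩ := (Set.ncard_pos (Set.toFinite _)).mp hpos
    have harw : G.Adj w r := (SimpleGraph.mem_neighborSet _ _ _).mp hr.1
    have hrx0 : r ≠ x0 := hr.2
    have hrw : r ≠ w := harw.ne'
    refine ⟨r, hrw, ?_⟩
    rw [contractEdge_deg_other hrw hrx0 (hnadjx0 r hrw)]
    exact deg3_of_ne hdeg hrx0 harw.symm
  · refine ncard_lt_of_subset_diff (contractEdge_support_subset haxw.symm) ?_
    exact mem_support_of_adj haxw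

end Steps

section GammaStep

variable {V : Type} [Fintype V]

/-- merge `x0` (degree 2, nbrs `w1 w2` adjacent, `deg w1 ≥ 4`) into `w1` -/
lemma gamma_merge {G : SimpleGraph V} {x0 w1 w2 : V}
    (hdeg : ∀ v, v ≠ x0 → (G.neighborSet v).ncard = 0 ∨ 3 ≤ (G.neighborSet v).ncard)
    (hNx0 : G.neighborSet x0 = {w1, w2}) (hw12 : w1 ≠ w2) (hadj : G.Adj w1 w2)
    (h4 : 4 ≤ (G.neighborSet w1).ncard) :
    ∃ (G' : SimpleGraph V) (y0 : V), Red G G' y0 ∧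
      G'.support.ncard < G.support.ncard := by
  classical
  have ha1 : G.Adj x0 w1 := (SimpleGraph.mem_neighborSet _ _ _).mp
    (by rw [hNx0]; exact Or.inl rfl)
  have ha2 : G.Adj x0 w2 := (SimpleGraph.mem_neighborSet _ _ _).mp
    (by rw [hNx0]; exact Or.inr rfl)
  have hw1x0 : w1 ≠ x0 := ha1.ne'
  have hw2x0 : w2 ≠ x0 := ha2.ne'
  have hnadjx0 : ∀ v, v ≠ w1 → v ≠ w2 → ¬ G.Adj x0 v := by
    intro v h1 h2 h
    have : v ∈ G.neighborSet x0 := (SimpleGraph.mem_neighborSet _ _ _).mpr h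
    rw [hNx0] at this
    rcases this with h' | h'
    · exact h1 h'
    · exact h2 h'
  have heq : (G.neighborSet w1 ∪ G.neighborSet x0) \ {w1, x0} =
      G.neighborSet w1 \ {x0} := by
    ext q
    simp only [Set.mem_diff, Set.mem_union, Set.mem_insert_iff, Set.mem_singleton_iff,
      not_or]
    constructor
    · rintro ⟨hq | hq, hq1, hq2⟩
      · exact ⟨hq, hq2⟩
      · rw [hNx0] at hq
        rcases hq with rfl | rfl
        · exact absurd rfl hq1
        · exact ⟨(SimpleGraph.mem_neighborSet _ _ _).mpr hadj, hq2⟩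
    · rintro ⟨hq, hq2⟩
      exact ⟨Or.inl hq, ((SimpleGraph.mem_neighborSet _ _ _).mp hq).ne', hq2⟩
  have hdw1' : ((contractEdge G w1 x0).neighborSet w1).ncard =
      (G.neighborSet w1).ncard - 1 := by
    rw [contractEdge_nbr_merged ha1.symm, heq,
      Set.ncard_diff_singleton_of_mem ((SimpleGraph.mem_neighborSet _ _ _).mpr ha1.symm)]
  refine ⟨contractEdge G w1 x0, w2, ⟨?_, ⟨w1, hw12, by omega⟩,
    contractEdge_lift ha1.symm⟩, ?_⟩
  · intro v hv
    by_cases hvx : v = x0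
    · subst hvx; rw [contractEdge_nbr_v]; left; exact Set.ncard_empty V
    by_cases hvw1 : v = w1
    · subst hvw1; right; omega
    · rw [contractEdge_deg_other hvw1 hvx (hnadjx0 v hvw1 hv)]
      exact hdeg v hvx
  · exact ncard_lt_of_subset_diff (contractEdge_support_subset ha1.symm)
      (mem_support_of_adj ha1)

lemma gamma_step {G : SimpleGraph V} {x0 : V}
    (hdeg : ∀ v, v ≠ x0 → (G.neighborSet v).ncard = 0 ∨ 3 ≤ (G.neighborSet v).ncard)
    (hdx : (G.neighborSet x0).ncard = 2) :
    ∃ (G' : SimpleGraph V) (y0 : V), Red G G' y0 ∧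
      G'.support.ncard < G.support.ncard := by
  classical
  obtain ⟨w1, w2, hw12, hNx0⟩ := pair_extract hdx
  have ha1 : G.Adj x0 w1 := (SimpleGraph.mem_neighborSet _ _ _).mp
    (by rw [hNx0]; exact Or.inl rfl)
  have ha2 : G.Adj x0 w2 := (SimpleGraph.mem_neighborSet _ _ _).mp
    (by rw [hNx0]; exact Or.inr rfl)
  have hw1x0 : w1 ≠ x0 := ha1.ne'
  have hw2x0 : w2 ≠ x0 := ha2.ne'
  have hnadjx0 : ∀ v, v ≠ w1 → v ≠ w2 → ¬ G.Adj x0 v := by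
    intro v h1 h2 h
    have : v ∈ G.neighborSet x0 := (SimpleGraph.mem_neighborSet _ _ _).mpr h
    rw [hNx0] at this
    rcases this with h' | h'
    · exact h1 h'
    · exact h2 h'
  by_cases hadj : G.Adj w1 w2
  · by_cases h4a : 4 ≤ (G.neighborSet w1).ncard
    · exact gamma_merge hdeg hNx0 hw12 hadj h4a
    by_cases h4b : 4 ≤ (G.neighborSet w2).ncard
    · exact gamma_merge hdeg (by rw [hNx0, Set.pair_comm]) hw12.symm hadj.symm h4b
    -- γ3 : both w1 w2 of degree exactly 3
    have hd1 : (G.neighborSet w1).ncard = 3 := by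
      have := deg3_of_ne hdeg hw1x0 ha1.symm; omega
    have hd2 : (G.neighborSet w2).ncard = 3 := by
      have := deg3_of_ne hdeg hw2x0 ha2.symm; omega
    obtain ⟨z1, hz1x0, hz1w2, hNw1⟩ := third_extract hd1
      ((SimpleGraph.mem_neighborSet _ _ _).mpr ha1.symm)
      ((SimpleGraph.mem_neighborSet _ _ _).mpr hadj) (Ne.symm hw2x0)
    obtain ⟨z2, hz2x0, hz2w1, hNw2⟩ := third_extract hd2
      ((SimpleGraph.mem_neighborSet _ _ _).mpr ha2.symm)
      ((SimpleGraph.mem_neighborSet _ _ _).mpr hadj.symm) (Ne.symm hw1x0)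
    have haz1 : G.Adj w1 z1 := (SimpleGraph.mem_neighborSet _ _ _).mp
      (by rw [hNw1]; exact Or.inr (Or.inr rfl))
    have haz2 : G.Adj w2 z2 := (SimpleGraph.mem_neighborSet _ _ _).mp
      (by rw [hNw2]; exact Or.inr (Or.inr rfl))
    have hz1w1 : z1 ≠ w1 := haz1.ne'
    have hz2w2 : z2 ≠ w2 := haz2.ne'
    by_cases hz12 : z1 = z2
    · -- delete the triangle x0 w1 w2 entirely
      subst hz12
      set s3 : Set V := {v | v ≠ x0 ∧ v ≠ w1 ∧ v ≠ w2} with hs3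
      have hclo : ∀ v, v ∈ s3 → v ≠ z1 → G.neighborSet v ⊆ s3 := by
        intro v hv hvz q hq
        have hqv : G.Adj v q := (SimpleGraph.mem_neighborSet _ _ _).mp hq
        refine ⟨fun hqx => ?_, fun hqw1 => ?_, fun hqw2 => ?_⟩
        · have : v ∈ G.neighborSet x0 := (SimpleGraph.mem_neighborSet _ _ _).mpr
            (hqx ▸ hqv.symm)
          rw [hNx0] at this
          rcases this with h | h
          · exact hv.2.1 h
          · exact hv.2.2 h
        · have : v ∈ G.neighborSet w1 := (SimpleGraph.mem_neighborSet _ _ _).mpr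
            (hqw1 ▸ hqv.symm)
          rw [hNw1] at this
          rcases this with h | h | h
          · exact hv.1 h
          · exact hv.2.2 h
          · exact hvz h
        · have : v ∈ G.neighborSet w2 := (SimpleGraph.mem_neighborSet _ _ _).mpr
            (hqw2 ▸ hqv.symm)
          rw [hNw2] at this
          rcases this with h | h | h
          · exact hv.1 h
          · exact hv.2.1 h
          · exact hvz h
      have hdz1 : 3 ≤ (G.neighborSet z1).ncard := deg3_of_ne hdeg hz1x0 haz1.symm
      -- a neighbour of z1 other than w1 w2
      have hpos : 0 < (G.neighborSet z1 \ {w1, w2}).ncard := by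
        have hle := Set.ncard_le_ncard_diff_add_ncard (G.neighborSet z1)
          ({w1, w2} : Set V) (Set.toFinite _)
        have h2 : ({w1, w2} : Set V).ncard = 2 := Set.ncard_pair hw12
        omega
      obtain ⟨u, hu⟩ := (Set.ncard_pos (Set.toFinite _)).mp hpos
      have hau : G.Adj z1 u := (SimpleGraph.mem_neighborSet _ _ _).mp hu.1
      have huw : u ≠ w1 ∧ u ≠ w2 := by
        have := hu.2
        simp only [Set.mem_insert_iff, Set.mem_singleton_iff, not_or] at this
        exact this
      have hux0 : u ≠ x0 := by
        intro h
        have hm : z1 ∈ G.neighborSet x0 :=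
          (SimpleGraph.mem_neighborSet _ _ _).mpr (h ▸ hau).symm
        rw [hNx0] at hm
        rcases hm with h' | h'
        · exact hz1w1 h'
        · exact hz1w2 h'
      have hus3 : u ∈ s3 := ⟨hux0, huw.1, huw.2⟩
      have huz1 : u ≠ z1 := hau.ne'
      refine ⟨restrict G s3, z1, ⟨?_, ?_, fun h => minor_mono (restrict_le G s3) h⟩, ?_⟩
      · intro v hv
        by_cases hvs : v ∈ s3
        · rw [restrict_neighborSet G hvs,
            Set.inter_eq_self_of_subset_left (hclo v hvs hv)]
          exact hdeg v hvs.1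
        · rw [restrict_neighborSet_empty G hvs]; left; exact Set.ncard_empty V
      · refine ⟨u, huz1, ?_⟩
        rw [restrict_neighborSet G hus3,
          Set.inter_eq_self_of_subset_left (hclo u hus3 huz1)]
        exact deg3_of_ne hdeg hux0 hau.symm
      · refine ncard_lt_of_subset_diff ?_ (mem_support_of_adj ha1)
        intro v hv
        obtain ⟨hs, hv3⟩ := restrict_support_subset G s3 hv
        exact ⟨hs, hv3.1⟩
    · -- contract the edge w1 w2 (merge w2 into w1), exception x0
      have hz2z1 : z2 ≠ z1 := fun h => hz12 h.symm
      have heq : (G.neighborSet w1 ∪ G.neighborSet w2) \ {w1, w2} =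
          {x0, z1, z2} := by
        ext q
        simp only [Set.mem_diff, Set.mem_union, Set.mem_insert_iff, Set.mem_singleton_iff,
          not_or]
        constructor
        · rintro ⟨hq | hq, hq1, hq2⟩
          · rw [hNw1] at hq
            rcases hq with rfl | rfl | rfl
            · exact Or.inl rfl
            · exact absurd rfl hq2
            · exact Or.inr (Or.inl rfl)
          · rw [hNw2] at hq
            rcases hq with rfl | rfl | rfl
            · exact Or.inl rfl
            · exact absurd rfl hq1
            · exact Or.inr (Or.inr rfl)
        · rintro (rfl | rfl | rfl)
          · exact ⟨Or.inl (by rw [hNw1]; exact Or.inl rfl), Ne.symm hw1x0, Ne.symm hw2x0⟩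
          · exact ⟨Or.inl (by rw [hNw1]; exact Or.inr (Or.inr rfl)), hz1w1, hz1w2⟩
          · exact ⟨Or.inr (by rw [hNw2]; exact Or.inr (Or.inr rfl)), hz2w1, hz2w2⟩
      have hdw1' : ((contractEdge G w1 w2).neighborSet w1).ncard = 3 := by
        rw [contractEdge_nbr_merged hadj, heq]
        exact ncard_triple (Ne.symm hz1x0) (Ne.symm hz2x0) hz12
      refine ⟨contractEdge G w1 w2, x0, ⟨?_, ⟨w1, hw1x0, by omega⟩,
        contractEdge_lift hadj⟩, ?_⟩
      · intro v hv
        by_cases hvw2 : v = w2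
        · subst hvw2; rw [contractEdge_nbr_v]; left; exact Set.ncard_empty V
        by_cases hvw1 : v = w1
        · subst hvw1; right; omega
        by_cases hvz2 : v = z2
        · subst hvz2
          rw [contractEdge_deg_adj hadj.ne hz2w1 hz2w2 haz2 (fun h => by
            have hm : v ∈ G.neighborSet w1 := (SimpleGraph.mem_neighborSet _ _ _).mpr h
            rw [hNw1] at hm
            rcases hm with h' | h' | h'
            · exact hz2x0 h'
            · exact hz2w2 h'
            · exact hz2z1 h')]
          exact hdeg v hv
        · rw [contractEdge_deg_other hvw1 hvw2 (fun h => by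
            have : v ∈ G.neighborSet w2 := (SimpleGraph.mem_neighborSet _ _ _).mpr h
            rw [hNw2] at this
            rcases this with h' | h' | h'
            · exact hv h'
            · exact hvw1 h'
            · exact hvz2 h')]
          exact hdeg v hv
      · exact ncard_lt_of_subset_diff (contractEdge_support_subset hadj)
          (mem_support_of_adj hadj.symm)
  · -- γ1 : w1 ≁ w2, merge x0 into w1
    have heq : (G.neighborSet w1 ∪ G.neighborSet x0) \ {w1, x0} =
        insert w2 (G.neighborSet w1 \ {x0}) := by
      ext q
      simp only [Set.mem_diff, Set.mem_union, Set.mem_insert_iff, Set.mem_singleton_iff,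
        not_or]
      constructor
      · rintro ⟨hq | hq, hq1, hq2⟩
        · exact Or.inr ⟨hq, hq2⟩
        · rw [hNx0] at hq
          rcases hq with rfl | rfl
          · exact absurd rfl hq1
          · exact Or.inl rfl
      · rintro (rfl | ⟨hq, hq2⟩)
        · exact ⟨Or.inr (by rw [hNx0]; exact Or.inr rfl), Ne.symm hw12, hw2x0⟩
        · exact ⟨Or.inl hq, ((SimpleGraph.mem_neighborSet _ _ _).mp hq).ne', hq2⟩
    have hdw1 : 3 ≤ (G.neighborSet w1).ncard := deg3_of_ne hdeg hw1x0 ha1.symm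
    have hdw1' : ((contractEdge G w1 x0).neighborSet w1).ncard =
        (G.neighborSet w1).ncard := by
      rw [contractEdge_nbr_merged ha1.symm, heq,
        Set.ncard_insert_of_notMem (fun hc => hadj
          ((SimpleGraph.mem_neighborSet _ _ _).mp hc.1)) (Set.toFinite _),
        Set.ncard_diff_singleton_of_mem ((SimpleGraph.mem_neighborSet _ _ _).mpr ha1.symm)]
      omega
    have hdw2' : ((contractEdge G w1 x0).neighborSet w2).ncard =
        (G.neighborSet w2).ncard :=
      contractEdge_deg_adj ha1.ne' (Ne.symm hw12) hw2x0 ha2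
        (fun h => hadj h)
    refine ⟨contractEdge G w1 x0, w1, ⟨?_, ⟨w2, Ne.symm hw12, by
      rw [hdw2']; exact deg3_of_ne hdeg hw2x0 ha2.symm⟩,
      contractEdge_lift ha1.symm⟩, ?_⟩
    · intro v hv
      by_cases hvx : v = x0
      · subst hvx; rw [contractEdge_nbr_v]; left; exact Set.ncard_empty V
      by_cases hvw2 : v = w2
      · subst hvw2; rw [hdw2']; exact hdeg v hvx
      · rw [contractEdge_deg_other hv hvx (hnadjx0 v hv hvw2)]
        exact hdeg v hvx
    · exact ncard_lt_of_subset_diff (contractEdge_support_subset ha1.symm)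
        (mem_support_of_adj ha1)

end GammaStep

section DeltaStep

variable {V : Type} [Fintype V]

lemma delta_step {G : SimpleGraph V}
    (hall : ∀ v, (G.neighborSet v).ncard = 0 ∨ 3 ≤ (G.neighborSet v).ncard)
    (hedge : ∃ v w, G.Adj v w) :
    HasCliqueMinor G 4 ∨
      (∃ (G' : SimpleGraph V) (y0 : V), Red G G' y0 ∧
        G'.support.ncard < G.support.ncard) ∨
      (∃ (G' : SimpleGraph V) (y0 : V), Red G G' y0 ∧
        G'.support.ncard ≤ G.support.ncard ∧ G'.edgeSet.ncard < G.edgeSet.ncard) := by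
  classical
  by_cases hA : ∃ p q, G.Adj p q ∧ G.neighborSet p ∩ G.neighborSet q = ∅
  · -- contract an edge with no common neighbour
    right; left
    obtain ⟨p, q, hpq, hcap⟩ := hA
    have hdp : 3 ≤ (G.neighborSet p).ncard := deg3_all hall hpq
    have hdq : 3 ≤ (G.neighborSet q).ncard := deg3_all hall hpq.symm
    have hnboth : ∀ v, G.Adj q v → ¬ G.Adj p v := by
      intro v h1 h2
      have : v ∈ G.neighborSet p ∩ G.neighborSet q :=
        ⟨(SimpleGraph.mem_neighborSet _ _ _).mpr h2, (SimpleGraph.mem_neighborSet _ _ _).mpr h1⟩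
      rw [hcap] at this
      exact this
    have hdm : 3 ≤ ((contractEdge G p q).neighborSet p).ncard := by
      rw [contractEdge_nbr_merged hpq]
      have huni : (G.neighborSet p ∪ G.neighborSet q).ncard =
          (G.neighborSet p).ncard + (G.neighborSet q).ncard :=
        Set.ncard_union_eq (Set.disjoint_iff_inter_eq_empty.mpr hcap)
          (Set.toFinite _) (Set.toFinite _)
      have hle := Set.ncard_le_ncard_diff_add_ncard
        (G.neighborSet p ∪ G.neighborSet q) ({p, q} : Set V) (Set.toFinite _)
      have h2 : ({p, q} : Set V).ncard = 2 := Set.ncard_pair hpq.ne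
      omega
    refine ⟨contractEdge G p q, p, ⟨?_, ?_, contractEdge_lift hpq⟩, ?_⟩
    · intro v hv
      by_cases hvq : v = q
      · subst hvq; rw [contractEdge_nbr_v]; left; exact Set.ncard_empty V
      by_cases haqv : G.Adj q v
      · rw [contractEdge_deg_adj hpq.ne hv hvq haqv (hnboth v haqv)]
        exact hall v
      · rw [contractEdge_deg_other hv hvq haqv]
        exact hall v
    · have hpos : 0 < (G.neighborSet p \ {q}).ncard := by
        rw [Set.ncard_diff_singleton_of_mem
          ((SimpleGraph.mem_neighborSet _ _ _).mpr hpq)]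
        omega
      obtain ⟨r, hr⟩ := (Set.ncard_pos (Set.toFinite _)).mp hpos
      have harp : G.Adj p r := (SimpleGraph.mem_neighborSet _ _ _).mp hr.1
      have hrq : r ≠ q := hr.2
      have hrp : r ≠ p := harp.ne'
      have hnqr : ¬ G.Adj q r := fun h => hnboth r h harp
      refine ⟨r, hrp, ?_⟩
      rw [contractEdge_deg_other hrp hrq hnqr]
      exact deg3_all hall harp.symm
    · exact ncard_lt_of_subset_diff (contractEdge_support_subset hpq)
        (mem_support_of_adj hpq.symm)
  by_cases h1 : ∃ p q, G.Adj p q ∧ 4 ≤ (G.neighborSet p).ncard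
  · -- delete an edge at a vertex of degree ≥ 4
    right; right
    obtain ⟨p, q, hpq, h4⟩ := h1
    have hqp : q ∈ G.neighborSet p := (SimpleGraph.mem_neighborSet _ _ _).mpr hpq
    have hdp' : ((delEdge G p q).neighborSet p).ncard = (G.neighborSet p).ncard - 1 := by
      rw [delEdge_nbr_u, Set.ncard_diff_singleton_of_mem hqp]
    refine ⟨delEdge G p q, q, ⟨?_, ⟨p, hpq.ne, by omega⟩,
      fun h => minor_mono (delEdge_le G p q) h⟩, ?_, delEdge_edgeSet hpq⟩
    · intro v hv
      by_cases hvp : v = p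
      · subst hvp; right; omega
      · rw [delEdge_nbr_other hvp hv]
        exact hall v
    · exact Set.ncard_le_ncard (support_subset_of_le (delEdge_le G p q)) (Set.toFinite _)
  -- cubic case : find a triangle
  have hcube : ∀ p q, G.Adj p q → (G.neighborSet p).ncard = 3 := by
    intro p q h
    have h3 := deg3_all hall h
    have h4 : ¬ 4 ≤ (G.neighborSet p).ncard := fun hc => h1 ⟨p, q, h, hc⟩
    omega
  obtain ⟨x, y, hxy⟩ := hedge
  have hcne : (G.neighborSet x ∩ G.neighborSet y).Nonempty := by
    rw [Set.nonempty_iff_ne_empty]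
    exact fun hc => hA ⟨x, y, hxy, hc⟩
  obtain ⟨z, hzx, hzy⟩ := hcne
  have hxz : G.Adj x z := (SimpleGraph.mem_neighborSet _ _ _).mp hzx
  have hyz : G.Adj y z := (SimpleGraph.mem_neighborSet _ _ _).mp hzy
  obtain ⟨x', hx'y, hx'z, hNx⟩ := third_extract (hcube x y hxy)
    ((SimpleGraph.mem_neighborSet _ _ _).mpr hxy)
    ((SimpleGraph.mem_neighborSet _ _ _).mpr hxz) hyz.ne
  obtain ⟨y', hy'x, hy'z, hNy⟩ := third_extract (hcube y x hxy.symm)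
    ((SimpleGraph.mem_neighborSet _ _ _).mpr hxy.symm)
    ((SimpleGraph.mem_neighborSet _ _ _).mpr hyz) hxz.ne
  obtain ⟨z', hz'x, hz'y, hNz⟩ := third_extract (hcube z x hxz.symm)
    ((SimpleGraph.mem_neighborSet _ _ _).mpr hxz.symm)
    ((SimpleGraph.mem_neighborSet _ _ _).mpr hyz.symm) hxy.ne
  have haxx' : G.Adj x x' := (SimpleGraph.mem_neighborSet _ _ _).mp
    (by rw [hNx]; exact Or.inr (Or.inr rfl))
  have hayy' : G.Adj y y' := (SimpleGraph.mem_neighborSet _ _ _).mp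
    (by rw [hNy]; exact Or.inr (Or.inr rfl))
  have hazz' : G.Adj z z' := (SimpleGraph.mem_neighborSet _ _ _).mp
    (by rw [hNz]; exact Or.inr (Or.inr rfl))
  have hx'x : x' ≠ x := haxx'.ne'
  have hy'y : y' ≠ y := hayy'.ne'
  have hz'z : z' ≠ z := hazz'.ne'
  by_cases e1 : x' = y'
  · by_cases e2 : x' = z'
    · -- K4 on {x, y, z, x'}
      left
      refine build_K4 {x} {y} {z} {x'} (Set.singleton_nonempty _) (Set.singleton_nonempty _)
        (Set.singleton_nonempty _) (Set.singleton_nonempty _)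
        (induce_connected_singleton G x) (induce_connected_singleton G y)
        (induce_connected_singleton G z) (induce_connected_singleton G x')
        (Set.disjoint_singleton.mpr hxy.ne) (Set.disjoint_singleton.mpr hxz.ne)
        (Set.disjoint_singleton.mpr (Ne.symm hx'x)) (Set.disjoint_singleton.mpr hyz.ne)
        (Set.disjoint_singleton.mpr (Ne.symm hx'y)) (Set.disjoint_singleton.mpr (Ne.symm hx'z))
        ⟨x, rfl, y, rfl, hxy⟩ ⟨x, rfl, z, rfl, hxz⟩ ⟨x, rfl, x', rfl, haxx'⟩
        ⟨y, rfl, z, rfl, hyz⟩ ⟨y, rfl, x', rfl, ?_⟩ ⟨z, rfl, x', rfl, ?_⟩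
      · rw [e1]; exact hayy'
      · rw [e2]; exact hazz'
    · -- x' = y' ≠ z'
      rw [← e1] at hNy
      rcases tri_two hxy hxz hyz hNx hNy hNz e2 hx'y hx'z hz'x hz'y hall hcube with
        h | ⟨G', y0, hlt, hd, hn, hl⟩
      · exact Or.inl h
      · exact Or.inr (Or.inl ⟨G', y0, ⟨hd, hn, hl⟩, hlt⟩)
  by_cases e2 : y' = z'
  · -- y' = z' ≠ x' : roles (y z x)
    have hNy2 : G.neighborSet y = {z, x, y'} := by rw [hNy, Set.insert_comm]
    have hNz2 : G.neighborSet z = {y, x, y'} := by rw [hNz, ← e2, Set.insert_comm]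
    rcases tri_two hyz hxy.symm hxz.symm hNy2 hNz2 hNx
      (fun h => e1 h.symm) hy'z hy'x hx'y hx'z hall hcube with
      h | ⟨G', y0, hlt, hd, hn, hl⟩
    · exact Or.inl h
    · exact Or.inr (Or.inl ⟨G', y0, ⟨hd, hn, hl⟩, hlt⟩)
  by_cases e3 : x' = z'
  · -- x' = z' : roles (z x y)
    have hNx2 : G.neighborSet x = {z, y, z'} := by rw [hNx, e3, Set.insert_comm]
    have hNy2 : G.neighborSet y = {z, x, y'} := by rw [hNy, Set.insert_comm]
    rcases tri_two hxz.symm hyz.symm hxy hNz hNx2 hNy2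
      (fun h => e2 h.symm) hz'x hz'y hy'z hy'x hall hcube with
      h | ⟨G', y0, hlt, hd, hn, hl⟩
    · exact Or.inl h
    · exact Or.inr (Or.inl ⟨G', y0, ⟨hd, hn, hl⟩, hlt⟩)
  · -- all three distinct : contract x y, exception z
    right; left
    have heq : (G.neighborSet x ∪ G.neighborSet y) \ {x, y} = {z, x', y'} := by
      ext q
      simp only [Set.mem_diff, Set.mem_union, Set.mem_insert_iff, Set.mem_singleton_iff,
        not_or]
      constructor
      · rintro ⟨hq | hq, hq1, hq2⟩
        · rw [hNx] at hq
          rcases hq with rfl | rfl | rfl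
          · exact absurd rfl hq2
          · exact Or.inl rfl
          · exact Or.inr (Or.inl rfl)
        · rw [hNy] at hq
          rcases hq with rfl | rfl | rfl
          · exact absurd rfl hq1
          · exact Or.inl rfl
          · exact Or.inr (Or.inr rfl)
      · rintro (rfl | rfl | rfl)
        · exact ⟨Or.inl (by rw [hNx]; exact Or.inr (Or.inl rfl)), hxz.ne', hyz.ne'⟩
        · exact ⟨Or.inl (by rw [hNx]; exact Or.inr (Or.inr rfl)), hx'x, hx'y⟩
        · exact ⟨Or.inr (by rw [hNy]; exact Or.inr (Or.inr rfl)), hy'x, hy'y⟩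
    have hdm : ((contractEdge G x y).neighborSet x).ncard = 3 := by
      rw [contractEdge_nbr_merged hxy, heq]
      exact ncard_triple (Ne.symm hx'z) (Ne.symm hy'z) e1
    refine ⟨contractEdge G x y, z, ⟨?_, ⟨x, hxz.ne, by omega⟩,
      contractEdge_lift hxy⟩, ?_⟩
    · intro v hv
      by_cases hvy : v = y
      · subst hvy; rw [contractEdge_nbr_v]; left; exact Set.ncard_empty V
      by_cases hvx : v = x
      · subst hvx; right; omega
      by_cases hvy' : v = y'
      · subst hvy'
        rw [contractEdge_deg_adj hxy.ne hy'x hy'y hayy' (fun h => by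
          have hm : v ∈ G.neighborSet x := (SimpleGraph.mem_neighborSet _ _ _).mpr h
          rw [hNx] at hm
          rcases hm with h' | h' | h'
          · exact hy'y h'
          · exact hy'z h'
          · exact e1 h'.symm)]
        exact hall v
      · rw [contractEdge_deg_other hvx hvy (fun h => by
          have hm : v ∈ G.neighborSet y := (SimpleGraph.mem_neighborSet _ _ _).mpr h
          rw [hNy] at hm
          rcases hm with h' | h' | h'
          · exact hvx h'
          · exact hv h'
          · exact hvy' h')]
        exact hall v
    · exact ncard_lt_of_subset_diff (contractEdge_support_subset hxy)
        (mem_support_of_adj hxy.symm)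

end DeltaStep

section Dirac

variable {V : Type} [Fintype V]

lemma dirac : ∀ (n m : ℕ) (G : SimpleGraph V) (x0 : V),
    G.support.ncard ≤ n → G.edgeSet.ncard ≤ m →
    (∀ v, v ≠ x0 → (G.neighborSet v).ncard = 0 ∨ 3 ≤ (G.neighborSet v).ncard) →
    (∃ v, v ≠ x0 ∧ 3 ≤ (G.neighborSet v).ncard) →
    HasCliqueMinor G 4 := by
  classical
  intro n
  induction n using Nat.strong_induction_on with
  | _ n IHn =>
  intro m
  induction m using Nat.strong_induction_on with
  | _ m IHm =>
  intro G x0 hsup hedge hdeg hne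
  have hedge_ex : ∃ v w, G.Adj v w := by
    obtain ⟨v, hvx, hv3⟩ := hne
    obtain ⟨w, hw⟩ := (Set.ncard_pos (Set.toFinite _)).mp (by omega : 0 < (G.neighborSet v).ncard)
    exact ⟨v, w, (SimpleGraph.mem_neighborSet _ _ _).mp hw⟩
  have hconsume_sup : ∀ (G' : SimpleGraph V) (y0 : V), Red G G' y0 →
      G'.support.ncard < G.support.ncard → HasCliqueMinor G 4 := by
    rintro G' y0 ⟨hd, hn, hl⟩ hlt
    exact hl (IHn G'.support.ncard (lt_of_lt_of_le hlt hsup) G'.edgeSet.ncard G' y0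
      le_rfl le_rfl hd hn)
  rcases Nat.lt_or_ge (G.neighborSet x0).ncard 3 with hd0 | hd0
  · interval_cases hdx : (G.neighborSet x0).ncard
    · -- degree 0
      have hall : ∀ v, (G.neighborSet v).ncard = 0 ∨ 3 ≤ (G.neighborSet v).ncard := by
        intro v
        by_cases hv : v = x0
        · subst hv; left; exact hdx
        · exact hdeg v hv
      rcases delta_step hall hedge_ex with h | ⟨G', y0, hr, hlt⟩ | ⟨G', y0, hr, hle, hltE⟩
      · exact h
      · exact hconsume_sup G' y0 hr hlt
      · obtain ⟨hd, hn, hl⟩ := hr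
        exact hl (IHm G'.edgeSet.ncard (lt_of_lt_of_le hltE hedge) G' y0
          (le_trans hle hsup) le_rfl hd hn)
    · -- degree 1
      obtain ⟨G', y0, hr, hlt⟩ := beta_step hdeg hdx
      exact hconsume_sup G' y0 hr hlt
    · -- degree 2
      obtain ⟨G', y0, hr, hlt⟩ := gamma_step hdeg hdx
      exact hconsume_sup G' y0 hr hlt
  · have hall : ∀ v, (G.neighborSet v).ncard = 0 ∨ 3 ≤ (G.neighborSet v).ncard := by
      intro v
      by_cases hv : v = x0
      · subst hv; right; exact hd0
      · exact hdeg v hv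
    rcases delta_step hall hedge_ex with h | ⟨G', y0, hr, hlt⟩ | ⟨G', y0, hr, hle, hltE⟩
    · exact h
    · exact hconsume_sup G' y0 hr hlt
    · obtain ⟨hd, hn, hl⟩ := hr
      exact hl (IHm G'.edgeSet.ncard (lt_of_lt_of_le hltE hedge) G' y0
        (le_trans hle hsup) le_rfl hd hn)

end Dirac

section MainLemma

variable {V : Type} [Fintype V]

lemma third_extract1 {s : Set V} {b : V} (h : s.ncard = 3) (hb : b ∈ s) :
    ∃ x y, x ≠ y ∧ x ≠ b ∧ y ≠ b ∧ s = {b, x, y} := by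
  have hd : (s \ {b}).ncard = 2 := by
    rw [Set.ncard_diff_singleton_of_mem hb, h]
  obtain ⟨x, y, hxy, hp⟩ := pair_extract hd
  have hx : x ∈ s \ {b} := hp ▸ Or.inl rfl
  have hy : y ∈ s \ {b} := hp ▸ Or.inr rfl
  refine ⟨x, y, hxy, hx.2, hy.2, ?_⟩
  ext q
  constructor
  · intro hq
    by_cases hqb : q = b
    · exact Or.inl hqb
    · have : q ∈ s \ {b} := ⟨hq, hqb⟩
      rw [hp] at this
      exact Or.inr this
  · rintro (rfl | rfl | rfl)
    · exact hb
    · exact hx.1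
    · exact hy.1

lemma bipartite_main : ∀ (n : ℕ) (G : SimpleGraph V) (A B : Set V),
    A.ncard + B.ncard ≤ n →
    Disjoint A B →
    (∀ ⦃u v⦄, G.Adj u v → (u ∈ A ∧ v ∈ B) ∨ (u ∈ B ∧ v ∈ A)) →
    B.ncard ≤ A.ncard →
    A.Nonempty →
    (∀ a ∈ A, 3 ≤ (G.neighborSet a).ncard) →
    HasCliqueMinor G 4 := by
  classical
  intro n
  induction n using Nat.strong_induction_on with
  | _ n IH =>
  intro G A B hn hdisj hedge hcard hA hdegA
  have hNa_sub : ∀ a ∈ A, G.neighborSet a ⊆ B := by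
    intro a ha q hq
    have hadj : G.Adj a q := (SimpleGraph.mem_neighborSet _ _ _).mp hq
    rcases hedge hadj with ⟨_, h⟩ | ⟨h, _⟩
    · exact h
    · exact absurd ha (fun hc => (hdisj.le_bot ⟨hc, h⟩))
  have hNb_sub : ∀ b ∈ B, G.neighborSet b ⊆ A := by
    intro b hb q hq
    have hadj : G.Adj b q := (SimpleGraph.mem_neighborSet _ _ _).mp hq
    rcases hedge hadj with ⟨h, _⟩ | ⟨_, h⟩
    · exact absurd hb (fun hc => (hdisj.le_bot ⟨h, hc⟩))
    · exact h
  have hAB_ne : ∀ {u v}, u ∈ A → v ∈ B → u ≠ v := by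
    intro u v hu hv h
    exact hdisj.le_bot ⟨hu, h ▸ hv⟩
  have hB3 : 3 ≤ B.ncard := by
    obtain ⟨a, ha⟩ := hA
    calc 3 ≤ (G.neighborSet a).ncard := hdegA a ha
    _ ≤ B.ncard := Set.ncard_le_ncard (hNa_sub a ha) (Set.toFinite _)
  by_cases hb2 : ∃ b ∈ B, (G.neighborSet b).ncard ≤ 2
  · obtain ⟨b, hbB, hble⟩ := hb2
    interval_cases hdb : (G.neighborSet b).ncard
    · -- degree 0 : drop b from B
      have hbN : G.neighborSet b = ∅ := (Set.ncard_eq_zero (Set.toFinite _)).mp hdb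
      refine IH (A.ncard + (B \ {b}).ncard) ?_ G A (B \ {b}) le_rfl
        (hdisj.mono_right Set.diff_subset) ?_ ?_ hA hdegA
      · have : (B \ {b}).ncard = B.ncard - 1 :=
          Set.ncard_diff_singleton_of_mem hbB
        omega
      · intro u v hadj
        rcases hedge hadj with ⟨h1, h2⟩ | ⟨h1, h2⟩
        · refine Or.inl ⟨h1, h2, ?_⟩
          rintro rfl
          have : u ∈ G.neighborSet v := (SimpleGraph.mem_neighborSet _ _ _).mpr hadj.symm
          rw [hbN] at this
          exact this
        · refine Or.inr ⟨⟨h1, ?_⟩, h2⟩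
          rintro rfl
          have : v ∈ G.neighborSet u := (SimpleGraph.mem_neighborSet _ _ _).mpr hadj
          rw [hbN] at this
          exact this
      · have : (B \ {b}).ncard = B.ncard - 1 :=
          Set.ncard_diff_singleton_of_mem hbB
        omega
    · -- degree 1 : drop b and its neighbour a
      obtain ⟨a, hNb⟩ := Set.ncard_eq_one.mp hdb
      have haA : a ∈ A := hNb_sub b hbB (hNb ▸ rfl)
      have hab : a ≠ b := hAB_ne haA hbB
      have hAcard : 3 ≤ A.ncard := le_trans hB3 hcard
      have hnb_only : ∀ v, v ≠ a → ¬ G.Adj b v := by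
        intro v hv h
        have : v ∈ G.neighborSet b := (SimpleGraph.mem_neighborSet _ _ _).mpr h
        rw [hNb] at this
        exact hv this
      set P : Set V := {v | v ≠ a ∧ v ≠ b} with hP
      have hsub : ∀ a' ∈ A \ {a}, G.neighborSet a' ⊆ P := by
        intro a' ha' q hq
        have haq : G.Adj a' q := (SimpleGraph.mem_neighborSet _ _ _).mp hq
        have hqB : q ∈ B := hNa_sub a' ha'.1 hq
        refine ⟨fun hqa => hAB_ne haA hqB hqa.symm, fun hqb => ?_⟩
        exact hnb_only a' ha'.2 (hqb ▸ haq.symm)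
      refine minor_mono (restrict_le G P) ?_
      refine IH ((A \ {a}).ncard + (B \ {b}).ncard) ?_ (restrict G P) (A \ {a}) (B \ {b})
        le_rfl (Set.disjoint_of_subset Set.diff_subset Set.diff_subset hdisj) ?_ ?_ ?_ ?_
      · have h1 : (A \ {a}).ncard = A.ncard - 1 :=
          Set.ncard_diff_singleton_of_mem haA
        have h2 : (B \ {b}).ncard = B.ncard - 1 :=
          Set.ncard_diff_singleton_of_mem hbB
        omega
      · rintro u v ⟨hadj, hu, hv⟩
        rcases hedge hadj with ⟨h1, h2⟩ | ⟨h1, h2⟩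
        · exact Or.inl ⟨⟨h1, hu.1⟩, h2, hv.2⟩
        · exact Or.inr ⟨⟨h1, hu.2⟩, h2, hv.1⟩
      · have h1 : (A \ {a}).ncard = A.ncard - 1 :=
          Set.ncard_diff_singleton_of_mem haA
        have h2 : (B \ {b}).ncard = B.ncard - 1 :=
          Set.ncard_diff_singleton_of_mem hbB
        omega
      · rw [Set.nonempty_iff_ne_empty]
        intro hc
        have : (A \ {a}).ncard = 0 := by rw [hc]; exact Set.ncard_empty V
        have h1 : (A \ {a}).ncard = A.ncard - 1 :=
          Set.ncard_diff_singleton_of_mem haA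
        omega
      · intro a' ha'
        have ha'P : a' ∈ P := ⟨ha'.2, fun hc => hAB_ne ha'.1 hbB hc⟩
        rw [restrict_neighborSet G ha'P,
          Set.inter_eq_self_of_subset_left (hsub a' ha')]
        exact hdegA a' ha'.1
    · -- degree 2
      obtain ⟨a1, a2, h12, hNb⟩ := pair_extract hdb
      have ha1A : a1 ∈ A := hNb_sub b hbB (hNb ▸ Or.inl rfl)
      have ha2A : a2 ∈ A := hNb_sub b hbB (hNb ▸ Or.inr rfl)
      have hba1 : G.Adj b a1 := (SimpleGraph.mem_neighborSet _ _ _).mp (hNb ▸ Or.inl rfl)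
      have hba2 : G.Adj b a2 := (SimpleGraph.mem_neighborSet _ _ _).mp (hNb ▸ Or.inr rfl)
      have ha1b : G.Adj a1 b := hba1.symm
      have ha1bne : a1 ≠ b := hAB_ne ha1A hbB
      have ha2bne : a2 ≠ b := hAB_ne ha2A hbB
      have hnAA : ∀ u v, u ∈ A → v ∈ A → ¬ G.Adj u v := by
        intro u v hu hv h
        rcases hedge h with ⟨h1, h2⟩ | ⟨h1, h2⟩
        · exact hdisj.le_bot ⟨hv, h2⟩
        · exact hdisj.le_bot ⟨hu, h1⟩
      have hnb_only : ∀ v, v ≠ a1 → v ≠ a2 → ¬ G.Adj b v := by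
        intro v h1 h2 h
        have : v ∈ G.neighborSet b := (SimpleGraph.mem_neighborSet _ _ _).mpr h
        rw [hNb] at this
        rcases this with h' | h'
        · exact h1 h'
        · exact h2 h'
      by_cases hun : 4 ≤ (G.neighborSet a1 ∪ G.neighborSet a2).ncard
      · -- contract the path a1 - b - a2
        have hn21 : ¬ G.Adj a2 a1 := hnAA a2 a1 ha2A ha1A
        have hbun : b ∈ G.neighborSet a1 ∪ G.neighborSet a2 :=
          Or.inl ((SimpleGraph.mem_neighborSet _ _ _).mpr ha1b)
        have hsimp : (G.neighborSet a1 ∪ G.neighborSet a2) \ {b, a2, a1} =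
            (G.neighborSet a1 ∪ G.neighborSet a2) \ {b} := by
          ext q
          simp only [Set.mem_diff, Set.mem_insert_iff, Set.mem_singleton_iff, not_or]
          constructor
          · rintro ⟨hq, h1, h2, h3⟩
            exact ⟨hq, h1⟩
          · rintro ⟨hq, h1⟩
            have hqB : q ∈ B := by
              rcases hq with h | h
              · exact hNa_sub a1 ha1A h
              · exact hNa_sub a2 ha2A h
            exact ⟨hq, h1, Ne.symm (hAB_ne ha2A hqB), Ne.symm (hAB_ne ha1A hqB)⟩
        have hdm : 3 ≤ ((contract2 G a1 b a2).neighborSet a1).ncard := by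
          rw [contract2_nbr_merged ha1bne h12 hn21, hsimp,
            Set.ncard_diff_singleton_of_mem hbun]
          omega
        refine contract2_lift ha1b hba2 ?_
        have hAm : (A \ {a2}).ncard = A.ncard - 1 :=
          Set.ncard_diff_singleton_of_mem ha2A
        have hBm : (B \ {b}).ncard = B.ncard - 1 :=
          Set.ncard_diff_singleton_of_mem hbB
        refine IH ((A \ {a2}).ncard + (B \ {b}).ncard) (by omega)
          (contract2 G a1 b a2) (A \ {a2}) (B \ {b}) le_rfl
          (Set.disjoint_of_subset Set.diff_subset Set.diff_subset hdisj) ?_ (by omega)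
          ⟨a1, ha1A, h12⟩ ?_
        · rintro u v ⟨g1, g2, g3, g4, g5, g6⟩
          rcases g6 with h | ⟨rfl, h⟩ | ⟨rfl, h⟩
          · rcases hedge h with ⟨h1, h2⟩ | ⟨h1, h2⟩
            · exact Or.inl ⟨⟨h1, g3⟩, h2, g4⟩
            · exact Or.inr ⟨⟨h1, g2⟩, h2, g5⟩
          · have hvB : v ∈ B := hNa_sub a2 ha2A ((SimpleGraph.mem_neighborSet _ _ _).mpr h)
            exact Or.inl ⟨⟨ha1A, g3⟩, hvB, g4⟩
          · have huB : u ∈ B := hNa_sub a2 ha2A ((SimpleGraph.mem_neighborSet _ _ _).mpr h)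
            exact Or.inr ⟨⟨huB, g2⟩, ha1A, g5⟩
        · intro a' ha'
          by_cases ha1' : a' = a1
          · subst ha1'; exact hdm
          · have ha'A : a' ∈ A := ha'.1
            have ha'a2 : a' ≠ a2 := ha'.2
            rw [contract2_nbr_other ha1' (hAB_ne ha'A hbB) ha'a2 (hnAA a2 a' ha2A ha'A)]
            have hbn : b ∉ G.neighborSet a' := by
              intro hc
              exact hnb_only a' ha1' ha'a2 ((SimpleGraph.mem_neighborSet _ _ _).mp hc).symm
            have ha2n : a2 ∉ G.neighborSet a' := by
              intro hc
              exact hdisj.le_bot ⟨ha2A, hNa_sub a' ha'A hc⟩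
            have : G.neighborSet a' \ {b, a2} = G.neighborSet a' := by
              ext q
              simp only [Set.mem_diff, Set.mem_insert_iff, Set.mem_singleton_iff, not_or]
              constructor
              · rintro ⟨h, _⟩; exact h
              · intro h
                exact ⟨h, fun hc => hbn (hc ▸ h), fun hc => ha2n (hc ▸ h)⟩
            rw [this]
            exact hdegA a' ha'A
      · -- |N a1 ∪ N a2| = 3 : twins
        have h31 : 3 ≤ (G.neighborSet a1).ncard := hdegA a1 ha1A
        have h32 : 3 ≤ (G.neighborSet a2).ncard := hdegA a2 ha2A
        have hle1 : (G.neighborSet a1).ncard ≤ (G.neighborSet a1 ∪ G.neighborSet a2).ncard :=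
          Set.ncard_le_ncard Set.subset_union_left (Set.toFinite _)
        have hle2 : (G.neighborSet a2).ncard ≤ (G.neighborSet a1 ∪ G.neighborSet a2).ncard :=
          Set.ncard_le_ncard Set.subset_union_right (Set.toFinite _)
        have hNeq1 : G.neighborSet a1 = G.neighborSet a1 ∪ G.neighborSet a2 :=
          Set.eq_of_subset_of_ncard_le Set.subset_union_left (by omega) (Set.toFinite _)
        have hNeq2 : G.neighborSet a2 = G.neighborSet a1 ∪ G.neighborSet a2 :=
          Set.eq_of_subset_of_ncard_le Set.subset_union_right (by omega) (Set.toFinite _)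
        have hd1 : (G.neighborSet a1).ncard = 3 := by omega
        obtain ⟨x, y, hxy, hxb, hyb, hNa1⟩ := third_extract1 hd1
          ((SimpleGraph.mem_neighborSet _ _ _).mpr ha1b)
        have hNa2 : G.neighborSet a2 = {b, x, y} := by rw [hNeq2, ← hNeq1, hNa1]
        have ha1x : G.Adj a1 x := (SimpleGraph.mem_neighborSet _ _ _).mp
          (by rw [hNa1]; exact Or.inr (Or.inl rfl))
        have ha1y : G.Adj a1 y := (SimpleGraph.mem_neighborSet _ _ _).mp
          (by rw [hNa1]; exact Or.inr (Or.inr rfl))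
        have ha2x : G.Adj a2 x := (SimpleGraph.mem_neighborSet _ _ _).mp
          (by rw [hNa2]; exact Or.inr (Or.inl rfl))
        have ha2y : G.Adj a2 y := (SimpleGraph.mem_neighborSet _ _ _).mp
          (by rw [hNa2]; exact Or.inr (Or.inr rfl))
        have hxB : x ∈ B := hNa_sub a1 ha1A ((SimpleGraph.mem_neighborSet _ _ _).mpr ha1x)
        have hyB : y ∈ B := hNa_sub a1 ha1A ((SimpleGraph.mem_neighborSet _ _ _).mpr ha1y)
        set s1 : Set V := {v | v ≠ a1 ∧ v ≠ a2 ∧ v ≠ b ∧ v ≠ y} with hs1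
        have hx_s1 : x ∈ s1 := ⟨Ne.symm (hAB_ne ha1A hxB), Ne.symm (hAB_ne ha2A hxB),
          hxb, hxy⟩
        set W : Set V := reachSet G x s1 with hW
        have hxW : x ∈ W := mem_reachSet_self G hx_s1
        have hWs1 : W ⊆ s1 := reachSet_subset G x s1
        by_cases hqy : ∃ q ∈ W, G.Adj q y
        · -- K4 minor directly
          obtain ⟨q, hqW, hqadj⟩ := hqy
          refine build_K4 {a1, b} {a2} W {y} ⟨a1, Or.inl rfl⟩ (Set.singleton_nonempty _)
            ⟨x, hxW⟩ (Set.singleton_nonempty _)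
            (induce_connected_pair G ha1b) (induce_connected_singleton G a2)
            (reachSet_connected G hx_s1) (induce_connected_singleton G y)
            ?_ ?_ ?_ ?_ ?_ ?_ ?_ ?_ ?_ ?_ ?_ ?_
          · rw [Set.disjoint_singleton_right]
            rintro (h | h)
            · exact h12 h.symm
            · exact ha2bne h
          · rw [Set.disjoint_left]
            rintro v (rfl | rfl) hvW
            · exact (hWs1 hvW).1 rfl
            · exact (hWs1 hvW).2.2.1 rfl
          · rw [Set.disjoint_singleton_right]
            rintro (h | h)
            · exact hAB_ne ha1A hyB h.symm
            · exact hyb h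
          · rw [Set.disjoint_left]
            rintro v rfl hvW
            exact (hWs1 hvW).2.1 rfl
          · exact Set.disjoint_singleton.mpr (hAB_ne ha2A hyB)
          · rw [Set.disjoint_singleton_right]
            intro h
            exact (hWs1 h).2.2.2 rfl
          · exact ⟨b, Or.inr rfl, a2, rfl, hba2⟩
          · exact ⟨a1, Or.inl rfl, x, hxW, ha1x⟩
          · exact ⟨a1, Or.inl rfl, y, rfl, ha1y⟩
          · exact ⟨a2, rfl, x, hxW, ha2x⟩
          · exact ⟨a2, rfl, y, rfl, ha2y⟩
          · exact ⟨q, hqW, y, rfl, hqadj⟩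
        · -- split into parts
          push_neg at hqy
          set P2 : Set V := {v | (v ≠ a1 ∧ v ≠ a2 ∧ v ≠ b) ∧ v ∉ W} with hP2
          have hrec : ∀ (P : Set V), (∀ a, a ∈ A → a ∈ P → G.neighborSet a ⊆ P) →
              (B ∩ P).ncard ≤ (A ∩ P).ncard → (B ∩ P).Nonempty →
              (A ∩ P).ncard + (B ∩ P).ncard < n → HasCliqueMinor G 4 := by
            intro P hPclo hPcard hPne hPlt
            refine minor_mono (restrict_le G P) ?_
            refine IH ((A ∩ P).ncard + (B ∩ P).ncard) hPlt (restrict G P) (A ∩ P) (B ∩ P)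
              le_rfl (Set.disjoint_of_subset Set.inter_subset_left Set.inter_subset_left
                hdisj) ?_ hPcard ?_ ?_
            · rintro u v ⟨hadj, huP, hvP⟩
              rcases hedge hadj with ⟨h1, h2⟩ | ⟨h1, h2⟩
              · exact Or.inl ⟨⟨h1, huP⟩, h2, hvP⟩
              · exact Or.inr ⟨⟨h1, huP⟩, h2, hvP⟩
            · have : 0 < (A ∩ P).ncard := by
                have : 0 < (B ∩ P).ncard := (Set.ncard_pos (Set.toFinite _)).mpr hPne
                omega
              exact Set.nonempty_of_ncard_ne_zero (by omega)
            · intro a' ha'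
              rw [restrict_neighborSet G ha'.2,
                Set.inter_eq_self_of_subset_left (hPclo a' ha'.1 ha'.2)]
              exact hdegA a' ha'.1
          have hWclo : ∀ a, a ∈ A → a ∈ W → G.neighborSet a ⊆ W := by
            intro a haA haW q hq
            have hadj : G.Adj a q := (SimpleGraph.mem_neighborSet _ _ _).mp hq
            have hqB : q ∈ B := hNa_sub a haA hq
            have hqs1 : q ∈ s1 := by
              refine ⟨Ne.symm (hAB_ne ha1A hqB), Ne.symm (hAB_ne ha2A hqB),
                fun hqb => ?_, fun hqy' => ?_⟩
              · refine hnb_only a (hWs1 haW).1 (hWs1 haW).2.1 (hqb ▸ hadj.symm)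
              · exact hqy a haW (hqy' ▸ hadj)
            exact reachSet_closed G haW hadj hqs1
          have hP2clo : ∀ a, a ∈ A → a ∈ P2 → G.neighborSet a ⊆ P2 := by
            intro a haA haP q hq
            have hadj : G.Adj a q := (SimpleGraph.mem_neighborSet _ _ _).mp hq
            have hqB : q ∈ B := hNa_sub a haA hq
            refine ⟨⟨Ne.symm (hAB_ne ha1A hqB), Ne.symm (hAB_ne ha2A hqB),
              fun hqb => ?_⟩, fun hqW => ?_⟩
            · exact hnb_only a haP.1.1 haP.1.2.1 (hqb ▸ hadj.symm)
            · have has1 : a ∈ s1 := ⟨haP.1.1, haP.1.2.1, haP.1.2.2,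
                hAB_ne haA hyB⟩
              exact haP.2 (reachSet_closed G hqW hadj.symm has1)
          -- counting
          have hsplitA : A \ {a1, a2} = (A ∩ W) ∪ (A ∩ P2) := by
            ext a
            simp only [Set.mem_diff, Set.mem_union, Set.mem_inter_iff, Set.mem_insert_iff,
              Set.mem_singleton_iff, not_or]
            constructor
            · rintro ⟨haA, h1, h2⟩
              by_cases haW : a ∈ W
              · exact Or.inl ⟨haA, haW⟩
              · exact Or.inr ⟨haA, ⟨h1, h2, hAB_ne haA hbB⟩, haW⟩
            · rintro (⟨haA, haW⟩ | ⟨haA, hc, _⟩)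
              · exact ⟨haA, (hWs1 haW).1, (hWs1 haW).2.1⟩
              · exact ⟨haA, hc.1, hc.2.1⟩
          have hsplitB : B \ {b} = (B ∩ W) ∪ (B ∩ P2) := by
            ext v
            simp only [Set.mem_diff, Set.mem_union, Set.mem_inter_iff,
              Set.mem_singleton_iff]
            constructor
            · rintro ⟨hvB, h1⟩
              by_cases hvW : v ∈ W
              · exact Or.inl ⟨hvB, hvW⟩
              · exact Or.inr ⟨hvB, ⟨Ne.symm (hAB_ne ha1A hvB),
                  Ne.symm (hAB_ne ha2A hvB), h1⟩, hvW⟩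
            · rintro (⟨hvB, hvW⟩ | ⟨hvB, hc, _⟩)
              · exact ⟨hvB, (hWs1 hvW).2.2.1⟩
              · exact ⟨hvB, hc.2.2⟩
          have hdisjWP : Disjoint (A ∩ W) (A ∩ P2) := by
            rw [Set.disjoint_left]
            rintro a ⟨_, haW⟩ ⟨_, haP⟩
            exact haP.2 haW
          have hdisjWPB : Disjoint (B ∩ W) (B ∩ P2) := by
            rw [Set.disjoint_left]
            rintro v ⟨_, hvW⟩ ⟨_, hvP⟩
            exact hvP.2 hvW
          have hcA : (A ∩ W).ncard + (A ∩ P2).ncard = A.ncard - 2 := by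
            rw [← Set.ncard_union_eq hdisjWP (Set.toFinite _) (Set.toFinite _), ← hsplitA,
              Set.ncard_diff (by rintro v (rfl | rfl) <;> assumption) (Set.toFinite _),
              Set.ncard_pair h12]
          have hcB : (B ∩ W).ncard + (B ∩ P2).ncard = B.ncard - 1 := by
            rw [← Set.ncard_union_eq hdisjWPB (Set.toFinite _) (Set.toFinite _), ← hsplitB,
              Set.ncard_diff_singleton_of_mem hbB]
          have hA2 : 2 ≤ A.ncard := by
            have : ({a1, a2} : Set V).ncard ≤ A.ncard :=
              Set.ncard_le_ncard (by rintro v (rfl | rfl) <;> assumption) (Set.toFinite _)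
            rw [Set.ncard_pair h12] at this
            exact this
          have hxBW : x ∈ B ∩ W := ⟨hxB, hxW⟩
          have hyBP : y ∈ B ∩ P2 := ⟨hyB, ⟨Ne.symm (hAB_ne ha1A hyB),
            Ne.symm (hAB_ne ha2A hyB), hyb⟩, fun hc => (hWs1 hc).2.2.2 rfl⟩
          have hposBW : 0 < (B ∩ W).ncard := (Set.ncard_pos (Set.toFinite _)).mpr ⟨x, hxBW⟩
          have hposBP : 0 < (B ∩ P2).ncard := (Set.ncard_pos (Set.toFinite _)).mpr ⟨y, hyBP⟩
          by_cases hch : (B ∩ W).ncard ≤ (A ∩ W).ncard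
          · exact hrec W hWclo hch ⟨x, hxBW⟩ (by omega)
          · refine hrec P2 hP2clo (by omega) ⟨y, hyBP⟩ (by omega)
  · -- every vertex of B has degree ≥ 3 : apply dirac
    obtain ⟨a, haA⟩ := hA
    push_neg at hb2
    have hb3 : ∀ b ∈ B, 3 ≤ (G.neighborSet b).ncard := hb2
    obtain ⟨b0, hb0⟩ := (Set.ncard_pos (Set.toFinite _)).mp
      (by have := hdegA a haA; omega : 0 < (G.neighborSet a).ncard)
    have hb0B : b0 ∈ B := hNa_sub a haA hb0
    refine dirac G.support.ncard G.edgeSet.ncard G a le_rfl le_rfl ?_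
      ⟨b0, Ne.symm (hAB_ne haA hb0B), hb3 b0 hb0B⟩
    intro v hv
    by_cases hvA : v ∈ A
    · right; exact hdegA v hvA
    by_cases hvB : v ∈ B
    · right; exact hb3 v hvB
    · left
      rw [Set.ncard_eq_zero (Set.toFinite _)]
      ext q
      simp only [SimpleGraph.mem_neighborSet, Set.mem_empty_iff_false, iff_false]
      intro h
      rcases hedge h with ⟨h1, _⟩ | ⟨h1, _⟩
      · exact hvA h1
      · exact hvB h1

end MainLemma

/-- If `G` admits a bipartition `(A,B)` with `|A| ≥ |B| > 0` such that every vertex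
in `A` has degree at least three, then `G` has a `K_4` minor. -/
theorem minDegreeThree_hasK4Minor {V : Type} [Fintype V] (G : SimpleGraph V) (A B : Set V)
    (hbip : IsBipartitionWith G A B) (hcard : B.ncard ≤ A.ncard) (hB : B.Nonempty)
    (hdeg : ∀ a ∈ A, 3 ≤ (G.neighborSet a).ncard) :
    HasCliqueMinor G 4 := by
  classical
  obtain ⟨hcover, hnand, hiff⟩ := hbip
  have hdisj : Disjoint A B := Set.disjoint_left.mpr (fun {v} hA hB => hnand v ⟨hA, hB⟩)
  have hedge : ∀ ⦃u v⦄, G.Adj u v → (u ∈ A ∧ v ∈ B) ∨ (u ∈ B ∧ v ∈ A) := by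
    intro u v hadj
    by_cases hu : u ∈ A
    · exact Or.inl ⟨hu, (hiff hadj).mp hu⟩
    · have huB : u ∈ B := (hcover u).resolve_left hu
      have hvB : v ∉ B := fun hv => hu ((hiff hadj).mpr hv)
      exact Or.inr ⟨huB, (hcover v).resolve_right hvB⟩
  have hA : A.Nonempty := by
    rw [Set.nonempty_iff_ne_empty]
    intro hc
    have h0 : A.ncard = 0 := by rw [hc]; exact Set.ncard_empty V
    have : 0 < B.ncard := (Set.ncard_pos (Set.toFinite _)).mpr hB
    omega
  exact bipartite_main (A.ncard + B.ncard) G A B le_rfl hdisj hedge hcard hA hdeg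
end
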